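/- arXiv:2101.03874 — 11 statements merged into one kernel-verified Lean document; each statement's English description precedes it below -/
import Mathlib

section
/- Let P, Q, V : ℝ² → ℝ be C¹ and let s > 0 be a real number. Define M_s := V_x·P + V_y·Q − s·(P_x + Q_y)·V. If M_s does not change sign and its zero set has Lebesgue measure zero, then for every periodic solution γ of the system ẋ = P(x,y), ẏ = Q(x,y), either the image of γ is entirely contained in the set {(x,y) : V(x,y) = 0} or the image of γ is disjoint from this set. -/
open MeasureTheory

noncomputable def pdx (f : ℝ × ℝ → ℝ) (p : ℝ × ℝ) : ℝ := deriv (fun u => f (u, p.2)) p.1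
noncomputable def pdy (f : ℝ × ℝ → ℝ) (p : ℝ × ℝ) : ℝ := deriv (fun v => f (p.1, v)) p.2

/-- A solution of the planar system `ẋ = P(x,y)`, `ẏ = Q(x,y)`. -/
def IsSolution (P Q : ℝ × ℝ → ℝ) (γ : ℝ → ℝ × ℝ) : Prop :=
  ∀ t, HasDerivAt γ (P (γ t), Q (γ t)) t

/-- A curve is periodic if it has a positive period. -/
def IsPeriodicSol (γ : ℝ → ℝ × ℝ) : Prop :=
  ∃ T > 0, ∀ t, γ (t + T) = γ t

/-- A curve is nonconstant. -/
def IsNonconstant (γ : ℝ → ℝ × ℝ) : Prop := ∃ t s, γ t ≠ γ s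

/-- A periodic orbit of the system: the image of a nonconstant periodic solution. -/
def IsPeriodicOrbit (P Q : ℝ × ℝ → ℝ) (O : Set (ℝ × ℝ)) : Prop :=
  ∃ γ : ℝ → ℝ × ℝ, IsSolution P Q γ ∧ IsPeriodicSol γ ∧ IsNonconstant γ ∧ O = Set.range γ

lemma fderiv_apply_pd (V : ℝ × ℝ → ℝ) (hV : ContDiff ℝ 1 V) (p : ℝ × ℝ) (ab : ℝ × ℝ) :
    fderiv ℝ V p ab = pdx V p * ab.1 + pdy V p * ab.2 := by
  have hVd : Differentiable ℝ V := hV.differentiable one_ne_zero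
  have hx : HasDerivAt (fun u => V (u, p.2)) (fderiv ℝ V p ((1:ℝ), (0:ℝ))) p.1 := by
    have h1 : HasDerivAt (fun u : ℝ => (u, p.2)) ((1:ℝ), (0:ℝ)) p.1 :=
      (hasDerivAt_id p.1).prodMk (hasDerivAt_const p.1 p.2)
    have := ((hVd (p.1, p.2)).hasFDerivAt.comp_hasDerivAt p.1 h1)
    exact this
  have hy : HasDerivAt (fun v => V (p.1, v)) (fderiv ℝ V p ((0:ℝ), (1:ℝ))) p.2 := by
    have h1 : HasDerivAt (fun v : ℝ => (p.1, v)) ((0:ℝ), (1:ℝ)) p.2 :=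
      (hasDerivAt_const p.2 p.1).prodMk (hasDerivAt_id p.2)
    have := ((hVd (p.1, p.2)).hasFDerivAt.comp_hasDerivAt p.2 h1)
    exact this
  have e1 : pdx V p = fderiv ℝ V p ((1:ℝ), (0:ℝ)) := hx.deriv.symm ▸ rfl
  have e2 : pdy V p = fderiv ℝ V p ((0:ℝ), (1:ℝ)) := hy.deriv.symm ▸ rfl
  have hab : ab = ab.1 • ((1:ℝ), (0:ℝ)) + ab.2 • ((0:ℝ), (1:ℝ)) := by
    ext <;> simp
  rw [e1, e2]
  conv_lhs => rw [hab]
  rw [map_add, _root_.map_smul, _root_.map_smul]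
  simp [smul_eq_mul, mul_comm]


lemma key_ode (v a m : ℝ → ℝ) (ha : Continuous a)
    (hv : ∀ t, HasDerivAt v (a t * v t + m t) t)
    (hm : (∀ t, 0 ≤ m t) ∨ (∀ t, m t ≤ 0))
    (T : ℝ) (hT : 0 < T) (hper : ∀ t, v (t + T) = v t)
    (t0 : ℝ) (h0 : v t0 = 0) : ∀ t, v t = 0 := by
  set A : ℝ → ℝ := fun t => ∫ x in t0..t, a x with hA
  have hAd : ∀ t, HasDerivAt A (a t) t := fun t =>
    intervalIntegral.integral_hasDerivAt_right (ha.intervalIntegrable _ _)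
      (ha.stronglyMeasurableAtFilter _ _) ha.continuousAt
  set w : ℝ → ℝ := fun t => v t * Real.exp (-A t) with hw
  have hwd : ∀ t, HasDerivAt w (m t * Real.exp (-A t)) t := by
    intro t
    have h1 : HasDerivAt w ((a t * v t + m t) * Real.exp (-A t) + v t * (Real.exp (-A t) * -a t)) t :=
      (hv t).mul (((hAd t).neg).exp)
    convert h1 using 1
    ring
  have hexp : ∀ t, (0:ℝ) < Real.exp (-A t) := fun t => Real.exp_pos _
  have hw0 : w t0 = 0 := by simp [hw, h0]
  have hper' : ∀ (n : ℕ) (t : ℝ), v (t + n * T) = v t := by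
    intro n
    induction n with
    | zero => simp
    | succ k ih =>
        intro t
        have e : t + ((k:ℕ)+1 : ℕ) * T = (t + T) + k * T := by push_cast; ring
        rw [e, ih, hper]
  have signs : (∀ t ≤ t0, w t ≤ 0) ∧ (∀ t, t0 ≤ t → 0 ≤ w t) ∨
               (∀ t ≤ t0, 0 ≤ w t) ∧ (∀ t, t0 ≤ t → w t ≤ 0) := by
    rcases hm with hm | hm
    · left
      have hmono : Monotone w := by
        apply monotone_of_deriv_nonneg (fun t => (hwd t).differentiableAt)
        intro t
        rw [(hwd t).deriv]
        exact mul_nonneg (hm t) (hexp t).le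
      exact ⟨fun t ht => hw0 ▸ hmono ht, fun t ht => hw0 ▸ hmono ht⟩
    · right
      have hmono : Antitone w := by
        apply antitone_of_deriv_nonpos (fun t => (hwd t).differentiableAt)
        intro t
        rw [(hwd t).deriv]
        exact mul_nonpos_of_nonpos_of_nonneg (hm t) (hexp t).le
      exact ⟨fun t ht => hw0 ▸ hmono ht, fun t ht => hw0 ▸ hmono ht⟩
  have vle : ∀ t, w t ≤ 0 → v t ≤ 0 := by
    intro t h
    by_contra hc
    push_neg at hc
    have : 0 < w t := mul_pos hc (hexp t)
    linarith
  have vge : ∀ t, 0 ≤ w t → 0 ≤ v t := by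
    intro t h
    by_contra hc
    push_neg at hc
    have : w t < 0 := mul_neg_of_neg_of_pos hc (hexp t)
    linarith
  intro t
  obtain ⟨n, hn⟩ := exists_nat_ge ((t0 - t)/T)
  obtain ⟨k, hk⟩ := exists_nat_ge ((t - t0)/T)
  have h1 : t0 ≤ t + n * T := by
    have := (div_le_iff₀ hT).mp hn; linarith
  have h2 : t - k * T ≤ t0 := by
    have := (div_le_iff₀ hT).mp hk; linarith
  have e1 : v (t + n * T) = v t := hper' n t
  have e2 : v (t - k * T) = v t := by
    have := hper' k (t - k * T); rw [sub_add_cancel] at this; exact this.symm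
  rcases signs with ⟨hle, hge⟩ | ⟨hge, hle⟩
  · have a1 : 0 ≤ v t := e1 ▸ vge _ (hge _ h1)
    have a2 : v t ≤ 0 := e2 ▸ vle _ (hle _ h2)
    linarith
  · have a1 : v t ≤ 0 := e1 ▸ vle _ (hle _ h1)
    have a2 : 0 ≤ v t := e2 ▸ vge _ (hge _ h2)
    linarith


/-- Periodic orbits either lie in `{V = 0}` or avoid it, when the Dulac-type function
`M_s = V_x P + V_y Q - s (P_x + Q_y) V` does not change sign and vanishes on a null set. -/
theorem stmt_1 (P Q V : ℝ × ℝ → ℝ)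
    (hP : ContDiff ℝ 1 P) (hQ : ContDiff ℝ 1 Q) (hV : ContDiff ℝ 1 V)
    (s : ℝ) (hs : 0 < s)
    (M : ℝ × ℝ → ℝ)
    (hM : M = fun p => pdx V p * P p + pdy V p * Q p - s * (pdx P p + pdy Q p) * V p)
    (hsign : (∀ p, 0 ≤ M p) ∨ (∀ p, M p ≤ 0))
    (hnull : volume {p | M p = 0} = 0)
    (γ : ℝ → ℝ × ℝ) (hγ : IsSolution P Q γ) (hper : IsPeriodicSol γ) :
    Set.range γ ⊆ {p : ℝ × ℝ | V p = 0} ∨ Set.range γ ∩ {p : ℝ × ℝ | V p = 0} = ∅ := by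
  by_cases hz : ∃ t0, V (γ t0) = 0
  · left
    obtain ⟨t0, ht0⟩ := hz
    obtain ⟨T, hT, hperT⟩ := hper
    have hγc : Continuous γ := continuous_iff_continuousAt.mpr fun t => (hγ t).continuousAt
    have pdxP : ∀ p, pdx P p = fderiv ℝ P p ((1:ℝ), (0:ℝ)) := by
      intro p
      have := fderiv_apply_pd P hP p ((1:ℝ), (0:ℝ))
      simpa using this.symm
    have pdyQ : ∀ p, pdy Q p = fderiv ℝ Q p ((0:ℝ), (1:ℝ)) := by
      intro p
      have := fderiv_apply_pd Q hQ p ((0:ℝ), (1:ℝ))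
      simpa using this.symm
    have hac : Continuous fun t => s * (pdx P (γ t) + pdy Q (γ t)) := by
      have h1 : Continuous fun p : ℝ × ℝ => pdx P p := by
        have : Continuous fun p : ℝ × ℝ => fderiv ℝ P p ((1:ℝ), (0:ℝ)) :=
          (hP.continuous_fderiv one_ne_zero).clm_apply continuous_const
        simpa [funext pdxP] using this
      have h2 : Continuous fun p : ℝ × ℝ => pdy Q p := by
        have : Continuous fun p : ℝ × ℝ => fderiv ℝ Q p ((0:ℝ), (1:ℝ)) :=
          (hQ.continuous_fderiv one_ne_zero).clm_apply continuous_const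
        simpa [funext pdyQ] using this
      exact continuous_const.mul ((h1.comp hγc).add (h2.comp hγc))
    have hvd : ∀ t, HasDerivAt (fun t => V (γ t))
        ((s * (pdx P (γ t) + pdy Q (γ t))) * V (γ t) + M (γ t)) t := by
      intro t
      have hc : HasDerivAt (fun t => V (γ t))
          (fderiv ℝ V (γ t) (P (γ t), Q (γ t))) t :=
        ((hV.differentiable one_ne_zero) (γ t)).hasFDerivAt.comp_hasDerivAt t (hγ t)
      convert hc using 1
      rw [fderiv_apply_pd V hV, hM]
      simp only []
      ring
    have hzero : ∀ t, V (γ t) = 0 := by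
      apply key_ode (fun t => V (γ t)) _ (fun t => M (γ t)) hac hvd _ T hT _ t0 ht0
      · rcases hsign with h | h
        · exact Or.inl fun t => h (γ t)
        · exact Or.inr fun t => h (γ t)
      · intro t; show V (γ (t + T)) = V (γ t); rw [hperT]
    rintro p ⟨t, rfl⟩
    exact hzero t
  · right
    push_neg at hz
    rw [Set.eq_empty_iff_forall_notMem]
    rintro p ⟨⟨t, rfl⟩, hp⟩
    exact hz t hp
end

section
/- Let P, Q : ℝ² → ℝ be C² functions and define K := Q²·P_y − P²·Q_x + P·Q·(P_x − Q_y). Then, identically on ℝ², K_x·P + K_y·Q − (P_x + Q_y)·K = P²·Q·(P_xx − 2·Q_xy) + P·Q²·(2·P_xy − Q_yy) + Q³·P_yy − P³·Q_xx. -/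
open MeasureTheory

lemma sliceX {f : ℝ × ℝ → ℝ} {p : ℝ × ℝ} (hf : DifferentiableAt ℝ f p) :
    HasDerivAt (fun u => f (u, p.2)) (pdx f p) p.1 := by
  have hg : DifferentiableAt ℝ (fun u : ℝ => f (u, p.2)) p.1 :=
    hf.comp p.1 (differentiableAt_id.prodMk (differentiableAt_const _))
  exact hg.hasDerivAt

lemma sliceY {f : ℝ × ℝ → ℝ} {p : ℝ × ℝ} (hf : DifferentiableAt ℝ f p) :
    HasDerivAt (fun v => f (p.1, v)) (pdy f p) p.2 := by
  have hg : DifferentiableAt ℝ (fun v : ℝ => f (p.1, v)) p.2 :=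
    hf.comp p.2 ((differentiableAt_const _).prodMk differentiableAt_id)
  exact hg.hasDerivAt

lemma pdx_eq {f : ℝ × ℝ → ℝ} {p : ℝ × ℝ} (hf : DifferentiableAt ℝ f p) :
    pdx f p = fderiv ℝ f p (1, 0) := by
  have hg : HasDerivAt (fun u : ℝ => (u, p.2)) ((1 : ℝ), (0 : ℝ)) p.1 :=
    (hasDerivAt_id p.1).prodMk (hasDerivAt_const _ _)
  have := (hf.hasFDerivAt.comp_hasDerivAt p.1 hg)
  exact this.deriv.symm ▸ rfl

lemma pdy_eq {f : ℝ × ℝ → ℝ} {p : ℝ × ℝ} (hf : DifferentiableAt ℝ f p) :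
    pdy f p = fderiv ℝ f p (0, 1) := by
  have hg : HasDerivAt (fun v : ℝ => (p.1, v)) ((0 : ℝ), (1 : ℝ)) p.2 :=
    (hasDerivAt_const _ _).prodMk (hasDerivAt_id p.2)
  have := (hf.hasFDerivAt.comp_hasDerivAt p.2 hg)
  exact this.deriv.symm ▸ rfl

lemma pdx_fun {f : ℝ × ℝ → ℝ} (hf : Differentiable ℝ f) :
    pdx f = fun q => fderiv ℝ f q (1, 0) := funext fun q => pdx_eq (hf q)

lemma pdy_fun {f : ℝ × ℝ → ℝ} (hf : Differentiable ℝ f) :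
    pdy f = fun q => fderiv ℝ f q (0, 1) := funext fun q => pdy_eq (hf q)

lemma pd_diff {f : ℝ × ℝ → ℝ} (hf : ContDiff ℝ 2 f) :
    Differentiable ℝ (pdx f) ∧ Differentiable ℝ (pdy f) := by
  have h1 : ContDiff ℝ 1 (fderiv ℝ f) := hf.fderiv_right (by norm_num)
  have hd := h1.differentiable one_ne_zero
  constructor
  · rw [pdx_fun (hf.differentiable two_ne_zero)]
    exact hd.clm_apply (differentiable_const _)
  · rw [pdy_fun (hf.differentiable two_ne_zero)]
    exact hd.clm_apply (differentiable_const _)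

lemma clairaut {f : ℝ × ℝ → ℝ} (hf : ContDiff ℝ 2 f) (p : ℝ × ℝ) :
    pdx (pdy f) p = pdy (pdx f) p := by
  have hfd : Differentiable ℝ f := hf.differentiable two_ne_zero
  have h1 : ContDiff ℝ 1 (fderiv ℝ f) := hf.fderiv_right (by norm_num)
  have hd := h1.differentiable one_ne_zero
  have hx : Differentiable ℝ (pdx f) := (pd_diff hf).1
  have hy : Differentiable ℝ (pdy f) := (pd_diff hf).2
  have e1 : pdx (pdy f) p = fderiv ℝ (fderiv ℝ f) p (1, 0) (0, 1) := by
    rw [pdx_eq (hy p), pdy_fun hfd]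
    rw [fderiv_clm_apply (hd p) (differentiableAt_const _)]
    simp
  have e2 : pdy (pdx f) p = fderiv ℝ (fderiv ℝ f) p (0, 1) (1, 0) := by
    rw [pdy_eq (hx p), pdx_fun hfd]
    rw [fderiv_clm_apply (hd p) (differentiableAt_const _)]
    simp
  rw [e1, e2, (hf.contDiffAt.isSymmSndFDerivAt (by norm_num)) (1,0) (0,1)]

/-- For the curvature function `K = Q² P_y − P² Q_x + P Q (P_x − Q_y)` of a `C²` vector
field `(P,Q)`, the Dulac-type combination `K_x P + K_y Q − (P_x + Q_y) K` equals
`P² Q (P_xx − 2 Q_xy) + P Q² (2 P_xy − Q_yy) + Q³ P_yy − P³ Q_xx` identically. -/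
theorem stmt_2 (P Q : ℝ × ℝ → ℝ) (hP : ContDiff ℝ 2 P) (hQ : ContDiff ℝ 2 Q)
    (K : ℝ × ℝ → ℝ)
    (hK : K = fun p => Q p ^ 2 * pdy P p - P p ^ 2 * pdx Q p
      + P p * Q p * (pdx P p - pdy Q p)) :
    ∀ p : ℝ × ℝ,
      pdx K p * P p + pdy K p * Q p - (pdx P p + pdy Q p) * K p =
        P p ^ 2 * Q p * (pdx (pdx P) p - 2 * pdx (pdy Q) p)
        + P p * Q p ^ 2 * (2 * pdx (pdy P) p - pdy (pdy Q) p)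
        + Q p ^ 3 * pdy (pdy P) p - P p ^ 3 * pdx (pdx Q) p := by
  intro p
  obtain ⟨hPx, hPy⟩ := pd_diff hP
  obtain ⟨hQx, hQy⟩ := pd_diff hQ
  have hPd := hP.differentiable two_ne_zero
  have hQd := hQ.differentiable two_ne_zero
  -- x-direction slices
  have h1 := sliceX (hPd p)
  have h2 := sliceX (hQd p)
  have h3 := sliceX (hPy p)
  have h4 := sliceX (hQx p)
  have h5 := sliceX (hPx p)
  have h6 := sliceX (hQy p)
  have bigX : HasDerivAt
      (fun u => Q (u, p.2) ^ 2 * pdy P (u, p.2) - P (u, p.2) ^ 2 * pdx Q (u, p.2)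
        + P (u, p.2) * Q (u, p.2) * (pdx P (u, p.2) - pdy Q (u, p.2)))
      (2 * Q p * pdx Q p * pdy P p + Q p ^ 2 * pdx (pdy P) p
        - (2 * P p * pdx P p * pdx Q p + P p ^ 2 * pdx (pdx Q) p)
        + ((pdx P p * Q p + P p * pdx Q p) * (pdx P p - pdy Q p)
          + P p * Q p * (pdx (pdx P) p - pdx (pdy Q) p))) p.1 := by
    have h := (((h2.fun_pow 2).fun_mul h3).fun_sub ((h1.fun_pow 2).fun_mul h4)).fun_add
      ((h1.fun_mul h2).fun_mul (h5.fun_sub h6))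
    convert h using 1
    · rfl
    · rfl
    ring
  have hKx : pdx K p = 2 * Q p * pdx Q p * pdy P p + Q p ^ 2 * pdx (pdy P) p
        - (2 * P p * pdx P p * pdx Q p + P p ^ 2 * pdx (pdx Q) p)
        + ((pdx P p * Q p + P p * pdx Q p) * (pdx P p - pdy Q p)
          + P p * Q p * (pdx (pdx P) p - pdx (pdy Q) p)) := by
    rw [hK]; exact bigX.deriv
  -- y-direction slices
  have g1 := sliceY (hPd p)
  have g2 := sliceY (hQd p)
  have g3 := sliceY (hPy p)
  have g4 := sliceY (hQx p)
  have g5 := sliceY (hPx p)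
  have g6 := sliceY (hQy p)
  have bigY : HasDerivAt
      (fun v => Q (p.1, v) ^ 2 * pdy P (p.1, v) - P (p.1, v) ^ 2 * pdx Q (p.1, v)
        + P (p.1, v) * Q (p.1, v) * (pdx P (p.1, v) - pdy Q (p.1, v)))
      (2 * Q p * pdy Q p * pdy P p + Q p ^ 2 * pdy (pdy P) p
        - (2 * P p * pdy P p * pdx Q p + P p ^ 2 * pdy (pdx Q) p)
        + ((pdy P p * Q p + P p * pdy Q p) * (pdx P p - pdy Q p)
          + P p * Q p * (pdy (pdx P) p - pdy (pdy Q) p))) p.2 := by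
    have h := (((g2.fun_pow 2).fun_mul g3).fun_sub ((g1.fun_pow 2).fun_mul g4)).fun_add
      ((g1.fun_mul g2).fun_mul (g5.fun_sub g6))
    convert h using 1
    · rfl
    · rfl
    ring
  have hKy : pdy K p = 2 * Q p * pdy Q p * pdy P p + Q p ^ 2 * pdy (pdy P) p
        - (2 * P p * pdy P p * pdx Q p + P p ^ 2 * pdy (pdx Q) p)
        + ((pdy P p * Q p + P p * pdy Q p) * (pdx P p - pdy Q p)
          + P p * Q p * (pdy (pdx P) p - pdy (pdy Q) p)) := by
    rw [hK]; exact bigY.deriv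
  have hKp : K p = Q p ^ 2 * pdy P p - P p ^ 2 * pdx Q p
      + P p * Q p * (pdx P p - pdy Q p) := by rw [hK]
  rw [hKx, hKy, hKp, ← clairaut hP p, ← clairaut hQ p]
  ring
end

section
/- Let B : ℝ → ℝ be a C¹ function, and set P(x,y) = y − (x²−1)·B(x), Q(x,y) = −x·(1 + y·B(x)), and V(x,y) = (1 − x² − y²)·(x² + y² + B(x)·y). Then, identically on ℝ², V_x·P + V_y·Q − (P_x + Q_y)·V = x·(x² + y² − 1)²·(B(x) − x·B'(x)). -/
open MeasureTheory

/-- The Dulac identity for the Liénard-type system with invariant unit circle: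
with `V = (1 − x² − y²)(x² + y² + B(x) y)` one has
`V_x P + V_y Q − (P_x + Q_y) V = x (x² + y² − 1)² (B(x) − x B'(x))`. -/
theorem stmt_4 (B : ℝ → ℝ) (hB : ContDiff ℝ 1 B)
    (P Q V : ℝ × ℝ → ℝ)
    (hP : P = fun p => p.2 - (p.1 ^ 2 - 1) * B p.1)
    (hQ : Q = fun p => -(p.1 * (1 + p.2 * B p.1)))
    (hV : V = fun p => (1 - p.1 ^ 2 - p.2 ^ 2) * (p.1 ^ 2 + p.2 ^ 2 + B p.1 * p.2)) :
    ∀ p : ℝ × ℝ,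
      pdx V p * P p + pdy V p * Q p - (pdx P p + pdy Q p) * V p =
        p.1 * (p.1 ^ 2 + p.2 ^ 2 - 1) ^ 2 * (B p.1 - p.1 * deriv B p.1) := by
  subst hP hQ hV
  rintro ⟨x, y⟩
  simp only [pdx, pdy]
  have hB' : HasDerivAt B (deriv B x) x :=
    ((hB.differentiable one_ne_zero) x).hasDerivAt
  have h2 : HasDerivAt (fun u : ℝ => u ^ 2) (2 * x) x := by
    simpa using hasDerivAt_pow 2 x
  have hVx : deriv (fun u => (1 - u ^ 2 - y ^ 2) * (u ^ 2 + y ^ 2 + B u * y)) x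
      = (-(2 * x)) * (x ^ 2 + y ^ 2 + B x * y)
        + (1 - x ^ 2 - y ^ 2) * (2 * x + deriv B x * y) := by
    have hleft : HasDerivAt (fun u : ℝ => 1 - u ^ 2 - y ^ 2) (-(2 * x)) x := by
      simpa using (((hasDerivAt_const x (1 : ℝ)).sub h2).sub_const (y ^ 2))
    have hright : HasDerivAt (fun u : ℝ => u ^ 2 + y ^ 2 + B u * y)
        (2 * x + deriv B x * y) x := (h2.add_const (y ^ 2)).add (hB'.mul_const y)
    exact (hleft.mul hright).deriv
  have hVy : deriv (fun v => (1 - x ^ 2 - v ^ 2) * (x ^ 2 + v ^ 2 + B x * v)) y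
      = (-(2 * y)) * (x ^ 2 + y ^ 2 + B x * y)
        + (1 - x ^ 2 - y ^ 2) * (2 * y + B x) := by
    have h2y : HasDerivAt (fun v : ℝ => v ^ 2) (2 * y) y := by
      simpa using hasDerivAt_pow 2 y
    have hleft : HasDerivAt (fun v : ℝ => 1 - x ^ 2 - v ^ 2) (-(2 * y)) y := by
      simpa [Pi.sub_def] using ((hasDerivAt_const y ((1 : ℝ) - x ^ 2)).sub h2y)
    have hright : HasDerivAt (fun v : ℝ => x ^ 2 + v ^ 2 + B x * v)
        (2 * y + B x) y := by
      simpa [Pi.add_def] using ((hasDerivAt_const y (x ^ 2)).add h2y).add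
        ((hasDerivAt_id y).const_mul (B x))
    exact (hleft.mul hright).deriv
  have hPx : deriv (fun u => y - (u ^ 2 - 1) * B u) x
      = -((2 * x) * B x + (x ^ 2 - 1) * deriv B x) := by
    have h : HasDerivAt (fun u : ℝ => (u ^ 2 - 1) * B u)
        ((2 * x) * B x + (x ^ 2 - 1) * deriv B x) x := (h2.sub_const 1).mul hB'
    simpa [Pi.sub_def] using ((hasDerivAt_const x y).sub h).deriv
  have hQy : deriv (fun v => -(x * (1 + v * B x))) y = -(x * B x) := by
    have h : HasDerivAt (fun v : ℝ => -(x * (1 + v * B x))) (-(x * B x)) y := by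
      have : HasDerivAt (fun v : ℝ => 1 + v * B x) (B x) y := by
        simpa [Pi.add_def] using (hasDerivAt_const y (1 : ℝ)).add ((hasDerivAt_id y).mul_const (B x))
      simpa [Pi.neg_def] using (this.const_mul x).neg
    exact h.deriv
  rw [hVx, hVy, hPx, hQy]
  ring
end

section
/- Let b ≤ 0 and consider the system ẋ = y − (x²−1)·(x³−bx), ẏ = −x·(1 + y·(x³−bx)). Then every nonconstant periodic solution of this system has image equal to the unit circle {(x,y) : x² + y² = 1}. -/
open MeasureTheory

open Real Set intervalIntegral

-- point on circle has angle
lemma exists_angle (u v : ℝ) (h : u ^ 2 + v ^ 2 = 1) :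
    ∃ a : ℝ, Real.cos a = u ∧ Real.sin a = v := by
  have hz : (⟨u, v⟩ : ℂ) ≠ 0 := by
    intro h0
    rw [Complex.ext_iff] at h0
    simp at h0
    rw [h0.1, h0.2] at h
    norm_num at h
  have habs : ‖(⟨u, v⟩ : ℂ)‖ = 1 := by
    rw [Complex.norm_def, Complex.normSq_mk]
    rw [show u * u + v * v = 1 by nlinarith]
    exact Real.sqrt_one
  refine ⟨Complex.arg ⟨u, v⟩, ?_, ?_⟩
  · rw [Complex.cos_arg hz, habs]; simp
  · rw [Complex.sin_arg, habs]; simp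

-- cos and sin agree implies angles differ by 2πk
lemma angle_sub (a c : ℝ) (h1 : Real.cos (a + c) = Real.cos a)
    (h2 : Real.sin (a + c) = Real.sin a) : ∃ n : ℤ, c = n * (2 * Real.pi) := by
  have he : Complex.exp ((a + c : ℝ) * Complex.I) = Complex.exp ((a : ℝ) * Complex.I) := by
    rw [Complex.exp_mul_I, Complex.exp_mul_I, ← Complex.ofReal_cos, ← Complex.ofReal_sin,
      ← Complex.ofReal_cos, ← Complex.ofReal_sin, h1, h2]
  obtain ⟨n, hn⟩ := Complex.exp_eq_exp_iff_exists_int.mp he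
  refine ⟨n, ?_⟩
  have := congrArg Complex.im hn
  simp [Complex.add_im, Complex.mul_im] at this
  push_cast at this
  linarith

-- Lipschitz bound for the angular vector field
lemma f_lip (b : ℝ) :
    LipschitzWith ⟨4 + |b|, by positivity⟩
      (fun a : ℝ => -(1 + Real.sin a * (Real.cos a * ((Real.cos a) ^ 2 - b)))) := by
  set f : ℝ → ℝ := fun a => -(1 + Real.sin a * (Real.cos a * ((Real.cos a) ^ 2 - b))) with hf
  have hder : ∀ a : ℝ, HasDerivAt f
      (-(Real.cos a ^ 4) + 3 * Real.sin a ^ 2 * Real.cos a ^ 2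
        + b * (Real.cos a ^ 2 - Real.sin a ^ 2)) a := by
    intro a
    have h1 : HasDerivAt (fun a : ℝ => Real.sin a * (Real.cos a * ((Real.cos a) ^ 2 - b)))
        (Real.cos a * (Real.cos a * ((Real.cos a) ^ 2 - b)) +
          Real.sin a * ((-Real.sin a) * ((Real.cos a) ^ 2 - b) +
            Real.cos a * (2 * Real.cos a ^ 1 * (-Real.sin a)))) a := by
      exact (Real.hasDerivAt_sin a).mul ((Real.hasDerivAt_cos a).mul
        (((Real.hasDerivAt_cos a).pow 2).sub_const b))
    have h2 := (h1.const_add 1).neg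
    refine h2.congr_deriv ?_
    ring
  apply lipschitzWith_of_nnnorm_deriv_le
  · intro a
    exact (hder a).differentiableAt
  · intro a
    change (‖deriv f a‖₊ : ℝ) ≤ 4 + |b|
    rw [coe_nnnorm, Real.norm_eq_abs, (hder a).deriv]
    have hsc := Real.sin_sq_add_cos_sq a
    have h1 : Real.cos a ^ 2 ≤ 1 := by nlinarith [sq_nonneg (Real.sin a)]
    have h2 : Real.sin a ^ 2 ≤ 1 := by nlinarith [sq_nonneg (Real.cos a)]
    rw [abs_le]
    constructor
    · nlinarith [neg_abs_le b, le_abs_self b, sq_nonneg (Real.sin a), sq_nonneg (Real.cos a),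
        sq_nonneg (Real.sin a * Real.cos a)]
    · nlinarith [neg_abs_le b, le_abs_self b, sq_nonneg (Real.sin a), sq_nonneg (Real.cos a),
        sq_nonneg (Real.sin a * Real.cos a)]

-- nonneg continuous periodic function with zero integral over a period vanishes
lemma periodic_nonneg_zero_integral (g : ℝ → ℝ) (T : ℝ) (hT : 0 < T)
    (hgc : Continuous g) (hgnn : ∀ t, 0 ≤ g t) (hgp : Function.Periodic g T)
    (hint : ∫ s in (0:ℝ)..T, g s = 0) : ∀ t, g t = 0 := by
  intro t₁
  by_contra hne
  have hpos : 0 < g t₁ := lt_of_le_of_ne (hgnn t₁) (Ne.symm hne)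
  have heq : ∫ s in (t₁ - T / 2)..(t₁ + T / 2), g s = 0 := by
    have := hgp.intervalIntegral_add_eq (t₁ - T / 2) 0
    rw [show t₁ - T / 2 + T = t₁ + T / 2 by ring, zero_add] at this
    rw [this, hint]
  have hU : IsOpen {s : ℝ | 0 < g s} := isOpen_lt continuous_const hgc
  have hO : IsOpen ({s : ℝ | 0 < g s} ∩ Ioo (t₁ - T / 2) (t₁ + T / 2)) :=
    hU.inter isOpen_Ioo
  have hne' : ({s : ℝ | 0 < g s} ∩ Ioo (t₁ - T / 2) (t₁ + T / 2)).Nonempty :=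
    ⟨t₁, hpos, by constructor <;> linarith⟩
  have hmes : 0 < volume ({s : ℝ | 0 < g s} ∩ Ioo (t₁ - T / 2) (t₁ + T / 2)) :=
    hO.measure_pos volume hne'
  have hsub : {s : ℝ | 0 < g s} ∩ Ioo (t₁ - T / 2) (t₁ + T / 2) ⊆
      Function.support g ∩ Ioc (t₁ - T / 2) (t₁ + T / 2) := by
    rintro s ⟨h1, h2⟩
    exact ⟨ne_of_gt h1, h2.1, le_of_lt h2.2⟩
  have : 0 < ∫ s in (t₁ - T / 2)..(t₁ + T / 2), g s := by
    rw [intervalIntegral.integral_pos_iff_support_of_nonneg_ae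
      (Filter.Eventually.of_forall hgnn) (hgc.intervalIntegrable _ _)]
    exact ⟨by linarith, lt_of_lt_of_le hmes (measure_mono hsub)⟩
  rw [heq] at this
  exact lt_irrefl 0 this


/-- For `b ≤ 0`, every nonconstant periodic solution of
`ẋ = y − (x²−1)(x³−bx)`, `ẏ = −x(1 + y(x³−bx))` has the unit circle as its image. -/
theorem stmt_6 (b : ℝ) (hb : b ≤ 0)
    (γ : ℝ → ℝ × ℝ)
    (hγ : IsSolution (fun p => p.2 - (p.1 ^ 2 - 1) * (p.1 ^ 3 - b * p.1))
      (fun p => -(p.1 * (1 + p.2 * (p.1 ^ 3 - b * p.1)))) γ)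
    (hper : IsPeriodicSol γ) (hnc : IsNonconstant γ) :
    Set.range γ = {p : ℝ × ℝ | p.1 ^ 2 + p.2 ^ 2 = 1} := by
  obtain ⟨T, hT, hperT⟩ := hper
  have hx : ∀ t, HasDerivAt (fun s => (γ s).1)
      ((γ t).2 - ((γ t).1 ^ 2 - 1) * ((γ t).1 ^ 3 - b * (γ t).1)) t := fun t =>
    ((ContinuousLinearMap.fst ℝ ℝ ℝ).hasFDerivAt.comp_hasDerivAt t (hγ t))
  have hy : ∀ t, HasDerivAt (fun s => (γ s).2)
      (-((γ t).1 * (1 + (γ t).2 * ((γ t).1 ^ 3 - b * (γ t).1)))) t := fun t =>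
    ((ContinuousLinearMap.snd ℝ ℝ ℝ).hasFDerivAt.comp_hasDerivAt t (hγ t))
  have hcirc : ∀ t, (γ t).1 ^ 2 + (γ t).2 ^ 2 = 1 := by
    have hγc : Continuous γ := continuous_iff_continuousAt.2 fun t => (hγ t).continuousAt
    have hx : ∀ t, HasDerivAt (fun s => (γ s).1)
        ((γ t).2 - ((γ t).1 ^ 2 - 1) * ((γ t).1 ^ 3 - b * (γ t).1)) t := fun t =>
      ((ContinuousLinearMap.fst ℝ ℝ ℝ).hasFDerivAt.comp_hasDerivAt t (hγ t))
    have hy : ∀ t, HasDerivAt (fun s => (γ s).2)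
        (-((γ t).1 * (1 + (γ t).2 * ((γ t).1 ^ 3 - b * (γ t).1)))) t := fun t =>
      ((ContinuousLinearMap.snd ℝ ℝ ℝ).hasFDerivAt.comp_hasDerivAt t (hγ t))
    have hxc : Continuous fun t => (γ t).1 := continuous_fst.comp hγc
    have hyc : Continuous fun t => (γ t).2 := continuous_snd.comp hγc
    set g : ℝ → ℝ := fun t => (γ t).1 ^ 2 * ((γ t).1 ^ 2 - b) with hgdef
    have hgc : Continuous g := by fun_prop
    have hgnn : ∀ t, 0 ≤ g t := fun t =>
      mul_nonneg (sq_nonneg _) (by nlinarith [sq_nonneg (γ t).1])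
    set I : ℝ → ℝ := fun u => ∫ s in (0:ℝ)..u, g s with hIdef
    have hI : ∀ t, HasDerivAt I (g t) t := fun t =>
      intervalIntegral.integral_hasDerivAt_right (hgc.intervalIntegrable 0 t)
        (hgc.stronglyMeasurableAtFilter volume (nhds t)) hgc.continuousAt
    set F : ℝ → ℝ := fun u => (γ u).1 ^ 2 + (γ u).2 ^ 2 - 1 with hFdef
    have hF : ∀ t, HasDerivAt F (-2 * g t * F t) t := by
      intro t
      have h1 := (((hx t).pow 2).add ((hy t).pow 2)).sub_const 1
      refine h1.congr_deriv ?_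
      simp only [hgdef, hFdef]
      ring
    set H : ℝ → ℝ := fun u => F u * Real.exp (2 * I u) with hHdef
    have hH : ∀ t, HasDerivAt H 0 t := by
      intro t
      have h1 := (hF t).mul (((hI t).const_mul 2).exp)
      refine h1.congr_deriv ?_
      ring
    have hHc : ∀ t s : ℝ, H t = H s :=
      is_const_of_deriv_eq_zero (fun t => (hH t).differentiableAt) (fun t => (hH t).deriv)
    have hH0 : H 0 = F 0 := by
      simp only [hHdef, hIdef]
      rw [intervalIntegral.integral_same]
      simp
    have hF0 : F 0 = 0 := by
      by_contra hne
      have hγT : γ T = γ 0 := by simpa using hperT 0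
      have hFT : F T = F 0 := by simp only [hFdef, hγT]
      have hHT : H T = H 0 := hHc T 0
      have hexp : Real.exp (2 * I T) = 1 := by
        simp only [hHdef] at hHT
        rw [show I 0 = 0 by simp only [hIdef]; exact intervalIntegral.integral_same] at hHT
        rw [hFT] at hHT
        simp only [mul_zero, Real.exp_zero, mul_one] at hHT
        have := mul_left_cancel₀ hne (hHT.trans (mul_one (F 0)).symm)
        exact this
      have hIT : (∫ s in (0:ℝ)..T, g s) = 0 := by
        have h2 : 2 * I T = 0 := Real.exp_injective (hexp.trans Real.exp_zero.symm)
        have : I T = 0 := by linarith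
        simpa [hIdef] using this
      have hgp : Function.Periodic g T := by
        intro t; simp only [hgdef, hperT t]
      have hg0 : ∀ t, g t = 0 :=
        periodic_nonneg_zero_integral g T hT hgc hgnn hgp hIT
      have hx0 : ∀ t, (γ t).1 = 0 := by
        intro t
        have h1 := hg0 t
        simp only [hgdef] at h1
        have h4 : ((γ t).1 ^ 2) ^ 2 = 0 := le_antisymm (by nlinarith) (sq_nonneg _)
        have h5 : (γ t).1 ^ 2 = 0 := by
          have := sq_eq_zero_iff.mp h4
          exact this
        exact pow_eq_zero_iff (n := 2) (by norm_num) |>.mp h5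
      have hxfun : (fun s => (γ s).1) = fun _ => (0:ℝ) := funext hx0
      have hy0 : ∀ t, (γ t).2 = 0 := by
        intro t
        have h1 := hx t
        rw [hxfun] at h1
        have h2 := h1.unique (hasDerivAt_const t 0)
        rw [hx0 t] at h2
        simpa using h2
      obtain ⟨t, s, hts⟩ := hnc
      exact hts (by rw [show γ t = ((γ t).1, (γ t).2) from rfl, hx0 t, hy0 t,
        show γ s = ((γ s).1, (γ s).2) from rfl, hx0 s, hy0 s])
    intro t
    have hHt : H t = H 0 := hHc t 0
    rw [hH0, hF0] at hHt
    simp only [hHdef] at hHt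
    have : F t = 0 := by
      rcases mul_eq_zero.mp hHt with h | h
      · exact h
      · exact absurd h (Real.exp_ne_zero _)
    simp only [hFdef] at this
    linarith
  have hγc : Continuous γ := continuous_iff_continuousAt.2 fun t => (hx t).continuousAt.prodMk (hy t).continuousAt
  have hxc : Continuous fun t => (γ t).1 := continuous_fst.comp hγc
  have hyc : Continuous fun t => (γ t).2 := continuous_snd.comp hγc
  -- angular velocity
  set ω : ℝ → ℝ := fun t => -(1 + (γ t).2 * ((γ t).1 * ((γ t).1 ^ 2 - b))) with hωdef
  have hωc : Continuous ω := by fun_prop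
  obtain ⟨A, hA1, hA2⟩ := exists_angle _ _ (hcirc 0)
  set θ : ℝ → ℝ := fun u => A + ∫ s in (0:ℝ)..u, ω s with hθdef
  have hθ : ∀ t, HasDerivAt θ (ω t) t := fun t =>
    (intervalIntegral.integral_hasDerivAt_right (hωc.intervalIntegrable 0 t)
      (hωc.stronglyMeasurableAtFilter volume (nhds t)) hωc.continuousAt).const_add A
  have hθc : Continuous θ := continuous_iff_continuousAt.2 fun t => (hθ t).continuousAt
  have hθ0 : θ 0 = A := by
    simp only [hθdef]
    rw [intervalIntegral.integral_same, add_zero]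
  -- modified derivatives using the circle identity
  have hx' : ∀ t, HasDerivAt (fun s => (γ s).1) (-((γ t).2) * ω t) t := by
    intro t
    convert hx t using 1
    have h := hcirc t
    simp only [hωdef]
    linear_combination ((γ t).1 * ((γ t).1 ^ 2 - b)) * h
  have hy' : ∀ t, HasDerivAt (fun s => (γ s).2) ((γ t).1 * ω t) t := by
    intro t
    convert hy t using 1
    simp only [hωdef]
    ring
  -- γ = (cos θ, sin θ)
  set D : ℝ → ℝ := fun u => ((γ u).1 - Real.cos (θ u)) ^ 2 + ((γ u).2 - Real.sin (θ u)) ^ 2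
    with hDdef
  have hD : ∀ t, HasDerivAt D 0 t := by
    intro t
    have hcos : HasDerivAt (fun u => Real.cos (θ u)) (-Real.sin (θ t) * ω t) t := (hθ t).cos
    have hsin : HasDerivAt (fun u => Real.sin (θ u)) (Real.cos (θ t) * ω t) t := (hθ t).sin
    have h1 := (((hx' t).sub hcos).pow 2).add (((hy' t).sub hsin).pow 2)
    refine h1.congr_deriv ?_
    simp only [Pi.sub_apply]
    ring
  have hDc : ∀ t s : ℝ, D t = D s :=
    is_const_of_deriv_eq_zero (fun t => (hD t).differentiableAt) (fun t => (hD t).deriv)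
  have hD0 : D 0 = 0 := by
    simp only [hDdef, hθ0, hA1, hA2]
    ring
  have hxθ : ∀ t, (γ t).1 = Real.cos (θ t) := by
    intro t
    have h1 : D t = 0 := (hDc t 0).trans hD0
    simp only [hDdef] at h1
    nlinarith [sq_nonneg ((γ t).1 - Real.cos (θ t)), sq_nonneg ((γ t).2 - Real.sin (θ t))]
  have hyθ : ∀ t, (γ t).2 = Real.sin (θ t) := by
    intro t
    have h1 : D t = 0 := (hDc t 0).trans hD0
    simp only [hDdef] at h1
    nlinarith [sq_nonneg ((γ t).1 - Real.cos (θ t)), sq_nonneg ((γ t).2 - Real.sin (θ t))]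
  -- ω = f ∘ θ
  set f : ℝ → ℝ := fun a => -(1 + Real.sin a * (Real.cos a * ((Real.cos a) ^ 2 - b))) with hfdef
  have hωθ : ∀ t, ω t = f (θ t) := by
    intro t
    simp only [hωdef, hfdef, hxθ t, hyθ t]
  -- periodicity of ω and the rotation number
  have hωp : Function.Periodic ω T := by
    intro t; simp only [hωdef, hperT t]
  set c : ℝ := ∫ s in (0:ℝ)..T, ω s with hcdef
  have hθT : ∀ t, θ (t + T) = θ t + c := by
    intro t
    have h1 : (∫ s in (0:ℝ)..(t + T), ω s)
        = (∫ s in (0:ℝ)..t, ω s) + ∫ s in t..(t + T), ω s :=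
      (intervalIntegral.integral_add_adjacent_intervals (hωc.intervalIntegrable 0 t)
        (hωc.intervalIntegrable t (t + T))).symm
    have h2 : (∫ s in t..(t + T), ω s) = ∫ s in (0:ℝ)..(0 + T), ω s :=
      hωp.intervalIntegral_add_eq t 0
    simp only [hθdef]
    rw [h1, h2, zero_add]
    ring
  have hγT : γ T = γ 0 := by simpa using hperT 0
  obtain ⟨n, hn⟩ : ∃ n : ℤ, c = n * (2 * Real.pi) := by
    apply angle_sub (θ 0) c
    · rw [← hθT 0, zero_add, ← hxθ T, ← hxθ 0, hγT]
    · rw [← hθT 0, zero_add, ← hyθ T, ← hyθ 0, hγT]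
  rcases eq_or_ne c 0 with hc0 | hc0
  · -- degenerate case: θ is periodic, hence constant, contradiction
    exfalso
    have hθp : Function.Periodic θ T := fun t => by rw [hθT t, hc0, add_zero]
    obtain ⟨t₀, ht₀, hmax⟩ := isCompact_Icc.exists_isMaxOn (α := ℝ)
      (s := Icc (0:ℝ) T) ⟨0, by constructor <;> linarith⟩ hθc.continuousOn
    have hgm : ∀ t, θ t ≤ θ t₀ := by
      intro t
      obtain ⟨s', hs', heq⟩ := hθp.exists_mem_Ico₀ hT t
      rw [heq]
      exact hmax ⟨hs'.1, le_of_lt (lt_of_lt_of_le hs'.2 le_rfl)⟩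
    have hlm : IsLocalMax θ t₀ := Filter.Eventually.of_forall hgm
    have hθf : ∀ t, HasDerivAt θ (f (θ t)) t := fun t => (hωθ t) ▸ hθ t
    have hfM : f (θ t₀) = 0 := hlm.hasDerivAt_eq_zero (hθf t₀)
    have hlip := f_lip b
    have huniq : ∀ t, t₀ ≤ t → θ t = θ t₀ := by
      intro t ht
      have heq := ODE_solution_unique (v := fun _ a => f a) (fun _ => hlip)
        (f := θ) (g := fun _ => θ t₀) (a := t₀) (b := t)
        hθc.continuousOn
        (fun s _ => (hθf s).hasDerivWithinAt)
        continuousOn_const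
        (fun s _ => by
          simpa [hfM] using (hasDerivAt_const s (θ t₀)).hasDerivWithinAt)
        rfl
      exact heq ⟨ht, le_rfl⟩
    have hθconst : ∀ t, θ t = θ t₀ := by
      intro t
      obtain ⟨m, hm⟩ := exists_nat_ge ((t₀ - t) / T)
      have hmT : t₀ ≤ t + m * T := by
        rw [div_le_iff₀ hT] at hm
        linarith
      have : θ (t + m * T) = θ t := (hθp.nat_mul m) t
      rw [← this]
      exact huniq _ hmT
    obtain ⟨t, s, hts⟩ := hnc
    apply hts
    have h1 : γ t = (Real.cos (θ t₀), Real.sin (θ t₀)) := by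
      rw [show γ t = ((γ t).1, (γ t).2) from rfl, hxθ t, hyθ t, hθconst t]
    have h2 : γ s = (Real.cos (θ t₀), Real.sin (θ t₀)) := by
      rw [show γ s = ((γ s).1, (γ s).2) from rfl, hxθ s, hyθ s, hθconst s]
    rw [h1, h2]
  · -- nondegenerate case: θ is unbounded, γ covers the circle
    ext p
    simp only [Set.mem_range, Set.mem_setOf_eq]
    constructor
    · rintro ⟨t, rfl⟩
      exact hcirc t
    · intro hp
      obtain ⟨a, ha1, ha2⟩ := exists_angle p.1 p.2 hp
      have hfwd : ∀ m : ℕ, θ (m * T) = θ 0 + m * c := by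
        intro m
        induction m with
        | zero => simp
        | succ k ih =>
          have : ((k : ℝ) + 1) * T = k * T + T := by ring
          push_cast
          rw [this, hθT, ih]
          ring
      have hbwd : ∀ m : ℕ, θ (-(m * T)) = θ 0 - m * c := by
        intro m
        induction m with
        | zero => simp
        | succ k ih =>
          have h1 : θ (-(((k:ℝ) + 1) * T) + T) = θ (-(((k:ℝ) + 1) * T)) + c := hθT _
          have h2 : -(((k:ℝ) + 1) * T) + T = -(k * T) := by ring
          rw [h2] at h1
          push_cast
          rw [show -(((k:ℝ) + 1) * T) = -(((k:ℝ)+1) * T) from rfl]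
          have := h1
          rw [ih] at this
          push_cast at this ⊢
          linarith
      rcases lt_or_gt_of_ne hc0 with hcneg | hcpos
      · -- c < 0
        obtain ⟨m, hm⟩ := exists_nat_ge (|a - θ 0| / (-c))
        have hmc : |a - θ 0| ≤ m * (-c) := by
          rw [div_le_iff₀ (by linarith)] at hm
          linarith
        have hb1 : θ (m * T) ≤ a := by
          rw [hfwd m]
          have := (abs_le.mp hmc).1
          linarith
        have hb2 : a ≤ θ (-(m * T)) := by
          rw [hbwd m]
          have := (abs_le.mp hmc).2
          linarith
        have hle : -(m * T) ≤ (m : ℝ) * T := by nlinarith [Nat.cast_nonneg (α := ℝ) m]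
        obtain ⟨t, _, hta⟩ := intermediate_value_Icc' hle hθc.continuousOn ⟨hb1, hb2⟩
        refine ⟨t, ?_⟩
        rw [show γ t = ((γ t).1, (γ t).2) from rfl, hxθ t, hyθ t, hta, ha1, ha2]
      · -- c > 0
        obtain ⟨m, hm⟩ := exists_nat_ge (|a - θ 0| / c)
        have hmc : |a - θ 0| ≤ m * c := by
          rw [div_le_iff₀ hcpos] at hm
          linarith
        have hb1 : θ (-(m * T)) ≤ a := by
          rw [hbwd m]
          have := (abs_le.mp hmc).1
          linarith
        have hb2 : a ≤ θ (m * T) := by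
          rw [hfwd m]
          have := (abs_le.mp hmc).2
          linarith
        have hle : -(m * T) ≤ (m : ℝ) * T := by nlinarith [Nat.cast_nonneg (α := ℝ) m]
        obtain ⟨t, _, hta⟩ := intermediate_value_Icc hle hθc.continuousOn ⟨hb1, hb2⟩
        refine ⟨t, ?_⟩
        rw [show γ t = ((γ t).1, (γ t).2) from rfl, hxθ t, hyθ t, hta, ha1, ha2]
end

section
/- Let m be a natural number, either m = 0 or m ≥ 2, let F : ℝ → ℝ be C¹ and G : ℝ → ℝ be C². Set P(x,y) = y − |y|^m·F(x), Q(x,y) = −G'(x)/2, and V(x,y) = G(x) + y² − y·|y|^m·F(x). Then, identically on ℝ², V_x·P + V_y·Q − (P_x + Q_y)·V = (1/2)·|y|^m·((m−1)·F(x)·G'(x) + 2·F'(x)·G(x)). -/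
open MeasureTheory Filter Topology


lemma hasDerivAt_mul_abs_pow (m : ℕ) (hm : m = 0 ∨ 2 ≤ m) (y : ℝ) :
    HasDerivAt (fun v : ℝ => v * |v| ^ m) (((m : ℝ) + 1) * |y| ^ m) y := by
  rcases hm with rfl | hm
  · simp only [pow_zero, mul_one, Nat.cast_zero, zero_add]
    exact hasDerivAt_id' y
  · rcases eq_or_ne y 0 with rfl | hy
    · rw [hasDerivAt_iff_tendsto_slope]
      have h0 : Tendsto (fun v : ℝ => |v| ^ m) (𝓝[≠] (0:ℝ)) (𝓝 0) := by
        have : Tendsto (fun v : ℝ => |v| ^ m) (𝓝 (0:ℝ)) (𝓝 (|0|^m)) :=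
          ((continuous_abs.pow m).tendsto 0)
        simpa [zero_pow (by omega : m ≠ 0)] using this.mono_left nhdsWithin_le_nhds
      have : (((m:ℝ) + 1) * |(0:ℝ)| ^ m) = 0 := by
        simp [zero_pow (by omega : m ≠ 0)]
      rw [this]
      apply h0.congr'
      filter_upwards [self_mem_nhdsWithin] with v hv
      have hv' : v ≠ 0 := hv
      simp only [slope_def_field, zero_mul, mul_zero, sub_zero]
      rw [mul_comm, mul_div_assoc, div_self hv', mul_one]
    · have h1 : HasDerivAt (fun v : ℝ => |v| ^ m)
          ((m : ℝ) * |y| ^ (m - 1) * (SignType.sign y : ℝ)) y := by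
        exact (hasDerivAt_abs hy).pow m
      have h2 : HasDerivAt (fun v : ℝ => v * |v| ^ m)
          (1 * |y| ^ m + id y * ((m : ℝ) * |y| ^ (m - 1) * (SignType.sign y : ℝ))) y :=
        (hasDerivAt_id y).mul h1
      convert h2 using 1
      have hsign : y * (SignType.sign y : ℝ) = |y| := by
        rcases hy.lt_or_gt with h | h <;> simp [h, abs_of_pos, abs_of_neg, h.le]
      have habs : |y| ^ m = |y| ^ (m - 1) * |y| := by
        rw [← pow_succ]; congr 1; omega
      rw [habs]
      simp only [id]
      linear_combination (-(m:ℝ)) * |y|^(m-1) * hsign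


/-- The Dulac identity for the extended Liénard system: with
`V = G(x) + y² − y|y|^m F(x)`, `P = y − |y|^m F(x)`, `Q = −G'(x)/2`, one has
`V_x P + V_y Q − (P_x + Q_y) V = (1/2)|y|^m ((m−1)FG' + 2F'G)`. -/
theorem stmt_9 (m : ℕ) (hm : m = 0 ∨ 2 ≤ m)
    (F G : ℝ → ℝ) (hF : ContDiff ℝ 1 F) (hG : ContDiff ℝ 2 G)
    (P Q V : ℝ × ℝ → ℝ)
    (hP : P = fun p => p.2 - |p.2| ^ m * F p.1)
    (hQ : Q = fun p => -(deriv G p.1) / 2)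
    (hV : V = fun p => G p.1 + p.2 ^ 2 - p.2 * |p.2| ^ m * F p.1) :
    ∀ p : ℝ × ℝ,
      pdx V p * P p + pdy V p * Q p - (pdx P p + pdy Q p) * V p =
        (1 / 2) * |p.2| ^ m *
          (((m : ℝ) - 1) * F p.1 * deriv G p.1 + 2 * deriv F p.1 * G p.1) := by

  intro p
  obtain ⟨x, y⟩ := p
  have dF : HasDerivAt F (deriv F x) x :=
    ((hF.differentiable one_ne_zero) x).hasDerivAt
  have dG : HasDerivAt G (deriv G x) x :=
    ((hG.differentiable (by norm_num)) x).hasDerivAt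
  have hVx : pdx V (x, y) = deriv G x - y * |y| ^ m * deriv F x := by
    rw [hV, pdx]
    exact (((dG.add_const (y ^ 2)).sub ((dF.const_mul (y * |y| ^ m)))).deriv)
  have hVy : pdy V (x, y) = 2 * y - ((m : ℝ) + 1) * |y| ^ m * F x := by
    rw [hV, pdy]
    have := (((hasDerivAt_pow 2 y).const_add (G x)).sub
      ((hasDerivAt_mul_abs_pow m hm y).mul_const (F x))).deriv
    simp at this
    exact this
  have hPx : pdx P (x, y) = -(|y| ^ m * deriv F x) := by
    rw [hP, pdx]
    exact ((dF.const_mul (|y| ^ m)).const_sub y).deriv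
  have hQy : pdy Q (x, y) = 0 := by
    rw [hQ]
    unfold pdy
    simp
  rw [hVx, hVy, hPx, hQy, hP, hQ, hV]
  simp only
  ring
end

section
/- Let m ≥ 2 be an integer and let a, g be real numbers. Then the set {y ∈ ℝ : g + y² − a·y·|y|^m = 0} has at most 3 elements. -/
open Set

private lemma root_diff_eq {m : ℕ} {a g y1 y2 : ℝ}
    (h1 : g + y1 ^ 2 - a * y1 ^ (m + 1) = 0)
    (h2 : g + y2 ^ 2 - a * y2 ^ (m + 1) = 0) (hne : y1 ≠ y2) :
    y1 + y2 = a * ∑ i ∈ Finset.range (m + 1), y2 ^ i * y1 ^ (m - i) := by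
  have e2 : (∑ i ∈ Finset.range (m + 1), y2 ^ i * y1 ^ (m - i)) * (y2 - y1)
      = y2 ^ (m + 1) - y1 ^ (m + 1) := by
    simpa using geom_sum₂_mul y2 y1 (m + 1)
  have h3 : (y1 + y2 - a * ∑ i ∈ Finset.range (m + 1), y2 ^ i * y1 ^ (m - i)) * (y2 - y1) = 0 := by
    linear_combination h2 - h1 - a * e2
  rcases mul_eq_zero.mp h3 with h | h
  · linarith
  · exact absurd (by linarith : y1 = y2) hne

private lemma sum_le_low {m : ℕ} {c y1 y2 : ℝ} (hm : 2 ≤ m) (h10 : 0 < y1) (h12 : y1 < y2)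
    (h2c : y2 ≤ c) :
    ∑ i ∈ Finset.range (m + 1), y2 ^ i * y1 ^ (m - i)
      ≤ ((m : ℝ) * y1 + y2) * c ^ (m - 1) := by
  have h20 : 0 < y2 := h10.trans h12
  have hc0 : 0 < c := lt_of_lt_of_le h20 h2c
  have h1c : y1 ≤ c := le_of_lt (lt_of_lt_of_le h12 h2c)
  rw [Finset.sum_range_succ]
  have hlast : y2 ^ m * y1 ^ (m - m) ≤ y2 * c ^ (m - 1) := by
    simp only [Nat.sub_self, pow_zero, mul_one]
    calc y2 ^ m = y2 * y2 ^ (m - 1) := by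
          rw [← pow_succ']
          congr 1
          omega
      _ ≤ y2 * c ^ (m - 1) := by
          exact mul_le_mul_of_nonneg_left (pow_le_pow_left₀ h20.le h2c _) h20.le
  have hbody : ∑ i ∈ Finset.range m, y2 ^ i * y1 ^ (m - i)
      ≤ (m : ℝ) * (y1 * c ^ (m - 1)) := by
    calc ∑ i ∈ Finset.range m, y2 ^ i * y1 ^ (m - i)
        ≤ ∑ _i ∈ Finset.range m, y1 * c ^ (m - 1) := by
          apply Finset.sum_le_sum
          intro i hi
          have him : i < m := Finset.mem_range.mp hi
          have hmi : m - i = (m - 1 - i) + 1 := by omega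
          have hexp : i + (m - 1 - i) = m - 1 := by omega
          calc y2 ^ i * y1 ^ (m - i) = y2 ^ i * y1 ^ (m - 1 - i) * y1 := by
                rw [hmi, pow_succ]; ring
            _ ≤ c ^ i * c ^ (m - 1 - i) * y1 := by
                apply mul_le_mul_of_nonneg_right _ h10.le
                exact mul_le_mul (pow_le_pow_left₀ h20.le h2c _)
                  (pow_le_pow_left₀ h10.le h1c _) (by positivity) (by positivity)
            _ = y1 * c ^ (m - 1) := by rw [← pow_add, hexp]; ring
      _ = (m : ℝ) * (y1 * c ^ (m - 1)) := by
          rw [Finset.sum_const, Finset.card_range, nsmul_eq_mul]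
  calc _ ≤ (m : ℝ) * (y1 * c ^ (m - 1)) + y2 * c ^ (m - 1) := add_le_add hbody hlast
    _ = ((m : ℝ) * y1 + y2) * c ^ (m - 1) := by ring

private lemma sum_ge_high {m : ℕ} {c y1 y2 : ℝ} (hm : 2 ≤ m) (hc0 : 0 < c) (hc1 : c ≤ y1)
    (h12 : y1 < y2) :
    (y1 + (m : ℝ) * y2) * c ^ (m - 1)
      ≤ ∑ i ∈ Finset.range (m + 1), y2 ^ i * y1 ^ (m - i) := by
  have h10 : 0 < y1 := lt_of_lt_of_le hc0 hc1
  have h20 : 0 < y2 := h10.trans h12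
  have hc2 : c ≤ y2 := le_of_lt (lt_of_le_of_lt hc1 h12)
  rw [Finset.sum_range_succ']
  have hfirst : y1 * c ^ (m - 1) ≤ y2 ^ 0 * y1 ^ (m - 0) := by
    simp only [pow_zero, one_mul, Nat.sub_zero]
    calc y1 * c ^ (m - 1) ≤ y1 * y1 ^ (m - 1) :=
          mul_le_mul_of_nonneg_left (pow_le_pow_left₀ hc0.le hc1 _) h10.le
      _ = y1 ^ m := by rw [← pow_succ']; congr 1; omega
  have hbody : (m : ℝ) * (y2 * c ^ (m - 1))
      ≤ ∑ i ∈ Finset.range m, y2 ^ (i + 1) * y1 ^ (m - (i + 1)) := by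
    calc (m : ℝ) * (y2 * c ^ (m - 1))
        = ∑ _i ∈ Finset.range m, y2 * c ^ (m - 1) := by
          rw [Finset.sum_const, Finset.card_range, nsmul_eq_mul]
      _ ≤ _ := by
          apply Finset.sum_le_sum
          intro i hi
          have him : i < m := Finset.mem_range.mp hi
          have hexp : i + (m - (i + 1)) = m - 1 := by omega
          calc y2 * c ^ (m - 1) = y2 * (c ^ i * c ^ (m - (i + 1))) := by
                rw [← pow_add, hexp]
            _ ≤ y2 * (y2 ^ i * y1 ^ (m - (i + 1))) := by
                apply mul_le_mul_of_nonneg_left _ h20.le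
                exact mul_le_mul (pow_le_pow_left₀ hc0.le hc2 _)
                  (pow_le_pow_left₀ hc0.le hc1 _) (by positivity) (by positivity)
            _ = y2 ^ (i + 1) * y1 ^ (m - (i + 1)) := by rw [pow_succ]; ring
  calc (y1 + (m : ℝ) * y2) * c ^ (m - 1)
      = (m : ℝ) * (y2 * c ^ (m - 1)) + y1 * c ^ (m - 1) := by ring
    _ ≤ _ := add_le_add hbody hfirst

private lemma low_core {m : ℕ} {a c g y1 y2 : ℝ} (hm : 2 ≤ m) (ha : 0 < a)
    (hc : a * ((m : ℝ) + 1) * c ^ (m - 1) = 2)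
    (h1 : g + y1 ^ 2 - a * y1 ^ (m + 1) = 0)
    (h2 : g + y2 ^ 2 - a * y2 ^ (m + 1) = 0)
    (h10 : 0 < y1) (h12 : y1 < y2) (h2c : y2 ≤ c) : False := by
  have hsum := root_diff_eq h1 h2 (ne_of_lt h12)
  have hb := sum_le_low hm h10 h12 h2c
  have h4 : a * ∑ i ∈ Finset.range (m + 1), y2 ^ i * y1 ^ (m - i)
      ≤ a * (((m : ℝ) * y1 + y2) * c ^ (m - 1)) := mul_le_mul_of_nonneg_left hb ha.le
  have h5 : ((m : ℝ) + 1) * (a * (((m : ℝ) * y1 + y2) * c ^ (m - 1)))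
      = 2 * ((m : ℝ) * y1 + y2) := by linear_combination ((m : ℝ) * y1 + y2) * hc
  have hm1 : (2 : ℝ) ≤ (m : ℝ) := by exact_mod_cast hm
  nlinarith [mul_le_mul_of_nonneg_left h4 (by positivity : (0:ℝ) ≤ (m : ℝ) + 1),
    mul_pos (by linarith : (0:ℝ) < (m : ℝ) - 1) (sub_pos.mpr h12)]

private lemma high_core {m : ℕ} {a c g y1 y2 : ℝ} (hm : 2 ≤ m) (ha : 0 < a) (hc0 : 0 < c)
    (hc : a * ((m : ℝ) + 1) * c ^ (m - 1) = 2)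
    (h1 : g + y1 ^ 2 - a * y1 ^ (m + 1) = 0)
    (h2 : g + y2 ^ 2 - a * y2 ^ (m + 1) = 0)
    (hc1 : c ≤ y1) (h12 : y1 < y2) : False := by
  have hsum := root_diff_eq h1 h2 (ne_of_lt h12)
  have hb := sum_ge_high hm hc0 hc1 h12
  have h4 : a * ((y1 + (m : ℝ) * y2) * c ^ (m - 1))
      ≤ a * ∑ i ∈ Finset.range (m + 1), y2 ^ i * y1 ^ (m - i) := mul_le_mul_of_nonneg_left hb ha.le
  have h5 : ((m : ℝ) + 1) * (a * ((y1 + (m : ℝ) * y2) * c ^ (m - 1)))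
      = 2 * (y1 + (m : ℝ) * y2) := by linear_combination (y1 + (m : ℝ) * y2) * hc
  have hm1 : (2 : ℝ) ≤ (m : ℝ) := by exact_mod_cast hm
  nlinarith [mul_le_mul_of_nonneg_left h4 (by positivity : (0:ℝ) ≤ (m : ℝ) + 1),
    mul_pos (by linarith : (0:ℝ) < (m : ℝ) - 1) (sub_pos.mpr h12)]

private lemma pos_part {m : ℕ} (hm : 2 ≤ m) {a : ℝ} (ha : 0 < a) (g : ℝ) :
    ({y : ℝ | g + y ^ 2 - a * y * |y| ^ m = 0} ∩ Set.Ioi 0).encard ≤ 2 := by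
  -- choose c with a*(m+1)*c^(m-1) = 2
  have hb0 : (0 : ℝ) < 2 / (a * ((m : ℝ) + 1)) := by positivity
  set c : ℝ := (2 / (a * ((m : ℝ) + 1))) ^ (((m - 1 : ℕ) : ℝ))⁻¹ with hcdef
  have hc0 : 0 < c := Real.rpow_pos_of_pos hb0 _
  have hcpow : c ^ (m - 1) = 2 / (a * ((m : ℝ) + 1)) :=
    Real.rpow_inv_natCast_pow hb0.le (by omega)
  have hc : a * ((m : ℝ) + 1) * c ^ (m - 1) = 2 := by
    rw [hcpow]; field_simp
  -- roots in Ioi 0 satisfy the polynomial equation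
  have hpoly : ∀ y : ℝ, 0 < y → (g + y ^ 2 - a * y * |y| ^ m = 0 ↔
      g + y ^ 2 - a * y ^ (m + 1) = 0) := by
    intro y hy
    rw [abs_of_pos hy]
    constructor <;> intro h <;> linear_combination h
  have hsplit : {y : ℝ | g + y ^ 2 - a * y * |y| ^ m = 0} ∩ Set.Ioi 0 ⊆
      ({y : ℝ | g + y ^ 2 - a * y * |y| ^ m = 0} ∩ Set.Ioc 0 c) ∪
      ({y : ℝ | g + y ^ 2 - a * y * |y| ^ m = 0} ∩ Set.Ioi c) := by
    rintro y ⟨hy, hy0⟩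
    rcases le_or_gt y c with h | h
    · exact Or.inl ⟨hy, hy0, h⟩
    · exact Or.inr ⟨hy, h⟩
  refine le_trans (Set.encard_mono hsplit) (le_trans (Set.encard_union_le _ _) ?_)
  have e1 : ({y : ℝ | g + y ^ 2 - a * y * |y| ^ m = 0} ∩ Set.Ioc 0 c).encard ≤ 1 := by
    rw [Set.encard_le_one_iff]
    rintro y1 y2 ⟨hy1, hy10, hy1c⟩ ⟨hy2, hy20, hy2c⟩
    rw [Set.mem_setOf_eq, hpoly y1 hy10] at hy1
    rw [Set.mem_setOf_eq, hpoly y2 hy20] at hy2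
    rcases lt_trichotomy y1 y2 with h | h | h
    · exact absurd (low_core hm ha hc hy1 hy2 hy10 h hy2c) not_false
    · exact h
    · exact absurd (low_core hm ha hc hy2 hy1 hy20 h hy1c) not_false
  have e2 : ({y : ℝ | g + y ^ 2 - a * y * |y| ^ m = 0} ∩ Set.Ioi c).encard ≤ 1 := by
    rw [Set.encard_le_one_iff]
    rintro y1 y2 ⟨hy1, hy1c⟩ ⟨hy2, hy2c⟩
    rw [Set.mem_Ioi] at hy1c hy2c
    rw [Set.mem_setOf_eq, hpoly y1 (hc0.trans hy1c)] at hy1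
    rw [Set.mem_setOf_eq, hpoly y2 (hc0.trans hy2c)] at hy2
    rcases lt_trichotomy y1 y2 with h | h | h
    · exact absurd (high_core hm ha hc0 hc hy1 hy2 hy1c.le h) not_false
    · exact h
    · exact absurd (high_core hm ha hc0 hc hy2 hy1 hy2c.le h) not_false
  calc _ ≤ (1 : ℕ∞) + 1 := add_le_add e1 e2
    _ = 2 := by norm_num

private lemma neg_part {m : ℕ} (hm : 2 ≤ m) {a : ℝ} (ha : 0 ≤ a) (g : ℝ) :
    ({y : ℝ | g + y ^ 2 - a * y * |y| ^ m = 0} ∩ Set.Iio 0).encard ≤ 1 := by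
  rw [Set.encard_le_one_iff]
  rintro y1 y2 ⟨hy1, hy10⟩ ⟨hy2, hy20⟩
  rw [Set.mem_setOf_eq] at hy1 hy2
  rw [Set.mem_Iio] at hy10 hy20
  have key : ∀ y1 y2 : ℝ, y1 < y2 → y2 < 0 →
      g + y1 ^ 2 - a * y1 * |y1| ^ m = 0 → g + y2 ^ 2 - a * y2 * |y2| ^ m = 0 → False := by
    intro y1 y2 h12 h20 h1 h2
    rw [abs_of_neg (h12.trans h20)] at h1
    rw [abs_of_neg h20] at h2
    have hpow : (-y2) ^ (m + 1) ≤ (-y1) ^ (m + 1) :=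
      pow_le_pow_left₀ (by linarith) (by linarith) _
    have e1 : a * y1 * (-y1) ^ m = -(a * (-y1) ^ (m + 1)) := by
      rw [pow_succ']; ring
    have e2 : a * y2 * (-y2) ^ m = -(a * (-y2) ^ (m + 1)) := by
      rw [pow_succ']; ring
    rw [e1] at h1; rw [e2] at h2
    have hsq : y2 ^ 2 < y1 ^ 2 := by nlinarith
    nlinarith [mul_le_mul_of_nonneg_left hpow ha]
  rcases lt_trichotomy y1 y2 with h | h | h
  · exact absurd (key y1 y2 h hy20 hy1 hy2) not_false
  · exact h
  · exact absurd (key y2 y1 h hy10 hy2 hy1) not_false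

private lemma main_pos {m : ℕ} (hm : 2 ≤ m) {a : ℝ} (ha : 0 < a) (g : ℝ) :
    {y : ℝ | g + y ^ 2 - a * y * |y| ^ m = 0}.encard ≤ 3 := by
  set S := {y : ℝ | g + y ^ 2 - a * y * |y| ^ m = 0} with hS
  have hcover : S ⊆ (S ∩ Set.Iio 0) ∪ ((S ∩ {0}) ∪ (S ∩ Set.Ioi 0)) := by
    intro y hy
    rcases lt_trichotomy y 0 with h | h | h
    · exact Or.inl ⟨hy, h⟩
    · exact Or.inr (Or.inl ⟨hy, h⟩)
    · exact Or.inr (Or.inr ⟨hy, h⟩)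
  refine le_trans (Set.encard_mono hcover) (le_trans (Set.encard_union_le _ _)
    (le_trans (add_le_add le_rfl (Set.encard_union_le _ _)) ?_))
  have hpos : (S ∩ Set.Ioi 0).encard ≤ 2 := pos_part hm ha g
  rcases lt_or_ge g 0 with hg | hg
  · have hzero : S ∩ {0} = ∅ := by
      ext y
      simp only [Set.mem_inter_iff, Set.mem_singleton_iff, Set.mem_empty_iff_false, iff_false,
        not_and, hS, Set.mem_setOf_eq]
      intro hy hy0
      subst hy0
      simp at hy
      linarith
    have hneg : (S ∩ Set.Iio 0).encard ≤ 1 := neg_part hm ha.le g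
    rw [hzero]
    simp only [Set.encard_empty]
    calc (S ∩ Set.Iio 0).encard + (0 + (S ∩ Set.Ioi 0).encard)
        ≤ 1 + (0 + 2) := by
          exact add_le_add hneg (add_le_add le_rfl hpos)
      _ = 3 := by norm_num
  · have hneg : S ∩ Set.Iio 0 = ∅ := by
      ext y
      simp only [Set.mem_inter_iff, Set.mem_Iio, Set.mem_empty_iff_false, iff_false, not_and,
        hS, Set.mem_setOf_eq]
      intro hy hy0
      have e : a * y * |y| ^ m = -(a * (-y) ^ (m + 1)) := by
        rw [abs_of_neg hy0]; ring
      rw [e] at hy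
      have h1 : 0 ≤ a * (-y) ^ (m + 1) :=
        mul_nonneg ha.le (pow_nonneg (by linarith) _)
      nlinarith [mul_pos_of_neg_of_neg hy0 hy0]
    have hzero : (S ∩ {0}).encard ≤ 1 := by
      refine le_trans (Set.encard_mono Set.inter_subset_right) ?_
      simp
    rw [hneg]
    simp only [Set.encard_empty]
    calc (0 : ℕ∞) + ((S ∩ {0}).encard + (S ∩ Set.Ioi 0).encard)
        ≤ 0 + (1 + 2) := add_le_add le_rfl (add_le_add hzero hpos)
      _ = 3 := by norm_num

/-- For `m ≥ 2`, the set `{y : g + y² − a y |y|^m = 0}` has at most 3 elements. -/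
theorem stmt_10 (m : ℕ) (hm : 2 ≤ m) (a g : ℝ) :
    {y : ℝ | g + y ^ 2 - a * y * |y| ^ m = 0}.encard ≤ 3 := by
  rcases lt_trichotomy a 0 with ha | ha | ha
  · have himg : {y : ℝ | g + y ^ 2 - a * y * |y| ^ m = 0}
        = Neg.neg '' {y : ℝ | g + y ^ 2 - (-a) * y * |y| ^ m = 0} := by
      ext y
      simp only [Set.mem_image, Set.mem_setOf_eq]
      constructor
      · intro h
        refine ⟨-y, ?_, neg_neg y⟩
        rw [abs_neg]
        linear_combination h
      · rintro ⟨x, hx, rfl⟩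
        rw [abs_neg]
        linear_combination hx
    rw [himg, neg_injective.encard_image _]
    exact main_pos hm (by linarith) g
  · subst ha
    have hsub : {y : ℝ | g + y ^ 2 - 0 * y * |y| ^ m = 0}
        ⊆ {Real.sqrt (-g), -Real.sqrt (-g)} := by
      intro y hy
      simp only [Set.mem_setOf_eq, zero_mul, sub_zero] at hy
      have h2 : y ^ 2 = -g := by linarith
      have h3 : |y| = Real.sqrt (-g) := by
        rw [← h2, ← Real.sqrt_sq_eq_abs]
      rcases abs_eq (Real.sqrt_nonneg (-g)) |>.mp h3 with h | h
      · exact Or.inl h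
      · exact Or.inr h
    refine le_trans (Set.encard_mono hsub) ?_
    refine le_trans (Set.encard_insert_le _ _) ?_
    simp only [Set.encard_singleton]
    norm_num
  · exact main_pos hm ha g
end

section
/- Let F(x,y) = a + b·x + c·y + d·x² + e·x·y + h·y² with real coefficients satisfying 4·d·h − e² > 0. Then the rigid cubic system ẋ = −y + x·F(x,y), ẏ = x + y·F(x,y) has at most one periodic orbit; that is, any two nonconstant periodic solutions have the same image. -/
open MeasureTheory

/-- Integrating factor lemma: solution formula for `D' = G·D`. -/
lemma lin_sol (D G : ℝ → ℝ) (hG : Continuous G)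
    (hD : ∀ t, HasDerivAt D (G t * D t) t) (t : ℝ) :
    D t = D 0 * Real.exp (∫ s in (0:ℝ)..t, G s) := by
  set A : ℝ → ℝ := fun u => ∫ s in (0:ℝ)..u, G s with hAdef
  have hA : ∀ u, HasDerivAt A (G u) u := fun u =>
    intervalIntegral.integral_hasDerivAt_right (hG.intervalIntegrable _ _)
      (hG.stronglyMeasurableAtFilter _ _) hG.continuousAt
  set N : ℝ → ℝ := fun u => D u * Real.exp (-(A u)) with hNdef
  have hN : ∀ u, HasDerivAt N 0 u := by
    intro u
    have := (hD u).mul ((hA u).neg.exp)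
    refine this.congr_deriv (Eq.symm ?_)
    ring
  have hconst : N t = N 0 :=
    is_const_of_deriv_eq_zero (fun u => (hN u).differentiableAt)
      (fun u => (hN u).deriv) t 0
  have hA0 : A 0 = 0 := intervalIntegral.integral_same
  have : D t * Real.exp (-(A t)) = D 0 := by
    simpa [hNdef, hA0] using hconst
  have hpos : Real.exp (-(A t)) ≠ 0 := (Real.exp_pos _).ne'
  calc D t = D t * Real.exp (-(A t)) * Real.exp (A t) := by
        rw [mul_assoc, ← Real.exp_add]; simp
    _ = D 0 * Real.exp (A t) := by rw [this]

/-- The scalar radial vector field of the rigid cubic system, in polar form. -/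
noncomputable def ff (a b c d e h : ℝ) (t x : ℝ) : ℝ :=
  a * x + (b * Real.cos t + c * Real.sin t) * x ^ 2 +
    (d * (Real.cos t) ^ 2 + e * Real.cos t * Real.sin t + h * (Real.sin t) ^ 2) * x ^ 3

lemma gg_sign (d e h : ℝ) (hdh : 0 < 4 * d * h - e ^ 2) (t : ℝ) :
    0 < d * (d * (Real.cos t) ^ 2 + e * Real.cos t * Real.sin t + h * (Real.sin t) ^ 2) := by
  have hsc := Real.sin_sq_add_cos_sq t
  rcases eq_or_ne (Real.sin t) 0 with hs | hs
  · have hd : d ≠ 0 := by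
      intro h0
      rw [h0] at hdh
      nlinarith [sq_nonneg e]
    rw [hs]
    have : (Real.cos t) ^ 2 = 1 := by nlinarith
    have hd2 : 0 < d ^ 2 := by positivity
    nlinarith
  · have hs2 : 0 < (Real.sin t) ^ 2 := by positivity
    nlinarith [sq_nonneg (2 * d * Real.cos t + e * Real.sin t), mul_pos hdh hs2]

lemma no_ordered (a b c d e h : ℝ) (hdh : 0 < 4 * d * h - e ^ 2)
    (σ1 σ2 : ℝ → ℝ) (L : ℝ) (hL : 0 < L)
    (hper1 : Function.Periodic σ1 L) (hper2 : Function.Periodic σ2 L)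
    (hd1 : ∀ t, HasDerivAt σ1 (ff a b c d e h t (σ1 t)) t)
    (hd2 : ∀ t, HasDerivAt σ2 (ff a b c d e h t (σ2 t)) t)
    (hpos1 : ∀ t, 0 < σ1 t) (hlt : ∀ t, σ1 t < σ2 t) : False := by
  set π := Real.pi
  have hpos2 : ∀ t, 0 < σ2 t := fun t => (hpos1 t).trans (hlt t)
  have hc1 : Continuous σ1 := by
    refine continuous_iff_continuousAt.2 fun t => (hd1 t).differentiableAt.continuousAt
  have hc2 : Continuous σ2 := by
    refine continuous_iff_continuousAt.2 fun t => (hd2 t).differentiableAt.continuousAt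
  -- derivatives of shifted functions
  have hs1 : ∀ t, HasDerivAt (fun t => σ1 (t + π)) (ff a b c d e h (t + π) (σ1 (t + π))) t := by
    intro t
    simpa [Function.comp_def] using (hd1 (t + π)).comp t ((hasDerivAt_id t).add_const π)
  have hs2 : ∀ t, HasDerivAt (fun t => σ2 (t + π)) (ff a b c d e h (t + π) (σ2 (t + π))) t := by
    intro t
    simpa [Function.comp_def] using (hd2 (t + π)).comp t ((hasDerivAt_id t).add_const π)
  -- the four positive differences
  have u42pos : ∀ t, 0 < σ2 t + σ1 (t + π) := fun t => add_pos (hpos2 t) (hpos1 _)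
  have u31pos : ∀ t, 0 < σ1 t + σ2 (t + π) := fun t => add_pos (hpos1 t) (hpos2 _)
  have u41pos : ∀ t, 0 < σ2 t + σ2 (t + π) := fun t => add_pos (hpos2 t) (hpos2 _)
  have u32pos : ∀ t, 0 < σ1 t + σ1 (t + π) := fun t => add_pos (hpos1 t) (hpos1 _)
  set W : ℝ → ℝ := fun t =>
    Real.log (σ2 t + σ1 (t + π)) + Real.log (σ1 t + σ2 (t + π)) -
      (Real.log (σ2 t + σ2 (t + π)) + Real.log (σ1 t + σ1 (t + π))) with hWdef
  set Φ : ℝ → ℝ := fun t =>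
    (d * (Real.cos t) ^ 2 + e * Real.cos t * Real.sin t + h * (Real.sin t) ^ 2) *
      ((σ2 t - σ1 t) * (σ2 (t + π) - σ1 (t + π))) with hΦdef
  have hW : ∀ t, HasDerivAt W (Φ t) t := by
    intro t
    have l42 := (((hd2 t).add (hs1 t)).log (u42pos t).ne')
    have l31 := (((hd1 t).add (hs2 t)).log (u31pos t).ne')
    have l41 := (((hd2 t).add (hs2 t)).log (u41pos t).ne')
    have l32 := (((hd1 t).add (hs1 t)).log (u32pos t).ne')
    have := (l42.add l31).sub (l41.add l32)
    refine this.congr_deriv (Eq.symm ?_)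
    have e1 : Real.cos (t + π) = -Real.cos t := Real.cos_add_pi t
    have e2 : Real.sin (t + π) = -Real.sin t := Real.sin_add_pi t
    have n42 := (u42pos t).ne'
    have n31 := (u31pos t).ne'
    have n41 := (u41pos t).ne'
    have n32 := (u32pos t).ne'
    simp only [hΦdef, ff, e1, e2, Pi.add_apply]
    field_simp [n42, n31, n41, n32]
    ring
  have hΦc : Continuous Φ := by
    apply Continuous.mul
    · fun_prop
    · fun_prop
  -- W is L-periodic
  have hWL : W L = W 0 := by
    have p1 : σ1 L = σ1 0 := by simpa using hper1 0
    have p2 : σ2 L = σ2 0 := by simpa using hper2 0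
    have p3 : σ1 (L + π) = σ1 (0 + π) := by
      rw [add_comm L π]
      simpa using hper1 π
    have p4 : σ2 (L + π) = σ2 (0 + π) := by
      rw [add_comm L π]
      simpa using hper2 π
    simp only [hWdef, p1, p2, p3, p4]
  have hint : IntervalIntegrable Φ volume 0 L := hΦc.intervalIntegrable _ _
  have hFTC : ∫ t in (0:ℝ)..L, Φ t = W L - W 0 :=
    intervalIntegral.integral_eq_sub_of_hasDerivAt (fun t _ => hW t) hint
  have hzero : ∫ t in (0:ℝ)..L, Φ t = 0 := by rw [hFTC, hWL, sub_self]
  -- but d • ∫ Φ > 0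
  have hdΦ : ∀ t, 0 < d * Φ t := by
    intro t
    have h1 := gg_sign d e h hdh t
    have h2 : 0 < (σ2 t - σ1 t) * (σ2 (t + π) - σ1 (t + π)) :=
      mul_pos (sub_pos.2 (hlt t)) (sub_pos.2 (hlt (t + π)))
    calc (0:ℝ) < (d * (d * (Real.cos t) ^ 2 + e * Real.cos t * Real.sin t +
          h * (Real.sin t) ^ 2)) * ((σ2 t - σ1 t) * (σ2 (t + π) - σ1 (t + π))) :=
        mul_pos h1 h2
      _ = d * Φ t := by rw [hΦdef]; ring
  have hpos : 0 < ∫ t in (0:ℝ)..L, d * Φ t := by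
    apply intervalIntegral.intervalIntegral_pos_of_pos_on
    · exact (continuous_const.mul hΦc).intervalIntegrable _ _
    · exact fun t _ => hdΦ t
    · exact hL
  rw [intervalIntegral.integral_const_mul, hzero, mul_zero] at hpos
  exact lt_irrefl 0 hpos

lemma polar_rep (F : ℝ × ℝ → ℝ) (hFc : Continuous F) (γ : ℝ → ℝ × ℝ)
    (hγ : IsSolution (fun p => -p.2 + p.1 * F p) (fun p => p.1 + p.2 * F p) γ)
    (hp : IsPeriodicSol γ) (hn : IsNonconstant γ) :
    ∃ (σ : ℝ → ℝ) (n : ℕ), 0 < n ∧ (∀ θ, 0 < σ θ) ∧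
      Function.Periodic σ (2 * Real.pi * n) ∧
      (∀ θ, HasDerivAt σ (σ θ * F (σ θ * Real.cos θ, σ θ * Real.sin θ)) θ) ∧
      Set.range γ = Set.range (fun θ => (σ θ * Real.cos θ, σ θ * Real.sin θ)) := by
  have hγc : Continuous γ := by
    refine continuous_iff_continuousAt.2 fun t => (hγ t).continuousAt
  set q : ℝ → ℝ := fun t => F (γ t) with hqdef
  have hqc : Continuous q := hFc.comp hγc
  set A : ℝ → ℝ := fun u => ∫ s in (0:ℝ)..u, q s with hAdef
  have hA : ∀ u, HasDerivAt A (q u) u := fun u =>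
    intervalIntegral.integral_hasDerivAt_right (hqc.intervalIntegrable _ _)
      (hqc.stronglyMeasurableAtFilter _ _) hqc.continuousAt
  have hA0 : A 0 = 0 := intervalIntegral.integral_same
  set z : ℝ → ℂ := fun t => ((γ t).1 : ℂ) + ((γ t).2 : ℂ) * Complex.I with hzdef
  have hx : ∀ t, HasDerivAt (fun t => (γ t).1) (-(γ t).2 + (γ t).1 * F (γ t)) t := by
    intro t; simpa using ((hγ t).hasFDerivAt.fst).hasDerivAt
  have hy : ∀ t, HasDerivAt (fun t => (γ t).2) ((γ t).1 + (γ t).2 * F (γ t)) t := by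
    intro t; simpa using ((hγ t).hasFDerivAt.snd).hasDerivAt
  have hz : ∀ t, HasDerivAt z ((Complex.I + (q t : ℂ)) * z t) t := by
    intro t
    have h1 := (hx t).ofReal_comp
    have h2 := ((hy t).ofReal_comp).mul_const Complex.I
    have := h1.add h2
    refine this.congr_deriv (Eq.symm ?_)
    push_cast
    linear_combination (((γ t).2 : ℂ)) * Complex.I_sq
  set w : ℝ → ℂ := fun t => (A t : ℂ) + (t : ℂ) * Complex.I with hwdef
  have hw : ∀ t, HasDerivAt w ((q t : ℂ) + Complex.I) t := by
    intro t
    have h1 := (hA t).ofReal_comp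
    have h2 := ((hasDerivAt_id t).ofReal_comp).mul_const Complex.I
    refine (h1.add h2).congr_deriv ?_
    simp
  set N : ℝ → ℂ := fun t => z t * Complex.exp (-(w t)) with hNdef
  have hN : ∀ t, HasDerivAt N 0 t := by
    intro t
    have := (hz t).mul ((hw t).neg.cexp)
    refine this.congr_deriv (Eq.symm ?_)
    ring
  have hNc : ∀ t, N t = N 0 :=
    fun t => is_const_of_deriv_eq_zero (fun u => (hN u).differentiableAt)
      (fun u => (hN u).deriv) t 0
  have hN0 : N 0 = z 0 := by simp [hNdef, hwdef, hA0]
  have hzf : ∀ t, z t = z 0 * Complex.exp (w t) := by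
    intro t
    have h1 : z t * Complex.exp (-(w t)) = z 0 := by rw [← hN0]; exact hNc t
    calc z t = z t * Complex.exp (-(w t)) * Complex.exp (w t) := by
          rw [mul_assoc, ← Complex.exp_add]; simp
      _ = z 0 * Complex.exp (w t) := by rw [h1]
  have hz0 : z 0 ≠ 0 := by
    intro h0
    obtain ⟨t, s, hts⟩ := hn
    have hzero : ∀ u, γ u = (0, 0) := by
      intro u
      have := hzf u
      rw [h0, zero_mul] at this
      have hre := congrArg Complex.re this
      have him := congrArg Complex.im this
      simp [hzdef] at hre him
      exact Prod.ext hre him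
    exact hts (by rw [hzero t, hzero s])
  set r0 : ℝ := ‖z 0‖ with hr0def
  have hr0 : 0 < r0 := by
    simpa [hr0def] using (norm_pos_iff.mpr hz0)
  set φ : ℝ := Complex.arg (z 0) with hφdef
  have hpolar : (r0 : ℂ) * Complex.exp ((φ : ℂ) * Complex.I) = z 0 :=
    Complex.norm_mul_exp_arg_mul_I (z 0)
  set σ : ℝ → ℝ := fun θ => r0 * Real.exp (A (θ - φ)) with hσdef
  have hσpos : ∀ θ, 0 < σ θ := fun θ => mul_pos hr0 (Real.exp_pos _)
  have hkeyC : ∀ θ, z (θ - φ) = (σ θ : ℂ) * Complex.exp ((θ : ℂ) * Complex.I) := by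
    intro θ
    rw [hzf (θ - φ), ← hpolar, hwdef]
    simp only [hσdef]
    push_cast
    rw [mul_assoc, ← Complex.exp_add, mul_comm ((r0:ℂ)) (Complex.exp _),
      mul_assoc, ← Complex.exp_add]
    ring_nf
  have hkey : ∀ θ, γ (θ - φ) = (σ θ * Real.cos θ, σ θ * Real.sin θ) := by
    intro θ
    have h1 := hkeyC θ
    have hre := congrArg Complex.re h1
    have him := congrArg Complex.im h1
    simp [hzdef, Complex.exp_re, Complex.exp_im] at hre him
    exact Prod.ext (by simpa using hre) (by simpa using him)
  have hσd : ∀ θ, HasDerivAt σ (σ θ * F (σ θ * Real.cos θ, σ θ * Real.sin θ)) θ := by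
    intro θ
    have h1 : HasDerivAt (fun θ => A (θ - φ)) (q (θ - φ)) θ := by
      simpa [Function.comp_def] using (hA (θ - φ)).comp θ ((hasDerivAt_id θ).sub_const φ)
    have h2 := (h1.exp).const_mul r0
    refine h2.congr_deriv (Eq.symm ?_)
    rw [hqdef]
    simp only [hσdef]
    rw [hkey θ]
    simp only [hσdef]
    ring
  -- period
  obtain ⟨T, hT, hTper⟩ := hp
  have hzT : ∀ t, z (t + T) = z t := by intro t; simp [hzdef, hTper t]
  have hexp : ∀ t, Complex.exp (w (t + T)) = Complex.exp (w t) := by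
    intro t
    have := hzT t
    rw [hzf (t + T), hzf t] at this
    exact mul_left_cancel₀ hz0 this
  have hAper : ∀ t, A (t + T) = A t := by
    intro t
    have := congrArg (‖·‖) (hexp t)
    rw [Complex.norm_exp, Complex.norm_exp] at this
    simp [hwdef] at this
    exact this
  have hAT : A T = 0 := by have := hAper 0; simpa [hA0] using this
  have hTI : Complex.exp ((T : ℂ) * Complex.I) = 1 := by
    have := hexp 0
    simp [hwdef, hA0, hAT] at this
    simpa using this
  obtain ⟨n, hn'⟩ := Complex.exp_eq_one_iff.mp hTI
  have hTn : T = n * (2 * Real.pi) := by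
    have h3 : (T : ℂ) * Complex.I = (((n : ℝ) * (2 * Real.pi) : ℝ) : ℂ) * Complex.I := by
      push_cast
      linear_combination hn'
    have h2 : (T : ℂ) = (((n : ℝ) * (2 * Real.pi) : ℝ) : ℂ) :=
      mul_right_cancel₀ Complex.I_ne_zero h3
    exact_mod_cast h2
  have hnpos : 0 < n := by
    have hπ := Real.pi_pos
    by_contra hle
    push_neg at hle
    have : (n : ℝ) ≤ 0 := by exact_mod_cast hle
    nlinarith
  refine ⟨σ, n.toNat, by omega, hσpos, ?_, hσd, ?_⟩
  · intro θ
    have hcast : ((n.toNat : ℕ) : ℝ) = (n : ℝ) := by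
      exact_mod_cast Int.toNat_of_nonneg hnpos.le
    simp only [hσdef]
    congr 1
    have : θ + 2 * Real.pi * (n.toNat : ℕ) - φ = (θ - φ) + T := by
      rw [hTn, hcast]; ring
    rw [this, hAper]
  · ext u
    constructor
    · rintro ⟨t, rfl⟩
      refine ⟨t + φ, ?_⟩
      have := hkey (t + φ)
      rw [show t + φ - φ = t by ring] at this
      exact this.symm
    · rintro ⟨θ, rfl⟩
      exact ⟨θ - φ, hkey θ⟩

/-- Corollary (co:rig): the rigid cubic system with `F = a + bx + cy + dx² + exy + hy²`
and `4dh − e² > 0` has at most one periodic orbit. -/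
theorem stmt_11 (a b c d e h : ℝ) (hdh : 0 < 4 * d * h - e ^ 2)
    (F : ℝ × ℝ → ℝ)
    (hF : F = fun p => a + b * p.1 + c * p.2 + d * p.1 ^ 2 + e * p.1 * p.2 + h * p.2 ^ 2)
    (γ₁ γ₂ : ℝ → ℝ × ℝ)
    (hγ₁ : IsSolution (fun p => -p.2 + p.1 * F p) (fun p => p.1 + p.2 * F p) γ₁)
    (hγ₂ : IsSolution (fun p => -p.2 + p.1 * F p) (fun p => p.1 + p.2 * F p) γ₂)
    (hp₁ : IsPeriodicSol γ₁) (hp₂ : IsPeriodicSol γ₂)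
    (hn₁ : IsNonconstant γ₁) (hn₂ : IsNonconstant γ₂) :
    Set.range γ₁ = Set.range γ₂ := by
  have hFc : Continuous F := by rw [hF]; fun_prop
  obtain ⟨σ1, n1, hn1, hσ1pos, hσ1per, hσ1d, hr1⟩ := polar_rep F hFc γ₁ hγ₁ hp₁ hn₁
  obtain ⟨σ2, n2, hn2, hσ2pos, hσ2per, hσ2d, hr2⟩ := polar_rep F hFc γ₂ hγ₂ hp₂ hn₂
  have hc1 : Continuous σ1 := by
    refine continuous_iff_continuousAt.2 fun t => (hσ1d t).differentiableAt.continuousAt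
  have hc2 : Continuous σ2 := by
    refine continuous_iff_continuousAt.2 fun t => (hσ2d t).differentiableAt.continuousAt
  have hd1 : ∀ t, HasDerivAt σ1 (ff a b c d e h t (σ1 t)) t := by
    intro t
    convert hσ1d t using 1
    rw [hF, ff]
    simp only
    ring
  have hd2 : ∀ t, HasDerivAt σ2 (ff a b c d e h t (σ2 t)) t := by
    intro t
    convert hσ2d t using 1
    rw [hF, ff]
    simp only
    ring
  -- common period
  set L : ℝ := 2 * Real.pi * ((n1 * n2 : ℕ) : ℝ) with hLdef
  have hL : 0 < L := by
    have := Real.pi_pos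
    have hn12 : 0 < (n1 * n2 : ℕ) := Nat.mul_pos hn1 hn2
    have : (0:ℝ) < ((n1 * n2 : ℕ) : ℝ) := by exact_mod_cast hn12
    positivity
  have hper1 : Function.Periodic σ1 L := by
    have := hσ1per.nat_mul n2
    have heq : (n2 : ℝ) * (2 * Real.pi * (n1 : ℝ)) = L := by
      simp only [hLdef, Nat.cast_mul]
      ring
    rwa [heq] at this
  have hper2 : Function.Periodic σ2 L := by
    have := hσ2per.nat_mul n1
    have heq : (n1 : ℝ) * (2 * Real.pi * (n2 : ℝ)) = L := by
      simp only [hLdef, Nat.cast_mul]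
      ring
    rwa [heq] at this
  -- dichotomy via integrating factor on the difference
  set G : ℝ → ℝ := fun t =>
    a + (b * Real.cos t + c * Real.sin t) * (σ1 t + σ2 t) +
      (d * (Real.cos t) ^ 2 + e * Real.cos t * Real.sin t + h * (Real.sin t) ^ 2) *
        ((σ1 t) ^ 2 + σ1 t * σ2 t + (σ2 t) ^ 2) with hGdef
  have hGc : Continuous G := by fun_prop
  have hDd : ∀ t, HasDerivAt (fun t => σ2 t - σ1 t) (G t * (σ2 t - σ1 t)) t := by
    intro t
    have := (hd2 t).sub (hd1 t)
    refine this.congr_deriv (Eq.symm ?_)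
    simp only [hGdef, ff]
    ring
  have hform := lin_sol (fun t => σ2 t - σ1 t) G hGc hDd
  rcases lt_trichotomy (σ2 0 - σ1 0) 0 with h0 | h0 | h0
  · exfalso
    have hlt : ∀ t, σ2 t < σ1 t := by
      intro t
      have := hform t
      have hexp := Real.exp_pos (∫ s in (0:ℝ)..t, G s)
      nlinarith [this, mul_neg_of_neg_of_pos h0 hexp]
    exact no_ordered a b c d e h hdh σ2 σ1 L hL hper2 hper1 hd2 hd1 hσ2pos hlt
  · have hσeq : σ1 = σ2 := by
      funext t
      have := hform t
      rw [h0, zero_mul] at this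
      linarith
    rw [hr1, hr2, hσeq]
  · exfalso
    have hlt : ∀ t, σ1 t < σ2 t := by
      intro t
      have := hform t
      have hexp := Real.exp_pos (∫ s in (0:ℝ)..t, G s)
      nlinarith [this, mul_pos h0 hexp]
    exact no_ordered a b c d e h hdh σ1 σ2 L hL hper1 hper2 hd1 hd2 hσ1pos hlt
end

section
/- Let F : ℝ → ℝ be a C² function. Set P(x,y) = y − F(x), Q(x,y) = −x, and V(x,y) = x² + y² + F(x)² − 2·y·F(x) + x·(y − F(x))·F'(x). Then, identically on ℝ², V_x·P + V_y·Q − (P_x + Q_y)·V = (y − F(x))²·x·F''(x). -/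
open MeasureTheory

/-- The Dulac identity for the Liénard system via the curvature function:
with `V = x² + y² + F² − 2yF + x(y − F)F'`, `P = y − F(x)`, `Q = −x`, one has
`V_x P + V_y Q − (P_x + Q_y) V = (y − F)² x F''`. -/
theorem stmt_14 (F : ℝ → ℝ) (hF : ContDiff ℝ 2 F)
    (P Q V : ℝ × ℝ → ℝ)
    (hP : P = fun p => p.2 - F p.1)
    (hQ : Q = fun p => -p.1)
    (hV : V = fun p => p.1 ^ 2 + p.2 ^ 2 + F p.1 ^ 2 - 2 * p.2 * F p.1
      + p.1 * (p.2 - F p.1) * deriv F p.1) :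
    ∀ p : ℝ × ℝ,
      pdx V p * P p + pdy V p * Q p - (pdx P p + pdy Q p) * V p =
        (p.2 - F p.1) ^ 2 * p.1 * deriv (deriv F) p.1 := by
  rintro ⟨x, y⟩
  have hFdiff : Differentiable ℝ F := hF.differentiable two_ne_zero
  have hF1 : ContDiff ℝ 1 (deriv F) := by
    exact (contDiff_succ_iff_deriv.mp (show ContDiff ℝ (1 + 1) F by norm_num; exact hF)).2.2
  have hF'diff : Differentiable ℝ (deriv F) := hF1.differentiable one_ne_zero
  have hfx : HasDerivAt F (deriv F x) x := (hFdiff x).hasDerivAt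
  have hgx : HasDerivAt (deriv F) (deriv (deriv F) x) x := (hF'diff x).hasDerivAt
  -- ∂V/∂x
  have h1 : HasDerivAt (fun u : ℝ => u ^ 2) (2 * x) x := by
    simpa using hasDerivAt_pow 2 x
  have h3 : HasDerivAt (fun u : ℝ => F u ^ 2) (2 * F x * deriv F x) x := by
    simpa using hfx.fun_pow 2
  have h4 : HasDerivAt (fun u : ℝ => 2 * y * F u) (2 * y * deriv F x) x := hfx.const_mul _
  have h5 : HasDerivAt (fun u : ℝ => u * (y - F u))
      (1 * (y - F x) + x * (0 - deriv F x)) x :=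
    (hasDerivAt_id x).mul ((hasDerivAt_const x y).sub hfx)
  have h6 : HasDerivAt (fun u : ℝ => u * (y - F u) * deriv F u)
      ((1 * (y - F x) + x * (0 - deriv F x)) * deriv F x
        + x * (y - F x) * deriv (deriv F) x) x := h5.mul hgx
  have hVx : HasDerivAt
      (fun u : ℝ => u ^ 2 + y ^ 2 + F u ^ 2 - 2 * y * F u + u * (y - F u) * deriv F u)
      (2 * x + 0 + 2 * F x * deriv F x - 2 * y * deriv F x
        + ((1 * (y - F x) + x * (0 - deriv F x)) * deriv F x
          + x * (y - F x) * deriv (deriv F) x)) x :=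
    (((h1.add (hasDerivAt_const x (y ^ 2))).add h3).sub h4).add h6
  -- ∂V/∂y
  have k1 : HasDerivAt (fun v : ℝ => v ^ 2) (2 * y) y := by
    simpa using hasDerivAt_pow 2 y
  have k4 : HasDerivAt (fun v : ℝ => 2 * v * F x) (2 * F x) y := by
    have e : (fun v : ℝ => 2 * v * F x) = fun v : ℝ => v * (2 * F x) := by
      funext v; ring
    rw [e]
    simpa using (hasDerivAt_id y).mul_const (2 * F x)
  have k6 : HasDerivAt (fun v : ℝ => x * (v - F x) * deriv F x) (x * deriv F x) y := by
    have e : (fun v : ℝ => x * (v - F x) * deriv F x) = fun v : ℝ => (v - F x) * (x * deriv F x) := by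
      funext v; ring
    rw [e]
    simpa using ((hasDerivAt_id y).sub_const (F x)).mul_const (x * deriv F x)
  have hVy : HasDerivAt
      (fun v : ℝ => x ^ 2 + v ^ 2 + F x ^ 2 - 2 * v * F x + x * (v - F x) * deriv F x)
      (0 + 2 * y + 0 - 2 * F x + x * deriv F x) y :=
    ((((hasDerivAt_const y (x ^ 2)).add k1).add (hasDerivAt_const y (F x ^ 2))).sub k4).add k6
  -- ∂P/∂x
  have hPx : HasDerivAt (fun u : ℝ => y - F u) (0 - deriv F x) x :=
    (hasDerivAt_const x y).sub hfx
  have epdxV : pdx V (x, y) = 2 * x + 0 + 2 * F x * deriv F x - 2 * y * deriv F x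
      + ((1 * (y - F x) + x * (0 - deriv F x)) * deriv F x
        + x * (y - F x) * deriv (deriv F) x) := by
    simp only [pdx, hV]
    exact hVx.deriv
  have epdyV : pdy V (x, y) = 0 + 2 * y + 0 - 2 * F x + x * deriv F x := by
    simp only [pdy, hV]
    exact hVy.deriv
  have epdxP : pdx P (x, y) = 0 - deriv F x := by
    simp only [pdx, hP]
    exact hPx.deriv
  have epdyQ : pdy Q (x, y) = 0 := by
    simp only [pdy, hQ]
    exact (hasDerivAt_const y (-x)).deriv
  rw [epdxV, epdyV, epdxP, epdyQ, hP, hQ, hV]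
  ring
end

section
/- Let m ≥ 2 be an integer. There exists λ₀ > 0 such that for every real λ with 0 < |λ| < λ₀, the system ẋ = y − λ·|y|^m·(x³ − x), ẏ = −x has at least one nonconstant periodic solution. -/
open MeasureTheory

namespace Vil

open Real Set intervalIntegral

noncomputable def c2 (m : ℕ) : ℝ := ∫ ψ in (0:ℝ)..(2*π), |Real.sin ψ| ^ m * Real.cos ψ ^ 2
noncomputable def c4 (m : ℕ) : ℝ := ∫ ψ in (0:ℝ)..(2*π), |Real.sin ψ| ^ m * Real.cos ψ ^ 4
noncomputable def RR (m : ℕ) : ℝ := Real.sqrt (c2 m / c4 m + 1)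
noncomputable def aa (m : ℕ) (ψ r : ℝ) : ℝ :=
  |Real.sin ψ| ^ m * (r ^ (m+3) * Real.cos ψ ^ 4 - r ^ (m+1) * Real.cos ψ ^ 2)
noncomputable def bb (m : ℕ) (ψ r : ℝ) : ℝ :=
  -(Real.sin ψ * Real.cos ψ) * |Real.sin ψ| ^ m * (r ^ (m+2) * Real.cos ψ ^ 2 - r ^ m)
noncomputable def cl (m : ℕ) (r : ℝ) : ℝ := max (1/4) (min r (RR m + 1))
noncomputable def CA (m : ℕ) : ℝ := 2 * (RR m + 1) ^ (m+3)
noncomputable def CB (m : ℕ) : ℝ := 2 * (RR m + 1) ^ (m+2)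
noncomputable def LA (m : ℕ) : ℝ := 2 * (m+3) * (RR m + 1) ^ (m+2)
noncomputable def LB (m : ℕ) : ℝ := 2 * (m+2) * (RR m + 1) ^ (m+1)
noncomputable def LG (m : ℕ) : ℝ := 8 * LA m + 8 * CA m * LB m
noncomputable def KK (m : ℕ) : ℝ := 8*π*(LA m)*(CA m) + 2*(CA m)*(CB m)
noncomputable def eps (m : ℕ) : ℝ := (3/4) * (1/2)^(m+1) * c4 m
noncomputable def lam0 (m : ℕ) : ℝ :=
  min 1 (min (1/(2*CB m)) (min (1/(16*π*CA m)) (eps m / (2*π*KK m + 1))))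
noncomputable def gg (m : ℕ) (lam ψ r : ℝ) : ℝ :=
  -(lam * aa m ψ (cl m r)) / (1 - lam * bb m ψ (cl m r))

lemma cont_integrand2 (m : ℕ) : Continuous (fun ψ => |Real.sin ψ| ^ m * Real.cos ψ ^ 2) := by
  fun_prop

lemma cont_integrand4 (m : ℕ) : Continuous (fun ψ => |Real.sin ψ| ^ m * Real.cos ψ ^ 4) := by
  fun_prop

lemma c4_pos (m : ℕ) : 0 < c4 m := by
  have h1 : (0:ℝ) < π := Real.pi_pos
  have key : ∀ a b : ℝ, a ≤ b → b ≤ 2*π →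
      (0:ℝ) ≤ ∫ ψ in a..b, |Real.sin ψ| ^ m * Real.cos ψ ^ 4 := by
    intro a b hab _
    apply intervalIntegral.integral_nonneg hab
    intro u _
    positivity
  have i1 : IntervalIntegrable (fun ψ => |Real.sin ψ| ^ m * Real.cos ψ ^ 4) volume 0 (π/6) :=
    (cont_integrand4 m).intervalIntegrable _ _
  have i2 : IntervalIntegrable (fun ψ => |Real.sin ψ| ^ m * Real.cos ψ ^ 4) volume (π/6) (π/3) :=
    (cont_integrand4 m).intervalIntegrable _ _
  have i3 : IntervalIntegrable (fun ψ => |Real.sin ψ| ^ m * Real.cos ψ ^ 4) volume (π/3) (2*π) :=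
    (cont_integrand4 m).intervalIntegrable _ _
  have e1 := intervalIntegral.integral_add_adjacent_intervals i2 i3
  have e2 := intervalIntegral.integral_add_adjacent_intervals i1 (i2.trans i3)
  have hc4 : c4 m = ∫ ψ in (0:ℝ)..(2*π), |Real.sin ψ| ^ m * Real.cos ψ ^ 4 := rfl
  have hmid : (0:ℝ) < ∫ ψ in (π/6)..(π/3), |Real.sin ψ| ^ m * Real.cos ψ ^ 4 := by
    have hlt : π/6 < π/3 := by linarith
    apply intervalIntegral.intervalIntegral_pos_of_pos_on
      ((cont_integrand4 m).intervalIntegrable _ _)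
    · intro x hx
      have hx1 : 0 < Real.sin x := by
        apply Real.sin_pos_of_pos_of_lt_pi (by linarith [hx.1])
        nlinarith [hx.2]
      have hx2 : 0 < Real.cos x := by
        apply Real.cos_pos_of_mem_Ioo
        constructor <;> nlinarith [hx.1, hx.2]
      positivity
    · exact hlt
  have h06 := key 0 (π/6) (by linarith) (by linarith)
  have h32 := key (π/3) (2*π) (by linarith) le_rfl
  rw [hc4, ← e2, ← e1]
  linarith
lemma c4_le_c2 (m : ℕ) : c4 m ≤ c2 m := by
  have h1 : (0:ℝ) ≤ 2*π := by positivity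
  apply intervalIntegral.integral_mono_on h1
    ((cont_integrand4 m).intervalIntegrable _ _) ((cont_integrand2 m).intervalIntegrable _ _)
  intro x _
  have h2 : Real.cos x ^ 4 ≤ Real.cos x ^ 2 := by
    nlinarith [Real.cos_sq_le_one x, sq_nonneg (Real.cos x)]
  have h3 : (0:ℝ) ≤ |Real.sin x| ^ m := by positivity
  nlinarith

lemma c2_pos (m : ℕ) : 0 < c2 m := lt_of_lt_of_le (c4_pos m) (c4_le_c2 m)

lemma RR_sq (m : ℕ) : RR m ^ 2 = c2 m / c4 m + 1 := by
  have h2 := (c2_pos m).le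
  have h4 := c4_pos m
  rw [RR, Real.sq_sqrt]
  positivity

lemma one_le_RR (m : ℕ) : 1 ≤ RR m := by
  have h2 := (c2_pos m).le
  have h4 := c4_pos m
  have harg : (0:ℝ) ≤ c2 m / c4 m + 1 := by positivity
  have hs := Real.sq_sqrt harg
  have hnn := Real.sqrt_nonneg (c2 m / c4 m + 1)
  have hdiv : 0 ≤ c2 m / c4 m := by positivity
  rw [RR]
  nlinarith

lemma RR_pos (m : ℕ) : 0 < RR m := lt_of_lt_of_le one_pos (one_le_RR m)

lemma one_le_M (m : ℕ) : 1 ≤ RR m + 1 := by linarith [one_le_RR m]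

lemma CA_pos (m : ℕ) : 0 < CA m := by
  have := one_le_M m; rw [CA]; positivity

lemma CB_pos (m : ℕ) : 0 < CB m := by
  have := one_le_M m; rw [CB]; positivity

lemma LA_pos (m : ℕ) : 0 < LA m := by
  have := one_le_M m; rw [LA]; positivity

lemma LB_pos (m : ℕ) : 0 < LB m := by
  have := one_le_M m; rw [LB]; positivity

lemma LG_pos (m : ℕ) : 0 < LG m := by
  have := LA_pos m; have := LB_pos m; have := CA_pos m; rw [LG]; positivity

lemma KK_pos (m : ℕ) : 0 < KK m := by
  have := LA_pos m; have := LB_pos m; have := CA_pos m; have := CB_pos m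
  have := Real.pi_pos
  rw [KK]; positivity

lemma eps_pos (m : ℕ) : 0 < eps m := by
  have := c4_pos m; rw [eps]; positivity

lemma lam0_pos (m : ℕ) : 0 < lam0 m := by
  have := CA_pos m; have := CB_pos m; have := KK_pos m; have := eps_pos m
  have := Real.pi_pos
  rw [lam0]
  refine lt_min one_pos (lt_min (by positivity) (lt_min (by positivity) (by positivity)))

/-- elementary: `|x^k - y^k| ≤ k M^(k-1) |x - y|` for `|x|,|y| ≤ M`. -/
lemma abs_pow_sub_pow_le (k : ℕ) {M x y : ℝ} (hx : |x| ≤ M) (hy : |y| ≤ M) :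
    |x ^ k - y ^ k| ≤ k * M ^ (k-1) * |x - y| := by
  have hM : 0 ≤ M := le_trans (abs_nonneg x) hx
  induction k with
  | zero => simp
  | succ n ih =>
    have key : x ^ (n+1) - y ^ (n+1) = x ^ n * (x - y) + y * (x ^ n - y ^ n) := by ring
    rw [key]
    have h1 : |x ^ n * (x - y) + y * (x ^ n - y ^ n)| ≤
        |x| ^ n * |x - y| + |y| * |x ^ n - y ^ n| := by
      calc _ ≤ |x ^ n * (x - y)| + |y * (x ^ n - y ^ n)| := abs_add_le _ _
        _ = |x| ^ n * |x - y| + |y| * |x ^ n - y ^ n| := by rw [abs_mul, abs_mul, abs_pow]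
    have h2 : |x| ^ n ≤ M ^ n := pow_le_pow_left₀ (abs_nonneg x) hx n
    have h3 : |y| * |x ^ n - y ^ n| ≤ M * (n * M ^ (n-1) * |x - y|) := by
      apply mul_le_mul hy ih (abs_nonneg _) hM
    have h4 : M * (n * M ^ (n-1) * |x - y|) ≤ n * M ^ n * |x - y| := by
      rcases Nat.eq_zero_or_pos n with h | h
      · subst h; simp
      · have heq : M ^ (n-1) * M = M ^ n := by
          rw [← pow_succ]; congr 1; omega
        refine le_of_eq ?_
        calc M * (n * M ^ (n-1) * |x - y|) = (n:ℝ) * (M ^ (n-1) * M) * |x - y| := by ring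
          _ = n * M ^ n * |x - y| := by rw [heq]
    have h5 : |x| ^ n * |x - y| ≤ M ^ n * |x - y| :=
      mul_le_mul_of_nonneg_right h2 (abs_nonneg _)
    simp only [Nat.add_sub_cancel]
    push_cast
    nlinarith

lemma c2_eq (m : ℕ) : c2 m = ∫ ψ in (0:ℝ)..(2*π), |Real.sin ψ| ^ m * Real.cos ψ ^ 2 := rfl
lemma c4_eq (m : ℕ) : c4 m = ∫ ψ in (0:ℝ)..(2*π), |Real.sin ψ| ^ m * Real.cos ψ ^ 4 := rfl

attribute [irreducible] c2 c4 RR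
lemma abs_sin_pow_le_one (m : ℕ) (ψ : ℝ) : |Real.sin ψ| ^ m ≤ 1 :=
  pow_le_one₀ (abs_nonneg _) (Real.abs_sin_le_one ψ)

lemma mem_ann_nonneg {m : ℕ} {u : ℝ} (hu : u ∈ Icc (1/4:ℝ) (RR m + 1)) :
    0 ≤ u ∧ u ≤ RR m + 1 ∧ |u| ≤ RR m + 1 := by
  obtain ⟨h1, h2⟩ := hu
  exact ⟨by linarith, h2, by rw [abs_of_nonneg (by linarith)]; exact h2⟩

lemma aa_bound (m : ℕ) {u : ℝ} (hu : u ∈ Icc (1/4:ℝ) (RR m + 1)) (ψ : ℝ) :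
    |aa m ψ u| ≤ CA m := by
  obtain ⟨hu0, huM, -⟩ := mem_ann_nonneg hu
  have hM := one_le_M m
  have p1 : u ^ (m+3) ≤ (RR m + 1) ^ (m+3) := pow_le_pow_left₀ hu0 huM _
  have p2 : u ^ (m+1) ≤ (RR m + 1) ^ (m+1) := pow_le_pow_left₀ hu0 huM _
  have p3 : (RR m + 1) ^ (m+1) ≤ (RR m + 1) ^ (m+3) := pow_le_pow_right₀ hM (by omega)
  have hc2 : Real.cos ψ ^ 2 ≤ 1 := by nlinarith [Real.cos_sq_le_one ψ]
  have hc4 : Real.cos ψ ^ 4 ≤ 1 := by nlinarith [Real.cos_sq_le_one ψ, sq_nonneg (Real.cos ψ)]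
  have hc2n : 0 ≤ Real.cos ψ ^ 2 := sq_nonneg _
  have hc4n : 0 ≤ Real.cos ψ ^ 4 := by positivity
  have hs := abs_sin_pow_le_one m ψ
  have hsn : (0:ℝ) ≤ |Real.sin ψ| ^ m := by positivity
  have hu1 : (0:ℝ) ≤ u ^ (m+3) := by positivity
  have hu2 : (0:ℝ) ≤ u ^ (m+1) := by positivity
  have key : |u ^ (m+3) * Real.cos ψ ^ 4 - u ^ (m+1) * Real.cos ψ ^ 2| ≤
      u ^ (m+3) + u ^ (m+1) := by
    rw [abs_le]
    constructor <;> nlinarith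
  rw [aa, abs_mul, abs_pow, abs_abs]
  have : |Real.sin ψ| ^ m * |u ^ (m+3) * Real.cos ψ ^ 4 - u ^ (m+1) * Real.cos ψ ^ 2| ≤
      1 * (u ^ (m+3) + u ^ (m+1)) := by
    apply mul_le_mul hs key (abs_nonneg _) zero_le_one
  rw [CA]
  nlinarith

lemma bb_bound (m : ℕ) {u : ℝ} (hu : u ∈ Icc (1/4:ℝ) (RR m + 1)) (ψ : ℝ) :
    |bb m ψ u| ≤ CB m := by
  obtain ⟨hu0, huM, -⟩ := mem_ann_nonneg hu
  have hM := one_le_M m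
  have p1 : u ^ (m+2) ≤ (RR m + 1) ^ (m+2) := pow_le_pow_left₀ hu0 huM _
  have p2 : u ^ m ≤ (RR m + 1) ^ m := pow_le_pow_left₀ hu0 huM _
  have p3 : (RR m + 1) ^ m ≤ (RR m + 1) ^ (m+2) := pow_le_pow_right₀ hM (by omega)
  have hc2 : Real.cos ψ ^ 2 ≤ 1 := by nlinarith [Real.cos_sq_le_one ψ]
  have hc2n : 0 ≤ Real.cos ψ ^ 2 := sq_nonneg _
  have hs := abs_sin_pow_le_one m ψ
  have hsc : |(-(Real.sin ψ * Real.cos ψ))| ≤ 1 := by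
    rw [abs_neg, abs_mul]
    have := Real.abs_sin_le_one ψ
    have := Real.abs_cos_le_one ψ
    nlinarith [abs_nonneg (Real.sin ψ), abs_nonneg (Real.cos ψ)]
  have hu1 : (0:ℝ) ≤ u ^ (m+2) := by positivity
  have hu2 : (0:ℝ) ≤ u ^ m := by positivity
  have key : |u ^ (m+2) * Real.cos ψ ^ 2 - u ^ m| ≤ u ^ (m+2) + u ^ m := by
    rw [abs_le]; constructor <;> nlinarith
  rw [bb, abs_mul, abs_mul, abs_pow, abs_abs]
  have hsn : (0:ℝ) ≤ |Real.sin ψ| ^ m := by positivity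
  have h1 : |(-(Real.sin ψ * Real.cos ψ))| * |Real.sin ψ| ^ m ≤ 1 := by nlinarith [abs_nonneg (-(Real.sin ψ * Real.cos ψ))]
  have h2 : |(-(Real.sin ψ * Real.cos ψ))| * |Real.sin ψ| ^ m *
      |u ^ (m+2) * Real.cos ψ ^ 2 - u ^ m| ≤ 1 * (u ^ (m+2) + u ^ m) := by
    apply mul_le_mul h1 key (abs_nonneg _) zero_le_one
  rw [CB]
  nlinarith

lemma aa_lip (m : ℕ) {u v : ℝ} (hu : u ∈ Icc (1/4:ℝ) (RR m + 1))
    (hv : v ∈ Icc (1/4:ℝ) (RR m + 1)) (ψ : ℝ) :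
    |aa m ψ u - aa m ψ v| ≤ LA m * |u - v| := by
  obtain ⟨hu0, huM, huA⟩ := mem_ann_nonneg hu
  obtain ⟨hv0, hvM, hvA⟩ := mem_ann_nonneg hv
  have hM := one_le_M m
  have hd1 := abs_pow_sub_pow_le (m+3) huA hvA
  have hd2 := abs_pow_sub_pow_le (m+1) huA hvA
  simp only [show m+3-1 = m+2 by omega, show m+1-1 = m by omega] at hd1 hd2
  have p3 : (RR m + 1) ^ m ≤ (RR m + 1) ^ (m+2) := pow_le_pow_right₀ hM (by omega)
  have hc2 : Real.cos ψ ^ 2 ≤ 1 := by nlinarith [Real.cos_sq_le_one ψ]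
  have hc4 : Real.cos ψ ^ 4 ≤ 1 := by nlinarith [Real.cos_sq_le_one ψ, sq_nonneg (Real.cos ψ)]
  have hc2n : 0 ≤ Real.cos ψ ^ 2 := sq_nonneg _
  have hc4n : 0 ≤ Real.cos ψ ^ 4 := by positivity
  have hs := abs_sin_pow_le_one m ψ
  have hsn : (0:ℝ) ≤ |Real.sin ψ| ^ m := by positivity
  have key : aa m ψ u - aa m ψ v =
      |Real.sin ψ| ^ m * (Real.cos ψ ^ 4 * (u ^ (m+3) - v ^ (m+3))
        - Real.cos ψ ^ 2 * (u ^ (m+1) - v ^ (m+1))) := by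
    rw [aa, aa]; ring
  rw [key, abs_mul, abs_pow, abs_abs]
  have t1 : |Real.cos ψ ^ 4 * (u ^ (m+3) - v ^ (m+3))
      - Real.cos ψ ^ 2 * (u ^ (m+1) - v ^ (m+1))|
      ≤ |u ^ (m+3) - v ^ (m+3)| + |u ^ (m+1) - v ^ (m+1)| := by
    have := abs_sub (Real.cos ψ ^ 4 * (u ^ (m+3) - v ^ (m+3)))
      (Real.cos ψ ^ 2 * (u ^ (m+1) - v ^ (m+1)))
    rw [abs_mul, abs_mul] at this
    have e4 : |Real.cos ψ ^ 4| = Real.cos ψ ^ 4 := abs_of_nonneg hc4n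
    have e2 : |Real.cos ψ ^ 2| = Real.cos ψ ^ 2 := abs_of_nonneg hc2n
    rw [e4, e2] at this
    nlinarith [abs_nonneg (u ^ (m+3) - v ^ (m+3)), abs_nonneg (u ^ (m+1) - v ^ (m+1))]
  have t2 : |u ^ (m+3) - v ^ (m+3)| + |u ^ (m+1) - v ^ (m+1)| ≤ LA m * |u - v| := by
    have p4 : (RR m + 1) ^ m ≤ (RR m + 1) ^ (m+2) := p3
    rw [LA]
    have e1 : ((m:ℝ)+3) * (RR m + 1) ^ (m+2) * |u-v| + ((m:ℝ)+1) * (RR m + 1) ^ m * |u-v|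
        ≤ 2 * ((m:ℝ)+3) * (RR m + 1) ^ (m+2) * |u-v| := by
      have h1 : ((m:ℝ)+1) * (RR m + 1) ^ m ≤ ((m:ℝ)+3) * (RR m + 1) ^ (m+2) := by
        have : (0:ℝ) ≤ (m:ℝ) + 1 := by positivity
        nlinarith [pow_nonneg (by linarith : (0:ℝ) ≤ RR m + 1) m]
      nlinarith [abs_nonneg (u - v)]
    push_cast at hd1 hd2 ⊢
    nlinarith [abs_nonneg (u-v)]
  calc |Real.sin ψ| ^ m * _ ≤ 1 * (|u ^ (m+3) - v ^ (m+3)| + |u ^ (m+1) - v ^ (m+1)|) :=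
        mul_le_mul hs t1 (abs_nonneg _) zero_le_one
    _ ≤ LA m * |u - v| := by rw [one_mul]; exact t2

lemma bb_lip (m : ℕ) {u v : ℝ} (hu : u ∈ Icc (1/4:ℝ) (RR m + 1))
    (hv : v ∈ Icc (1/4:ℝ) (RR m + 1)) (ψ : ℝ) :
    |bb m ψ u - bb m ψ v| ≤ LB m * |u - v| := by
  obtain ⟨hu0, huM, huA⟩ := mem_ann_nonneg hu
  obtain ⟨hv0, hvM, hvA⟩ := mem_ann_nonneg hv
  have hM := one_le_M m
  have hd1 := abs_pow_sub_pow_le (m+2) huA hvA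
  have hd2 := abs_pow_sub_pow_le m huA hvA
  simp only [show m+2-1 = m+1 by omega] at hd1
  have hc2 : Real.cos ψ ^ 2 ≤ 1 := by nlinarith [Real.cos_sq_le_one ψ]
  have hc2n : 0 ≤ Real.cos ψ ^ 2 := sq_nonneg _
  have hs := abs_sin_pow_le_one m ψ
  have hsn : (0:ℝ) ≤ |Real.sin ψ| ^ m := by positivity
  have hsc : |(-(Real.sin ψ * Real.cos ψ))| ≤ 1 := by
    rw [abs_neg, abs_mul]
    have := Real.abs_sin_le_one ψ
    have := Real.abs_cos_le_one ψ
    nlinarith [abs_nonneg (Real.sin ψ), abs_nonneg (Real.cos ψ)]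
  have key : bb m ψ u - bb m ψ v =
      (-(Real.sin ψ * Real.cos ψ)) * |Real.sin ψ| ^ m *
        (Real.cos ψ ^ 2 * (u ^ (m+2) - v ^ (m+2)) - (u ^ m - v ^ m)) := by
    rw [bb, bb]; ring
  rw [key, abs_mul, abs_mul, abs_pow, abs_abs]
  have t1 : |Real.cos ψ ^ 2 * (u ^ (m+2) - v ^ (m+2)) - (u ^ m - v ^ m)|
      ≤ |u ^ (m+2) - v ^ (m+2)| + |u ^ m - v ^ m| := by
    have := abs_sub (Real.cos ψ ^ 2 * (u ^ (m+2) - v ^ (m+2))) (u ^ m - v ^ m)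
    rw [abs_mul, abs_of_nonneg hc2n] at this
    nlinarith [abs_nonneg (u ^ (m+2) - v ^ (m+2)), abs_nonneg (u ^ m - v ^ m)]
  have hmm : (m:ℝ) * (RR m + 1) ^ (m-1) * |u - v| ≤ ((m:ℝ)+2) * (RR m + 1) ^ (m+1) * |u-v| := by
    have hp : (RR m + 1) ^ (m-1) ≤ (RR m + 1) ^ (m+1) := pow_le_pow_right₀ hM (by omega)
    have h0 : (0:ℝ) ≤ (m:ℝ) := by positivity
    have hmain := mul_le_mul_of_nonneg_right (mul_le_mul_of_nonneg_left hp h0) (abs_nonneg (u-v))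
    have h2 : (0:ℝ) ≤ 2 * (RR m + 1) ^ (m+1) * |u - v| := by positivity
    nlinarith [hmain, h2]
  have t2 : |u ^ (m+2) - v ^ (m+2)| + |u ^ m - v ^ m| ≤ LB m * |u - v| := by
    rw [LB]
    push_cast at hd1 hd2 ⊢
    nlinarith [abs_nonneg (u-v)]
  have h1 : |(-(Real.sin ψ * Real.cos ψ))| * |Real.sin ψ| ^ m ≤ 1 := by
    nlinarith [abs_nonneg (-(Real.sin ψ * Real.cos ψ))]
  calc |(-(Real.sin ψ * Real.cos ψ))| * |Real.sin ψ| ^ m * _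
      ≤ 1 * (|u ^ (m+2) - v ^ (m+2)| + |u ^ m - v ^ m|) :=
        mul_le_mul h1 t1 (abs_nonneg _) zero_le_one
    _ ≤ LB m * |u - v| := by rw [one_mul]; exact t2

lemma cl_mem (m : ℕ) (r : ℝ) : cl m r ∈ Icc (1/4:ℝ) (RR m + 1) := by
  have hM := one_le_M m
  constructor
  · exact le_max_left _ _
  · rw [cl]
    apply max_le (by linarith) (min_le_right _ _)

lemma cl_eq (m : ℕ) {r : ℝ} (hr : r ∈ Icc (1/4:ℝ) (RR m + 1)) : cl m r = r := by
  rw [cl, min_eq_left hr.2, max_eq_right hr.1]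

lemma cl_lip (m : ℕ) (r s : ℝ) : |cl m r - cl m s| ≤ |r - s| := by
  rw [cl, cl]
  calc |max (1/4) (min r (RR m + 1)) - max (1/4) (min s (RR m + 1))|
      = |max (min r (RR m + 1)) (1/4) - max (min s (RR m + 1)) (1/4)| := by
        rw [max_comm (1/4) _, max_comm (1/4) _]
    _ ≤ |min r (RR m + 1) - min s (RR m + 1)| := abs_max_sub_max_le_abs _ _ _
    _ ≤ |r - s| := by
        have := abs_min_sub_min_le_max r (RR m + 1) s (RR m + 1)
        simpa using this.trans (by simp [abs_nonneg])
  
lemma cl_cont (m : ℕ) : Continuous (cl m) := by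
  apply Continuous.max continuous_const
  exact Continuous.min continuous_id continuous_const
section GG

variable {m : ℕ} {lam : ℝ}

lemma denom_bounds (hlam0 : 0 ≤ lam) (hlamCB : lam * CB m ≤ 1/2)
    {u : ℝ} (hu : u ∈ Icc (1/4:ℝ) (RR m + 1)) (ψ : ℝ) :
    1/2 ≤ 1 - lam * bb m ψ u ∧ 1 - lam * bb m ψ u ≤ 3/2 := by
  have h1 : |lam * bb m ψ u| ≤ 1/2 := by
    rw [abs_mul, abs_of_nonneg hlam0]
    calc lam * |bb m ψ u| ≤ lam * CB m :=
          mul_le_mul_of_nonneg_left (bb_bound m hu ψ) hlam0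
      _ ≤ 1/2 := hlamCB
  rw [abs_le] at h1
  constructor <;> linarith [h1.1, h1.2]

lemma denom_ne (hlam0 : 0 ≤ lam) (hlamCB : lam * CB m ≤ 1/2)
    {u : ℝ} (hu : u ∈ Icc (1/4:ℝ) (RR m + 1)) (ψ : ℝ) :
    1 - lam * bb m ψ u ≠ 0 := by
  have := (denom_bounds hlam0 hlamCB hu ψ).1
  linarith

lemma gg_bound (hlam0 : 0 ≤ lam) (hlamCB : lam * CB m ≤ 1/2) (ψ r : ℝ) :
    |gg m lam ψ r| ≤ 2 * (lam * CA m) := by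
  have hd := denom_bounds hlam0 hlamCB (cl_mem m r) ψ
  have ha := aa_bound m (cl_mem m r) ψ
  rw [gg, abs_div, abs_neg, abs_mul, abs_of_nonneg hlam0]
  rw [abs_of_nonneg (by linarith [hd.1] : (0:ℝ) ≤ 1 - lam * bb m ψ (cl m r))]
  rw [div_le_iff₀ (by linarith [hd.1])]
  have h1 : lam * |aa m ψ (cl m r)| ≤ lam * CA m :=
    mul_le_mul_of_nonneg_left ha hlam0
  have h2 : (0:ℝ) ≤ lam * CA m := mul_nonneg hlam0 (CA_pos m).le
  nlinarith [hd.1, hd.2]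

lemma LA_CB_aux (m : ℕ) : 0 ≤ (3/2) * LA m + CA m * LB m := by
  nlinarith [LA_pos m, CA_pos m, LB_pos m]

lemma step2_aux (m : ℕ) {X : ℝ} (hX : 0 ≤ X) :
    ((3/2) * LA m + CA m * LB m) * X ≤ (LG m * X) * (1/4) := by
  rw [LG]
  nlinarith [mul_nonneg (LA_pos m).le hX,
    mul_nonneg (mul_nonneg (CA_pos m).le (LB_pos m).le) hX]

lemma gg_lipschitz (hlam0 : 0 ≤ lam) (hlamCB : lam * CB m ≤ 1/2) (hlam1 : lam ≤ 1) (ψ : ℝ) :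
    LipschitzWith (Real.toNNReal (LG m)) (gg m lam ψ) := by
  apply LipschitzWith.of_dist_le_mul
  intro r r'
  rw [Real.dist_eq, Real.dist_eq, Real.coe_toNNReal _ (LG_pos m).le]
  set u := cl m r with hu_def
  set v := cl m r' with hv_def
  have hu := cl_mem m r
  have hv := cl_mem m r'
  set A1 := aa m ψ u with hA1
  set A2 := aa m ψ v with hA2
  set d1 := 1 - lam * bb m ψ u with hd1
  set d2 := 1 - lam * bb m ψ v with hd2
  have hb1 := denom_bounds hlam0 hlamCB hu ψ
  have hb2 := denom_bounds hlam0 hlamCB hv ψ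
  have hne1 : d1 ≠ 0 := by rw [hd1]; exact denom_ne hlam0 hlamCB hu ψ
  have hne2 : d2 ≠ 0 := by rw [hd2]; exact denom_ne hlam0 hlamCB hv ψ
  have key : gg m lam ψ r - gg m lam ψ r' =
      (lam*(A2 - A1)*d1 + lam*A1*(d1 - d2)) / (d1*d2) := by
    rw [gg, gg, ← hu_def, ← hv_def, ← hA1, ← hA2, ← hd1, ← hd2]
    field_simp
    ring
  have hdd : (1:ℝ)/4 ≤ d1 * d2 := by nlinarith [hb1.1, hb2.1]
  have hd1d2 : d1 - d2 = lam * (bb m ψ v - bb m ψ u) := by rw [hd1, hd2]; ring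
  have hnum : |lam*(A2 - A1)*d1 + lam*A1*(d1 - d2)| ≤
      ((3/2) * LA m + CA m * LB m) * |u - v| := by
    have e1 : |lam*(A2 - A1)*d1| ≤ (3/2) * LA m * |u - v| := by
      rw [abs_mul, abs_mul, abs_of_nonneg hlam0]
      have hAA : |A2 - A1| ≤ LA m * |u - v| := by
        rw [hA1, hA2]
        have := aa_lip m hv hu ψ
        rwa [abs_sub_comm v u] at this
      have hd1abs : |d1| ≤ 3/2 := by rw [abs_le]; constructor <;> linarith [hb1.1, hb1.2]
      have h0 : (0:ℝ) ≤ LA m * |u-v| := mul_nonneg (LA_pos m).le (abs_nonneg _)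
      calc lam * |A2 - A1| * |d1| ≤ 1 * (LA m * |u - v|) * (3/2) := by
            apply mul_le_mul (mul_le_mul hlam1 hAA (abs_nonneg _) zero_le_one) hd1abs
              (abs_nonneg _) (by nlinarith)
        _ = (3/2) * LA m * |u - v| := by ring
    have e2 : |lam*A1*(d1 - d2)| ≤ CA m * LB m * |u - v| := by
      rw [abs_mul, abs_mul, abs_of_nonneg hlam0, hd1d2, abs_mul, abs_of_nonneg hlam0]
      have hA1b : |A1| ≤ CA m := aa_bound m hu ψ
      have hbbl : |bb m ψ v - bb m ψ u| ≤ LB m * |u - v| := by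
        have := bb_lip m hv hu ψ
        rwa [abs_sub_comm v u] at this
      have h1 : lam * |A1| ≤ CA m := by nlinarith [(CA_pos m).le, abs_nonneg A1]
      have h2 : lam * |bb m ψ v - bb m ψ u| ≤ LB m * |u - v| := by
        nlinarith [abs_nonneg (bb m ψ v - bb m ψ u), mul_nonneg (LB_pos m).le (abs_nonneg (u-v))]
      calc lam * |A1| * (lam * |bb m ψ v - bb m ψ u|) ≤ CA m * (LB m * |u - v|) := by
            apply mul_le_mul h1 h2 (by positivity) (CA_pos m).le
        _ = CA m * LB m * |u - v| := by ring
    calc |lam*(A2 - A1)*d1 + lam*A1*(d1 - d2)| ≤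
        |lam*(A2 - A1)*d1| + |lam*A1*(d1 - d2)| := abs_add_le _ _
      _ ≤ (3/2) * LA m * |u - v| + CA m * LB m * |u - v| := add_le_add e1 e2
      _ = ((3/2) * LA m + CA m * LB m) * |u - v| := by ring
  have huv : |u - v| ≤ |r - r'| := cl_lip m r r'
  rw [key, abs_div]
  have habs_dd : (1:ℝ)/4 ≤ |d1 * d2| := by
    rw [abs_of_nonneg (by nlinarith [hb1.1, hb2.1] : (0:ℝ) ≤ d1 * d2)]
    exact hdd
  rw [div_le_iff₀ (by linarith : (0:ℝ) < |d1 * d2|)]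
  have step1 : |lam*(A2 - A1)*d1 + lam*A1*(d1 - d2)| ≤
      ((3/2) * LA m + CA m * LB m) * |r - r'| := by
    refine hnum.trans ?_
    exact mul_le_mul_of_nonneg_left huv (LA_CB_aux m)
  have step2 : ((3/2) * LA m + CA m * LB m) * |r - r'| ≤ (LG m * |r - r'|) * (1/4) :=
    step2_aux m (abs_nonneg _)
  calc |lam*(A2 - A1)*d1 + lam*A1*(d1 - d2)| ≤ (LG m * |r - r'|) * (1/4) :=
        step1.trans step2
    _ ≤ LG m * |r - r'| * |d1 * d2| := by
        apply mul_le_mul_of_nonneg_left habs_dd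
        exact mul_nonneg (LG_pos m).le (abs_nonneg _)

lemma aa_cont (m : ℕ) : Continuous (fun p : ℝ × ℝ => aa m p.1 p.2) := by
  unfold aa; fun_prop

lemma bb_cont (m : ℕ) : Continuous (fun p : ℝ × ℝ => bb m p.1 p.2) := by
  unfold bb; fun_prop

lemma gg_cont (hlam0 : 0 ≤ lam) (hlamCB : lam * CB m ≤ 1/2) :
    Continuous (fun p : ℝ × ℝ => gg m lam p.1 p.2) := by
  unfold gg
  apply Continuous.div
  · have : Continuous (fun p : ℝ × ℝ => (p.1, cl m p.2)) :=
      continuous_fst.prodMk ((cl_cont m).comp continuous_snd)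
    have := (aa_cont m).comp this
    fun_prop
  · have hcl : Continuous (fun p : ℝ × ℝ => (p.1, cl m p.2)) :=
      continuous_fst.prodMk ((cl_cont m).comp continuous_snd)
    have := (bb_cont m).comp hcl
    fun_prop
  · intro p
    exact denom_ne hlam0 hlamCB (cl_mem m p.2) p.1

lemma gg_per (ψ r : ℝ) : gg m lam (ψ + 2*π) r = gg m lam ψ r := by
  rw [gg, gg, aa, aa, bb, bb, Real.sin_add_two_pi, Real.cos_add_two_pi]

end GG
section ODE

variable {m : ℕ} {lam : ℝ}

lemma exists_sol_n (hlam0 : 0 ≤ lam) (hlamCB : lam * CB m ≤ 1/2) (hlam1 : lam ≤ 1)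
    (hlamCA : 2 * (lam * CA m) ≤ 1) (r₀ : ℝ) (n : ℕ) :
    ∃ f : ℝ → ℝ, f 0 = r₀ ∧
      ∀ φ ∈ Ioo (-(n:ℝ)-1) ((n:ℝ)+1), HasDerivAt f (gg m lam φ (f φ)) φ := by
  have hpl : IsPicardLindelof (fun t x => gg m lam t x) (tmin := -(n:ℝ)-1) (tmax := (n:ℝ)+1)
      ⟨0, by constructor <;> linarith [Nat.cast_nonneg (α := ℝ) n]⟩ r₀ ((n:NNReal)+1) 0 1
      (Real.toNNReal (LG m)) := by
    constructor
    · exact fun t _ => (gg_lipschitz hlam0 hlamCB hlam1 t).lipschitzOnWith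
    · intro x _
      exact (((gg_cont hlam0 hlamCB).comp (continuous_id.prodMk continuous_const))).continuousOn
    · intro t _ x _
      rw [Real.norm_eq_abs]
      exact (gg_bound hlam0 hlamCB t x).trans hlamCA
    · simp only [NNReal.coe_one, one_mul, NNReal.coe_add, NNReal.coe_natCast, NNReal.coe_zero,
        sub_zero]
      apply max_le <;> linarith [Nat.cast_nonneg (α := ℝ) n]
  obtain ⟨f, hf0, hf⟩ := hpl.exists_eq_forall_mem_Icc_hasDerivWithinAt₀
  refine ⟨f, hf0, fun φ hφ => ?_⟩
  exact (hf φ (Ioo_subset_Icc_self hφ)).hasDerivAt (Icc_mem_nhds hφ.1 hφ.2)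

lemma uniq_Ioo (hlam0 : 0 ≤ lam) (hlamCB : lam * CB m ≤ 1/2) (hlam1 : lam ≤ 1)
    {a b t₀ : ℝ} (ht : t₀ ∈ Ioo a b) {f g : ℝ → ℝ}
    (hf : ∀ φ ∈ Ioo a b, HasDerivAt f (gg m lam φ (f φ)) φ)
    (hg : ∀ φ ∈ Ioo a b, HasDerivAt g (gg m lam φ (g φ)) φ)
    (heq : f t₀ = g t₀) : EqOn f g (Ioo a b) := by
  apply ODE_solution_unique_of_mem_Ioo
    (v := fun t x => gg m lam t x) (s := fun _ => univ)
    (fun t _ => (gg_lipschitz hlam0 hlamCB hlam1 t).lipschitzOnWith) ht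
    (fun φ hφ => ⟨hf φ hφ, mem_univ _⟩) (fun φ hφ => ⟨hg φ hφ, mem_univ _⟩) heq

lemma uniq_global (hlam0 : 0 ≤ lam) (hlamCB : lam * CB m ≤ 1/2) (hlam1 : lam ≤ 1)
    {t₀ : ℝ} {f g : ℝ → ℝ}
    (hf : ∀ φ, HasDerivAt f (gg m lam φ (f φ)) φ)
    (hg : ∀ φ, HasDerivAt g (gg m lam φ (g φ)) φ)
    (heq : f t₀ = g t₀) : f = g := by
  funext φ
  have hmem : ∀ x : ℝ, x ∈ Ioo (-(|t₀| + |φ| + 1)) (|t₀| + |φ| + 1) ∨ True := fun _ => Or.inr trivial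
  have ht : t₀ ∈ Ioo (-(|t₀| + |φ| + 1)) (|t₀| + |φ| + 1) := by
    constructor <;> [nlinarith [abs_nonneg φ, le_abs_self t₀, neg_abs_le t₀];
      nlinarith [abs_nonneg φ, le_abs_self t₀, neg_abs_le t₀]]
  have hφ : φ ∈ Ioo (-(|t₀| + |φ| + 1)) (|t₀| + |φ| + 1) := by
    constructor <;> [nlinarith [abs_nonneg t₀, le_abs_self φ, neg_abs_le φ];
      nlinarith [abs_nonneg t₀, le_abs_self φ, neg_abs_le φ]]
  exact uniq_Ioo hlam0 hlamCB hlam1 ht (fun x _ => hf x) (fun x _ => hg x) heq hφ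

lemma exists_global_sol (hlam0 : 0 ≤ lam) (hlamCB : lam * CB m ≤ 1/2) (hlam1 : lam ≤ 1)
    (hlamCA : 2 * (lam * CA m) ≤ 1) (r₀ : ℝ) :
    ∃ f : ℝ → ℝ, f 0 = r₀ ∧ ∀ φ, HasDerivAt f (gg m lam φ (f φ)) φ := by
  choose sol h0 hderiv using fun n : ℕ => exists_sol_n hlam0 hlamCB hlam1 hlamCA r₀ n
  have agree : ∀ (n k : ℕ) (φ : ℝ), φ ∈ Ioo (-(n:ℝ)-1) ((n:ℝ)+1) →
      φ ∈ Ioo (-(k:ℝ)-1) ((k:ℝ)+1) → sol n φ = sol k φ := by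
    intro n k φ hn hk
    have hmin : φ ∈ Ioo (-((min n k : ℕ):ℝ)-1) (((min n k : ℕ):ℝ)+1) := by
      have h1 : ((min n k : ℕ):ℝ) = min (n:ℝ) (k:ℝ) := by
        rcases le_total n k with h | h
        · rw [min_eq_left h, min_eq_left (by exact_mod_cast h : (n:ℝ) ≤ k)]
        · rw [min_eq_right h, min_eq_right (by exact_mod_cast h : (k:ℝ) ≤ n)]
      constructor
      · rw [h1]
        rcases min_cases (n:ℝ) (k:ℝ) with ⟨he, -⟩ | ⟨he, -⟩ <;> rw [he]
        · exact hn.1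
        · exact hk.1
      · rw [h1]
        rcases min_cases (n:ℝ) (k:ℝ) with ⟨he, -⟩ | ⟨he, -⟩ <;> rw [he]
        · exact hn.2
        · exact hk.2
    have hz : (0:ℝ) ∈ Ioo (-((min n k : ℕ):ℝ)-1) (((min n k : ℕ):ℝ)+1) := by
      constructor <;> [linarith [Nat.cast_nonneg (α := ℝ) (min n k)];
        linarith [Nat.cast_nonneg (α := ℝ) (min n k)]]
    have hlen : ((min n k : ℕ):ℝ) ≤ (n:ℝ) := by exact_mod_cast Nat.cast_le.mpr (min_le_left n k)
    have hlek : ((min n k : ℕ):ℝ) ≤ (k:ℝ) := by exact_mod_cast Nat.cast_le.mpr (min_le_right n k)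
    have hsub_n : Ioo (-((min n k : ℕ):ℝ)-1) (((min n k : ℕ):ℝ)+1) ⊆
        Ioo (-(n:ℝ)-1) ((n:ℝ)+1) := Ioo_subset_Ioo (by linarith) (by linarith)
    have hsub_k : Ioo (-((min n k : ℕ):ℝ)-1) (((min n k : ℕ):ℝ)+1) ⊆
        Ioo (-(k:ℝ)-1) ((k:ℝ)+1) := Ioo_subset_Ioo (by linarith) (by linarith)
    exact uniq_Ioo hlam0 hlamCB hlam1 hz
      (fun x hx => hderiv n x (hsub_n hx)) (fun x hx => hderiv k x (hsub_k hx))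
      ((h0 n).trans (h0 k).symm) hmin
  refine ⟨fun φ => sol ⌈|φ|⌉₊ φ, by simpa using h0 0, fun φ => ?_⟩
  set n := ⌈|φ|⌉₊ with hn
  have hmem : φ ∈ Ioo (-(n:ℝ)-1) ((n:ℝ)+1) := by
    have h1 : |φ| ≤ (n:ℝ) := Nat.le_ceil _
    constructor <;> [nlinarith [le_abs_self φ, neg_abs_le φ]; nlinarith [le_abs_self φ, neg_abs_le φ]]
  have hev : (fun ψ => sol ⌈|ψ|⌉₊ ψ) =ᶠ[nhds φ] sol n := by
    have hopen : Ioo (-(n:ℝ)-1) ((n:ℝ)+1) ∈ nhds φ := Ioo_mem_nhds hmem.1 hmem.2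
    filter_upwards [hopen] with ψ hψ
    apply agree
    · have h1 : |ψ| ≤ (⌈|ψ|⌉₊:ℝ) := Nat.le_ceil _
      constructor <;> [nlinarith [le_abs_self ψ, neg_abs_le ψ]; nlinarith [le_abs_self ψ, neg_abs_le ψ]]
    · exact hψ
  rw [show (fun ψ => sol ⌈|ψ|⌉₊ ψ) φ = sol n φ from agree _ _ _ hmem hmem]
  exact hev.hasDerivAt_iff.mpr (hderiv n φ hmem)

lemma sol_cont {f : ℝ → ℝ} (hfd : ∀ φ, HasDerivAt f (gg m lam φ (f φ)) φ) :
    Continuous f := by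
  apply continuous_iff_continuousAt.mpr
  exact fun φ => (hfd φ).continuousAt

set_option maxHeartbeats 1000000 in
lemma sol_integral (hlam0 : 0 ≤ lam) (hlamCB : lam * CB m ≤ 1/2)
    {f : ℝ → ℝ} (hfd : ∀ φ, HasDerivAt f (gg m lam φ (f φ)) φ) (φ : ℝ) :
    f φ = f 0 + ∫ ψ in (0:ℝ)..φ, gg m lam ψ (f ψ) := by
  have h1 : Continuous (fun ψ : ℝ => (ψ, f ψ)) := continuous_id.prodMk (sol_cont hfd)
  have hcont : Continuous fun ψ => gg m lam ψ (f ψ) := by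
    have h2 := (gg_cont hlam0 hlamCB).comp h1
    simpa [Function.comp_def] using h2
  have := intervalIntegral.integral_eq_sub_of_hasDerivAt
    (f := f) (f' := fun ψ => gg m lam ψ (f ψ))
    (fun t _ => hfd t) (hcont.intervalIntegrable 0 φ)
  linarith [this]

lemma sol_dist (hlam0 : 0 ≤ lam) (hlamCB : lam * CB m ≤ 1/2)
    {f : ℝ → ℝ} (hfd : ∀ φ, HasDerivAt f (gg m lam φ (f φ)) φ) (φ : ℝ) :
    |f φ - f 0| ≤ 2 * (lam * CA m) * |φ| := by
  have hkey := sol_integral hlam0 hlamCB hfd φ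
  have hb : ‖∫ ψ in (0:ℝ)..φ, gg m lam ψ (f ψ)‖ ≤ 2 * (lam * CA m) * |φ - 0| := by
    apply intervalIntegral.norm_integral_le_of_norm_le_const
    intro x _
    rw [Real.norm_eq_abs]
    exact gg_bound hlam0 hlamCB x (f x)
  rw [Real.norm_eq_abs, sub_zero] at hb
  have : f φ - f 0 = ∫ ψ in (0:ℝ)..φ, gg m lam ψ (f ψ) := by linarith
  rw [this]
  exact hb

end ODE
section Melnikov

variable {m : ℕ} {lam : ℝ}

lemma gg_comp_cont (hlam0 : 0 ≤ lam) (hlamCB : lam * CB m ≤ 1/2)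
    {f : ℝ → ℝ} (hf : Continuous f) : Continuous fun ψ => gg m lam ψ (f ψ) := by
  have h1 : Continuous (fun ψ : ℝ => (ψ, f ψ)) := continuous_id.prodMk hf
  have h2 := (gg_cont hlam0 hlamCB).comp h1
  simpa [Function.comp_def] using h2

lemma stay_in_ann (hlam0 : 0 ≤ lam) (hlamCB : lam * CB m ≤ 1/2)
    (hlam2 : 2*(lam * CA m)*(2*π) ≤ 1/4)
    {r₀ : ℝ} (hr : r₀ ∈ Icc (1/2:ℝ) (RR m)) {f : ℝ → ℝ} (h0 : f 0 = r₀)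
    (hfd : ∀ φ, HasDerivAt f (gg m lam φ (f φ)) φ) :
    ∀ φ, |φ| ≤ 2*π → f φ ∈ Icc (1/4:ℝ) (RR m + 1) ∧ |f φ - r₀| ≤ 2*(lam * CA m)*(2*π) := by
  intro φ hφ
  have hd := sol_dist hlam0 hlamCB hfd φ
  rw [h0] at hd
  have hCA : 0 ≤ 2*(lam * CA m) := by
    have := mul_nonneg hlam0 (CA_pos m).le; linarith
  have hkey : |f φ - r₀| ≤ 2*(lam * CA m)*(2*π) := by
    calc |f φ - r₀| ≤ 2*(lam * CA m) * |φ| := hd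
      _ ≤ 2*(lam * CA m)*(2*π) := mul_le_mul_of_nonneg_left hφ hCA
  have h14 : |f φ - r₀| ≤ 1/4 := hkey.trans hlam2
  rw [abs_le] at h14
  exact ⟨⟨by linarith [hr.1], by linarith [hr.2]⟩, hkey⟩

lemma aa_integral (m : ℕ) (r₀ : ℝ) :
    ∫ ψ in (0:ℝ)..(2*π), aa m ψ r₀ =
      r₀^(m+3) * c4 m - r₀^(m+1) * c2 m := by
  have heq : (fun ψ => aa m ψ r₀) = fun ψ =>
      r₀^(m+3) * (|Real.sin ψ| ^ m * Real.cos ψ ^ 4)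
        - r₀^(m+1) * (|Real.sin ψ| ^ m * Real.cos ψ ^ 2) := by
    funext ψ; rw [aa]; ring
  rw [heq, intervalIntegral.integral_sub, intervalIntegral.integral_const_mul,
    intervalIntegral.integral_const_mul, c2_eq, c4_eq]
  · exact (continuous_const.mul (cont_integrand4 m)).intervalIntegrable _ _
  · exact (continuous_const.mul (cont_integrand2 m)).intervalIntegrable _ _

lemma KK_half_aux (m : ℕ) {lam : ℝ} :
    lam * (LA m * (2*(lam * CA m)*(2*π))) + lam * CA m * (lam * CB m) ≤
      (KK m * lam^2) * (1/2) := by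
  rw [KK]
  apply le_of_eq
  ring

lemma gg_aa_close (hlam0 : 0 ≤ lam) (hlamCB : lam * CB m ≤ 1/2)
    (hlam2 : 2*(lam * CA m)*(2*π) ≤ 1/4)
    {r₀ u : ℝ} (hr : r₀ ∈ Icc (1/2:ℝ) (RR m)) (hu : u ∈ Icc (1/4:ℝ) (RR m + 1))
    (hdist : |u - r₀| ≤ 2*(lam * CA m)*(2*π)) (ψ : ℝ) :
    |gg m lam ψ u + lam * aa m ψ r₀| ≤ KK m * lam^2 := by
  have hr' : r₀ ∈ Icc (1/4:ℝ) (RR m + 1) := ⟨by linarith [hr.1], by linarith [hr.2]⟩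
  have hcl : cl m u = u := cl_eq m hu
  have hd := denom_bounds hlam0 hlamCB hu ψ
  set d := 1 - lam * bb m ψ u with hd_def
  have hdne : d ≠ 0 := by rw [hd_def]; exact denom_ne hlam0 hlamCB hu ψ
  have key : gg m lam ψ u + lam * aa m ψ r₀ =
      (lam * (aa m ψ r₀ - aa m ψ u) + lam * aa m ψ r₀ * (d - 1)) / d := by
    rw [gg, hcl, ← hd_def]
    field_simp
    ring
  rw [key, abs_div]
  have habs_d : 1/2 ≤ |d| := by
    rw [abs_of_nonneg (by linarith [hd.1] : (0:ℝ) ≤ d)]; exact hd.1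
  rw [div_le_iff₀ (by linarith : (0:ℝ) < |d|)]
  have e1 : |lam * (aa m ψ r₀ - aa m ψ u)| ≤ lam * (LA m * (2*(lam * CA m)*(2*π))) := by
    rw [abs_mul, abs_of_nonneg hlam0]
    apply mul_le_mul_of_nonneg_left _ hlam0
    calc |aa m ψ r₀ - aa m ψ u| ≤ LA m * |r₀ - u| := aa_lip m hr' hu ψ
      _ ≤ LA m * (2*(lam * CA m)*(2*π)) := by
          apply mul_le_mul_of_nonneg_left _ (LA_pos m).le
          rwa [abs_sub_comm]
  have e2 : |lam * aa m ψ r₀ * (d - 1)| ≤ lam * CA m * (lam * CB m) := by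
    rw [abs_mul, abs_mul, abs_of_nonneg hlam0]
    have h1 : |aa m ψ r₀| ≤ CA m := aa_bound m hr' ψ
    have h2 : |d - 1| ≤ lam * CB m := by
      rw [hd_def, show 1 - lam * bb m ψ u - 1 = -(lam * bb m ψ u) by ring, abs_neg,
        abs_mul, abs_of_nonneg hlam0]
      exact mul_le_mul_of_nonneg_left (bb_bound m hu ψ) hlam0
    have h3 : 0 ≤ lam * CA m := mul_nonneg hlam0 (CA_pos m).le
    have h4 : lam * |aa m ψ r₀| ≤ lam * CA m := mul_le_mul_of_nonneg_left h1 hlam0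
    exact mul_le_mul h4 h2 (abs_nonneg _) h3
  have hsum : |lam * (aa m ψ r₀ - aa m ψ u) + lam * aa m ψ r₀ * (d - 1)| ≤
      lam * (LA m * (2*(lam * CA m)*(2*π))) + lam * CA m * (lam * CB m) :=
    (abs_add_le _ _).trans (add_le_add e1 e2)
  have hKK : lam * (LA m * (2*(lam * CA m)*(2*π))) + lam * CA m * (lam * CB m) ≤
      (KK m * lam^2) * (1/2) := KK_half_aux m
  have hA0 : (0:ℝ) ≤ KK m * lam^2 := mul_nonneg (KK_pos m).le (sq_nonneg lam)
  calc |lam * (aa m ψ r₀ - aa m ψ u) + lam * aa m ψ r₀ * (d - 1)| ≤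
      (KK m * lam^2) * (1/2) := hsum.trans hKK
    _ ≤ KK m * lam^2 * |d| := mul_le_mul_of_nonneg_left habs_d hA0

lemma melnikov (hlam0 : 0 ≤ lam) (hlamCB : lam * CB m ≤ 1/2)
    (hlam2 : 2*(lam * CA m)*(2*π) ≤ 1/4)
    {r₀ : ℝ} (hr : r₀ ∈ Icc (1/2:ℝ) (RR m)) {f : ℝ → ℝ} (h0 : f 0 = r₀)
    (hfd : ∀ φ, HasDerivAt f (gg m lam φ (f φ)) φ) :
    |f (2*π) - r₀ + lam * (r₀^(m+3) * c4 m - r₀^(m+1) * c2 m)| ≤ 2*π*(KK m) * lam^2 := by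
  have hgcont : Continuous fun ψ => gg m lam ψ (f ψ) :=
    gg_comp_cont hlam0 hlamCB (sol_cont hfd)
  have hacont : Continuous fun ψ => aa m ψ r₀ := by
    have h1 : Continuous (fun ψ : ℝ => (ψ, r₀)) := continuous_id.prodMk continuous_const
    have h2 := (aa_cont m).comp h1
    simpa [Function.comp_def] using h2
  have hint := sol_integral hlam0 hlamCB hfd (2*π)
  rw [h0] at hint
  have haaint := aa_integral m r₀
  have hcomb : f (2*π) - r₀ + lam * (r₀^(m+3) * c4 m - r₀^(m+1) * c2 m) =
      ∫ ψ in (0:ℝ)..(2*π), (gg m lam ψ (f ψ) + lam * aa m ψ r₀) := by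
    have hlc : Continuous fun ψ => lam * aa m ψ r₀ := continuous_const.mul hacont
    rw [intervalIntegral.integral_add (hgcont.intervalIntegrable _ _)
      (hlc.intervalIntegrable 0 (2*π)),
      intervalIntegral.integral_const_mul, haaint]
    linarith [hint]
  rw [hcomb]
  have hbound : ∀ ψ ∈ Set.uIoc (0:ℝ) (2*π),
      ‖gg m lam ψ (f ψ) + lam * aa m ψ r₀‖ ≤ KK m * lam^2 := by
    intro ψ hψ
    rw [Set.uIoc_of_le (by positivity : (0:ℝ) ≤ 2*π)] at hψ
    have hψ' : |ψ| ≤ 2*π := by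
      rw [abs_of_nonneg hψ.1.le]; exact hψ.2
    obtain ⟨hmem, hdist⟩ := stay_in_ann hlam0 hlamCB hlam2 hr h0 hfd ψ hψ'
    rw [Real.norm_eq_abs]
    exact gg_aa_close hlam0 hlamCB hlam2 hr hmem hdist ψ
  have := intervalIntegral.norm_integral_le_of_norm_le_const hbound
  rw [Real.norm_eq_abs, sub_zero] at this
  calc |∫ ψ in (0:ℝ)..(2*π), (gg m lam ψ (f ψ) + lam * aa m ψ r₀)| ≤
      KK m * lam^2 * |2*π| := this
    _ = 2*π*(KK m) * lam^2 := by
        rw [abs_of_nonneg (by positivity : (0:ℝ) ≤ 2*π)]; ring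

end Melnikov
section FixedPoint

variable {m : ℕ} {lam : ℝ}

lemma half_le_RR (m : ℕ) : (1/2:ℝ) ≤ RR m := by linarith [one_le_RR m]

lemma disp_pos (hlam0' : 0 < lam) (hlamCB : lam * CB m ≤ 1/2)
    (hlam2 : 2*(lam * CA m)*(2*π) ≤ 1/4) (hlam3 : lam * (2*π*(KK m)) < eps m)
    {f : ℝ → ℝ} (h0 : f 0 = 1/2)
    (hfd : ∀ φ, HasDerivAt f (gg m lam φ (f φ)) φ) : 1/2 < f (2*π) := by
  have hr : (1/2:ℝ) ∈ Icc (1/2:ℝ) (RR m) := ⟨le_rfl, half_le_RR m⟩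
  have mel := melnikov hlam0'.le hlamCB hlam2 hr h0 hfd
  have hM : (1/2:ℝ)^(m+3) * c4 m - (1/2:ℝ)^(m+1) * c2 m ≤ -eps m := by
    have h1 : (1/2:ℝ)^(m+3) = (1/2:ℝ)^(m+1) * (1/4) := by
      rw [pow_add, pow_add]; norm_num; ring
    have h2 := c4_le_c2 m
    have h3 := c4_pos m
    have h4 : (0:ℝ) < (1/2:ℝ)^(m+1) := by positivity
    rw [eps, h1]
    nlinarith
  rw [abs_le] at mel
  have hmul : lam * ((1/2:ℝ)^(m+3) * c4 m - (1/2:ℝ)^(m+1) * c2 m) ≤ lam * (-eps m) :=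
    mul_le_mul_of_nonneg_left hM hlam0'.le
  have hE : 2*π*(KK m) * lam^2 < lam * eps m := by
    have := mul_lt_mul_of_pos_left hlam3 hlam0'
    nlinarith
  nlinarith [mel.1]

lemma disp_neg (hlam0' : 0 < lam) (hlamCB : lam * CB m ≤ 1/2)
    (hlam2 : 2*(lam * CA m)*(2*π) ≤ 1/4) (hlam3 : lam * (2*π*(KK m)) < eps m)
    {f : ℝ → ℝ} (h0 : f 0 = RR m)
    (hfd : ∀ φ, HasDerivAt f (gg m lam φ (f φ)) φ) : f (2*π) < RR m := by
  have hr : RR m ∈ Icc (1/2:ℝ) (RR m) := ⟨half_le_RR m, le_rfl⟩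
  have mel := melnikov hlam0'.le hlamCB hlam2 hr h0 hfd
  have h3 := c4_pos m
  have hRc : RR m^2 * c4 m = c2 m + c4 m := by
    rw [RR_sq]
    field_simp
  have hM : eps m ≤ RR m^(m+3) * c4 m - RR m^(m+1) * c2 m := by
    have h1 : RR m^(m+3) = RR m^(m+1) * RR m^2 := by rw [← pow_add]
    have h2 : RR m^(m+3) * c4 m - RR m^(m+1) * c2 m = RR m^(m+1) * c4 m := by
      rw [h1]
      linear_combination (RR m^(m+1)) * hRc
    rw [h2]
    have h4 : (1:ℝ) ≤ RR m^(m+1) := one_le_pow₀ (one_le_RR m)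
    have h5 : eps m ≤ c4 m := by
      rw [eps]
      have h6 : (0:ℝ) < (1/2:ℝ)^(m+1) := by positivity
      have h7 : (1/2:ℝ)^(m+1) ≤ 1 := pow_le_one₀ (by norm_num) (by norm_num)
      nlinarith
    nlinarith
  rw [abs_le] at mel
  have hmul : lam * eps m ≤ lam * (RR m^(m+3) * c4 m - RR m^(m+1) * c2 m) :=
    mul_le_mul_of_nonneg_left hM hlam0'.le
  have hE : 2*π*(KK m) * lam^2 < lam * eps m := by
    have := mul_lt_mul_of_pos_left hlam3 hlam0'
    nlinarith
  nlinarith [mel.2]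

lemma mono_P (hlam0 : 0 ≤ lam) (hlamCB : lam * CB m ≤ 1/2) (hlam1 : lam ≤ 1)
    {f g : ℝ → ℝ}
    (hfd : ∀ φ, HasDerivAt f (gg m lam φ (f φ)) φ)
    (hgd : ∀ φ, HasDerivAt g (gg m lam φ (g φ)) φ)
    (h : f 0 ≤ g 0) : f (2*π) ≤ g (2*π) := by
  by_contra hlt
  push_neg at hlt
  have hDcont : ContinuousOn (fun φ => f φ - g φ) (Icc 0 (2*π)) :=
    ((sol_cont hfd).sub (sol_cont hgd)).continuousOn
  have h2π : (0:ℝ) ≤ 2*π := by positivity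
  have hmem : (0:ℝ) ∈ Icc ((fun φ => f φ - g φ) 0) ((fun φ => f φ - g φ) (2*π)) := by
    constructor <;> simp only [] <;> linarith
  obtain ⟨c, -, hc0⟩ := intermediate_value_Icc h2π hDcont hmem
  have heq : f c = g c := by
    simp only [] at hc0
    linarith
  have := uniq_global hlam0 hlamCB hlam1 hfd hgd heq
  rw [this] at hlt
  exact absurd hlt (lt_irrefl _)

lemma tarski {a b : ℝ} {P : ℝ → ℝ} (hab : a ≤ b)
    (hmono : ∀ x y, x ≤ y → P x ≤ P y)
    (hPa : a < P a) (hPb : P b < b) : ∃ s ∈ Icc a b, P s = s := by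
  set S := {x : ℝ | x ∈ Icc a b ∧ x ≤ P x} with hS
  have haS : a ∈ S := ⟨⟨le_rfl, hab⟩, hPa.le⟩
  have hne : S.Nonempty := ⟨a, haS⟩
  have hbdd : BddAbove S := ⟨b, fun x hx => hx.1.2⟩
  set s := sSup S with hs
  have hsa : a ≤ s := le_csSup hbdd haS
  have hsb : s ≤ b := csSup_le hne (fun x hx => hx.1.2)
  have h1 : s ≤ P s := csSup_le hne (fun x hx => hx.2.trans (hmono x s (le_csSup hbdd hx)))
  have h2 : P s ≤ b := (hmono s b hsb).trans hPb.le
  have h3 : a ≤ P s := hPa.le.trans (hmono a s hsa)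
  have h4 : P s ∈ S := ⟨⟨h3, h2⟩, hmono s (P s) h1⟩
  have h5 : P s ≤ s := le_csSup hbdd h4
  exact ⟨s, ⟨hsa, hsb⟩, le_antisymm h5 h1⟩

lemma exists_fixed_sol (hlam0' : 0 < lam) (hlamCB : lam * CB m ≤ 1/2) (hlam1 : lam ≤ 1)
    (hlamCA : 2 * (lam * CA m) ≤ 1) (hlam2 : 2*(lam * CA m)*(2*π) ≤ 1/4)
    (hlam3 : lam * (2*π*(KK m)) < eps m) :
    ∃ s ∈ Icc (1/2:ℝ) (RR m), ∃ f : ℝ → ℝ, f 0 = s ∧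
      (∀ φ, HasDerivAt f (gg m lam φ (f φ)) φ) ∧ f (2*π) = s := by
  choose sol h0 hD using fun r₀ : ℝ =>
    exists_global_sol hlam0'.le hlamCB hlam1 hlamCA r₀
  have hmono : ∀ x y, x ≤ y → sol x (2*π) ≤ sol y (2*π) := by
    intro x y hxy
    exact mono_P hlam0'.le hlamCB hlam1 (hD x) (hD y) (by rw [h0 x, h0 y]; exact hxy)
  have hPa : 1/2 < sol (1/2) (2*π) :=
    disp_pos hlam0' hlamCB hlam2 hlam3 (h0 _) (hD _)
  have hPb : sol (RR m) (2*π) < RR m :=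
    disp_neg hlam0' hlamCB hlam2 hlam3 (h0 _) (hD _)
  obtain ⟨s, hsmem, hfix⟩ := tarski (half_le_RR m) hmono hPa hPb
  exact ⟨s, hsmem, sol s, h0 s, hD s, hfix⟩

lemma periodic_sol (hlam0 : 0 ≤ lam) (hlamCB : lam * CB m ≤ 1/2) (hlam1 : lam ≤ 1)
    {f : ℝ → ℝ} (hfd : ∀ φ, HasDerivAt f (gg m lam φ (f φ)) φ)
    (hper0 : f (2*π) = f 0) : ∀ φ, f (φ + 2*π) = f φ := by
  have hgd : ∀ φ, HasDerivAt (fun ψ => f (ψ + 2*π)) (gg m lam φ (f (φ + 2*π))) φ := by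
    intro φ
    have h1 : HasDerivAt (fun ψ : ℝ => ψ + 2*π) 1 φ := (hasDerivAt_id φ).add_const _
    have h2 := (hfd (φ + 2*π)).comp φ h1
    simp only [Function.comp, mul_one] at h2
    rw [← gg_per]
    exact h2
  have hgd' : ∀ φ, HasDerivAt (fun ψ => f (ψ + 2*π)) (gg m lam φ ((fun ψ => f (ψ + 2*π)) φ)) φ :=
    fun φ => hgd φ
  have heq0 : (fun ψ => f (ψ + 2*π)) 0 = f 0 := by simp only [zero_add]; exact hper0
  have := uniq_global hlam0 hlamCB hlam1 hgd' hfd heq0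
  intro φ
  exact congrFun this φ

end FixedPoint
section Identities

lemma abs_y_pow (m : ℕ) {r : ℝ} (hr : 0 < r) (φ : ℝ) :
    |(-(r * Real.sin φ))| ^ m = r ^ m * |Real.sin φ| ^ m := by
  rw [abs_neg, abs_mul, abs_of_pos hr, mul_pow]

lemma sol_identity_x (m : ℕ) {lam r φ d : ℝ} (hr : (0:ℝ) < r)
    (hd : d = 1 - lam * bb m φ r) (hdne : d ≠ 0) :
    (-(lam * aa m φ r) / d) * d * Real.cos φ + r * (-Real.sin φ * d) =
      (-(r * Real.sin φ)) - lam * |(-(r * Real.sin φ))| ^ m *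
        ((r * Real.cos φ) ^ 3 - (r * Real.cos φ)) := by
  have h1 : (-(lam * aa m φ r) / d) * d = -(lam * aa m φ r) :=
    div_mul_cancel₀ _ hdne
  rw [h1, abs_y_pow m hr, hd, aa, bb]
  have pyth := Real.sin_sq_add_cos_sq φ
  linear_combination (-(lam * |Real.sin φ|^m *
    (r^(m+3) * Real.cos φ^3 - r^(m+1) * Real.cos φ))) * pyth

lemma sol_identity_y (m : ℕ) {lam r φ d : ℝ} (hr : (0:ℝ) < r)
    (hd : d = 1 - lam * bb m φ r) (hdne : d ≠ 0) :
    -((-(lam * aa m φ r) / d) * d * Real.sin φ + r * (Real.cos φ * d)) =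
      -(r * Real.cos φ) := by
  have h1 : (-(lam * aa m φ r) / d) * d = -(lam * aa m φ r) :=
    div_mul_cancel₀ _ hdne
  rw [h1, hd, aa, bb]
  ring

end Identities
section Construction

lemma bb_per {m : ℕ} (ψ r : ℝ) : bb m (ψ + 2*π) r = bb m ψ r := by
  rw [bb, bb, Real.sin_add_two_pi, Real.cos_add_two_pi]

set_option maxHeartbeats 2000000 in
lemma key_pos (m : ℕ) {lam : ℝ} (hlam0' : 0 < lam) (hlamCB : lam * CB m ≤ 1/2)
    (hlam1 : lam ≤ 1) (hlamCA : 2 * (lam * CA m) ≤ 1)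
    (hlam2 : 2*(lam * CA m)*(2*π) ≤ 1/4) (hlam3 : lam * (2*π*(KK m)) < eps m) :
    ∃ γ : ℝ → ℝ × ℝ,
      IsSolution (fun p => p.2 - lam * |p.2| ^ m * (p.1 ^ 3 - p.1)) (fun p => -p.1) γ ∧
      IsPeriodicSol γ ∧ IsNonconstant γ := by
  obtain ⟨s, hs, ρ, hρ0, hρd, hρfix⟩ :=
    exists_fixed_sol hlam0' hlamCB hlam1 hlamCA hlam2 hlam3
  have hρcont : Continuous ρ := sol_cont hρd
  have hper : ∀ φ, ρ (φ + 2*π) = ρ φ :=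
    periodic_sol hlam0'.le hlamCB hlam1 hρd (by rw [hρfix, hρ0])
  have hπpos : (0:ℝ) < 2*π := by positivity
  have hann : ∀ φ, ρ φ ∈ Icc (1/4:ℝ) (RR m + 1) := by
    have hbase : ∀ φ, |φ| ≤ 2*π → ρ φ ∈ Icc (1/4:ℝ) (RR m + 1) := fun φ hφ =>
      (stay_in_ann hlam0'.le hlamCB hlam2 hs hρ0 hρd φ hφ).1
    intro φ
    have hfloor0 : 0 ≤ φ - ⌊φ/(2*π)⌋ * (2*π) := Int.sub_floor_div_mul_nonneg φ hπpos
    have hfloor1 : φ - ⌊φ/(2*π)⌋ * (2*π) < 2*π := Int.sub_floor_div_mul_lt φ hπpos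
    have hP : Function.Periodic ρ (2*π) := hper
    have heq : ρ (φ - ⌊φ/(2*π)⌋ * (2*π)) = ρ φ := hP.sub_int_mul_eq ⌊φ/(2*π)⌋
    rw [← heq]
    exact hbase _ (by rw [abs_of_nonneg hfloor0]; linarith)
  have hρpos : ∀ φ, (0:ℝ) < ρ φ := fun φ => lt_of_lt_of_le (by norm_num) (hann φ).1
  have hclρ : ∀ φ, cl m (ρ φ) = ρ φ := fun φ => cl_eq m (hann φ)
  set u : ℝ → ℝ := fun φ => (1 - lam * bb m φ (ρ φ))⁻¹ with hu_def
  have hdb : ∀ φ, 1/2 ≤ 1 - lam * bb m φ (ρ φ) ∧ 1 - lam * bb m φ (ρ φ) ≤ 3/2 :=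
    fun φ => denom_bounds hlam0'.le hlamCB (hann φ) φ
  have hdne : ∀ φ, 1 - lam * bb m φ (ρ φ) ≠ 0 := fun φ => by linarith [(hdb φ).1]
  have hu_bounds : ∀ φ, 2/3 ≤ u φ ∧ u φ ≤ 2 := by
    intro φ
    obtain ⟨h1, h2⟩ := hdb φ
    have h3 : (0:ℝ) < 1 - lam * bb m φ (ρ φ) := by linarith
    have e1 : u φ = (1 - lam * bb m φ (ρ φ))⁻¹ := rfl
    rw [e1]
    constructor
    · rw [show (2/3:ℝ) = (3/2:ℝ)⁻¹ by norm_num]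
      exact inv_anti₀ h3 h2
    · rw [show (2:ℝ) = (1/2:ℝ)⁻¹ by norm_num]
      exact inv_anti₀ (by norm_num) h1
  have hbbρ_cont : Continuous (fun φ => bb m φ (ρ φ)) := by
    have h1 : Continuous (fun φ : ℝ => (φ, ρ φ)) := continuous_id.prodMk hρcont
    have h2 := (bb_cont m).comp h1
    simpa [Function.comp_def] using h2
  have hu_cont : Continuous u :=
    (continuous_const.sub (continuous_const.mul hbbρ_cont)).inv₀ hdne
  have hu_per : ∀ φ, u (φ + 2*π) = u φ := by
    intro φ
    have e1 : u (φ + 2*π) = (1 - lam * bb m (φ + 2*π) (ρ (φ + 2*π)))⁻¹ := rfl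
    have e2 : u φ = (1 - lam * bb m φ (ρ φ))⁻¹ := rfl
    rw [e1, e2, hper, bb_per]
  set T : ℝ → ℝ := fun φ => ∫ ψ in (0:ℝ)..φ, u ψ with hT_def
  have hT_deriv : ∀ φ, HasDerivAt T (u φ) φ := fun φ =>
    intervalIntegral.integral_hasDerivAt_right (hu_cont.intervalIntegrable _ _)
      (hu_cont.stronglyMeasurableAtFilter _ _) hu_cont.continuousAt
  have hT_cont : Continuous T :=
    continuous_iff_continuousAt.mpr fun φ => (hT_deriv φ).continuousAt
  have hT_mono : StrictMono T := strictMono_of_deriv_pos (fun φ => by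
    rw [(hT_deriv φ).deriv]; linarith [(hu_bounds φ).1])
  have hT0z : T 0 = 0 := intervalIntegral.integral_same
  have hT_ge : ∀ φ, 0 ≤ φ → 2/3 * φ ≤ T φ := by
    intro φ hφ
    have h1 : ∫ _ψ in (0:ℝ)..φ, (2/3:ℝ) ≤ ∫ ψ in (0:ℝ)..φ, u ψ :=
      intervalIntegral.integral_mono_on hφ intervalIntegrable_const
        (hu_cont.intervalIntegrable _ _) (fun x _ => (hu_bounds x).1)
    rwa [intervalIntegral.integral_const, smul_eq_mul, sub_zero, mul_comm] at h1
  have hT_le_neg : ∀ φ, φ ≤ 0 → T φ ≤ 2/3 * φ := by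
    intro φ hφ
    have h1 : ∫ _ψ in φ..(0:ℝ), (2/3:ℝ) ≤ ∫ ψ in φ..(0:ℝ), u ψ :=
      intervalIntegral.integral_mono_on hφ intervalIntegrable_const
        (hu_cont.intervalIntegrable _ _) (fun x _ => (hu_bounds x).1)
    rw [intervalIntegral.integral_const, smul_eq_mul] at h1
    have h2 : ∫ ψ in φ..(0:ℝ), u ψ = - T φ := by
      rw [hT_def]
      exact intervalIntegral.integral_symm 0 φ
    rw [h2] at h1
    linarith
  have hT_surj : Function.Surjective T := by
    intro t
    set M := (3/2)*|t| + 1 with hM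
    have hM0 : (0:ℝ) ≤ M := by positivity
    have h1 : 2/3*M ≤ T M := hT_ge M hM0
    have h2 : T (-M) ≤ 2/3*(-M) := hT_le_neg (-M) (by linarith)
    have hle : -M ≤ M := by linarith
    have h3 : t ∈ Icc (T (-M)) (T M) := by
      have ha := neg_abs_le t
      have hb := le_abs_self t
      constructor
      · have : (2:ℝ)/3*(-M) ≤ t := by rw [hM]; nlinarith [abs_nonneg t]
        linarith
      · have : t ≤ 2/3*M := by rw [hM]; nlinarith [abs_nonneg t]
        linarith
    obtain ⟨φ, -, hφ⟩ := intermediate_value_Icc hle hT_cont.continuousOn h3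
    exact ⟨φ, hφ⟩
  set E := StrictMono.orderIsoOfSurjective T hT_mono hT_surj with hE
  set Φ : ℝ → ℝ := fun t => E.symm t with hΦ_def
  have hTΦ : ∀ t, T (Φ t) = t := by
    intro t
    have h1 := E.apply_symm_apply t
    have h2 : E (E.symm t) = T (E.symm t) := rfl
    rw [h2] at h1
    exact h1
  have hΦT : ∀ φ, Φ (T φ) = φ := by
    intro φ
    apply hT_mono.injective
    rw [hTΦ]
  have hΦ_cont : Continuous Φ := by
    have h := (OrderIso.toHomeomorph E).symm.continuous
    exact h
  have hΦ_deriv : ∀ t, HasDerivAt Φ (1 - lam * bb m (Φ t) (ρ (Φ t))) t := by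
    intro t
    have h1 : u (Φ t) ≠ 0 := by linarith [(hu_bounds (Φ t)).1]
    have h2 := HasDerivAt.of_local_left_inverse hΦ_cont.continuousAt
      (hT_deriv (Φ t)) h1 (Filter.Eventually.of_forall hTΦ)
    have h3 : (u (Φ t))⁻¹ = 1 - lam * bb m (Φ t) (ρ (Φ t)) := by
      have e1 : u (Φ t) = (1 - lam * bb m (Φ t) (ρ (Φ t)))⁻¹ := rfl
      rw [e1, inv_inv]
    rwa [h3] at h2
  set T0 := T (2*π) with hT0_def
  have hT0pos : 0 < T0 := by
    have := hT_ge (2*π) hπpos.le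
    rw [hT0_def]
    nlinarith
  have hT_shift : ∀ φ, T (φ + 2*π) = T φ + T0 := by
    intro φ
    have hadd := intervalIntegral.integral_add_adjacent_intervals
      (hu_cont.intervalIntegrable (μ := volume) (0:ℝ) (2*π))
      (hu_cont.intervalIntegrable (μ := volume) (2*π) (φ+2*π))
    have hcv : ∫ ψ in (2*π)..(φ+2*π), u ψ = ∫ ψ in (0:ℝ)..φ, u ψ := by
      have h5 := intervalIntegral.integral_comp_add_right (a := 0) (b := φ) u (2*π)
      rw [zero_add] at h5
      rw [← h5]
      apply intervalIntegral.integral_congr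
      intro ψ _
      exact hu_per ψ
    have e1 : T (φ + 2*π) = ∫ ψ in (0:ℝ)..(φ+2*π), u ψ := rfl
    have e2 : T φ = ∫ ψ in (0:ℝ)..φ, u ψ := rfl
    have e3 : T0 = ∫ ψ in (0:ℝ)..(2*π), u ψ := rfl
    rw [e1, e2, e3, ← hadd, hcv]
    ring
  have hΦ_shift : ∀ t, Φ (t + T0) = Φ t + 2*π := by
    intro t
    apply hT_mono.injective
    rw [hTΦ, hT_shift, hTΦ]
  have hΦ0 : Φ 0 = 0 := by
    have := hΦT 0
    rwa [hT0z] at this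
  set γ : ℝ → ℝ × ℝ :=
    fun t => (ρ (Φ t) * Real.cos (Φ t), -(ρ (Φ t) * Real.sin (Φ t))) with hγ
  refine ⟨γ, ?_, ⟨T0, hT0pos, ?_⟩, ?_⟩
  · -- IsSolution
    intro t
    have hΦd : HasDerivAt Φ (1 - lam * bb m (Φ t) (ρ (Φ t))) t := hΦ_deriv t
    have hρΦ : HasDerivAt (fun t' => ρ (Φ t'))
        (gg m lam (Φ t) (ρ (Φ t)) * (1 - lam * bb m (Φ t) (ρ (Φ t)))) t := by
      have h2 := (hρd (Φ t)).comp t hΦd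
      simpa [Function.comp_def] using h2
    have hcosΦ : HasDerivAt (fun t' => Real.cos (Φ t'))
        (-Real.sin (Φ t) * (1 - lam * bb m (Φ t) (ρ (Φ t)))) t := by
      have h2 := (Real.hasDerivAt_cos (Φ t)).comp t hΦd
      simpa [Function.comp_def] using h2
    have hsinΦ : HasDerivAt (fun t' => Real.sin (Φ t'))
        (Real.cos (Φ t) * (1 - lam * bb m (Φ t) (ρ (Φ t)))) t := by
      have h2 := (Real.hasDerivAt_sin (Φ t)).comp t hΦd
      simpa [Function.comp_def] using h2
    have hx := hρΦ.mul hcosΦ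
    have hy := (hρΦ.mul hsinΦ).neg
    have hgg_eq : gg m lam (Φ t) (ρ (Φ t)) =
        -(lam * aa m (Φ t) (ρ (Φ t))) / (1 - lam * bb m (Φ t) (ρ (Φ t))) := by
      rw [gg, hclρ (Φ t)]
    have hdnez : (1 - lam * bb m (Φ t) (ρ (Φ t))) ≠ 0 := hdne (Φ t)
    have hxval : gg m lam (Φ t) (ρ (Φ t)) * (1 - lam * bb m (Φ t) (ρ (Φ t))) * Real.cos (Φ t)
        + ρ (Φ t) * (-Real.sin (Φ t) * (1 - lam * bb m (Φ t) (ρ (Φ t)))) =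
        (-(ρ (Φ t) * Real.sin (Φ t))) - lam * |(-(ρ (Φ t) * Real.sin (Φ t)))| ^ m *
          ((ρ (Φ t) * Real.cos (Φ t)) ^ 3 - (ρ (Φ t) * Real.cos (Φ t))) := by
      rw [hgg_eq]
      exact sol_identity_x m (hρpos (Φ t)) rfl hdnez
    have hyval : -(gg m lam (Φ t) (ρ (Φ t)) * (1 - lam * bb m (Φ t) (ρ (Φ t))) * Real.sin (Φ t)
        + ρ (Φ t) * (Real.cos (Φ t) * (1 - lam * bb m (Φ t) (ρ (Φ t))))) =
        -(ρ (Φ t) * Real.cos (Φ t)) := by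
      rw [hgg_eq]
      exact sol_identity_y m (hρpos (Φ t)) rfl hdnez
    rw [hxval] at hx
    rw [hyval] at hy
    exact hx.prodMk hy
  · -- periodicity
    intro t
    have e1 : γ (t + T0) = (ρ (Φ (t+T0)) * Real.cos (Φ (t+T0)),
        -(ρ (Φ (t+T0)) * Real.sin (Φ (t+T0)))) := rfl
    have e2 : γ t = (ρ (Φ t) * Real.cos (Φ t), -(ρ (Φ t) * Real.sin (Φ t))) := rfl
    rw [e1, e2, hΦ_shift t, hper (Φ t), Real.cos_add_two_pi, Real.sin_add_two_pi]
  · -- nonconstant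
    refine ⟨T π, 0, ?_⟩
    intro h
    have h1 := congrArg Prod.fst h
    have e1 : (γ (T π)).1 = ρ (Φ (T π)) * Real.cos (Φ (T π)) := rfl
    have e2 : (γ 0).1 = ρ (Φ 0) * Real.cos (Φ 0) := rfl
    rw [e1, e2, hΦT π, hΦ0, Real.cos_pi, Real.cos_zero] at h1
    have hp1 := hρpos π
    have hp2 := hρpos 0
    nlinarith [h1]

end Construction
section Final

lemma fst_deriv {g : ℝ → ℝ × ℝ} {v : ℝ × ℝ} {t : ℝ} (h : HasDerivAt g v t) :
    HasDerivAt (fun t => (g t).1) v.1 t := by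
  have h1 := h.hasFDerivAt.fst
  have h2 : (ContinuousLinearMap.fst ℝ ℝ ℝ).comp
      (ContinuousLinearMap.toSpanSingleton ℝ v) = ContinuousLinearMap.toSpanSingleton ℝ v.1 := by
    ext x; simp
  rw [h2] at h1
  exact hasDerivAt_iff_hasFDerivAt.mpr h1

lemma snd_deriv {g : ℝ → ℝ × ℝ} {v : ℝ × ℝ} {t : ℝ} (h : HasDerivAt g v t) :
    HasDerivAt (fun t => (g t).2) v.2 t := by
  have h1 := h.hasFDerivAt.snd
  have h2 : (ContinuousLinearMap.snd ℝ ℝ ℝ).comp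
      (ContinuousLinearMap.toSpanSingleton ℝ v) = ContinuousLinearMap.toSpanSingleton ℝ v.2 := by
    ext x; simp
  rw [h2] at h1
  exact hasDerivAt_iff_hasFDerivAt.mpr h1

lemma lam0_conds {m : ℕ} {lam : ℝ} (h0 : 0 < lam) (h1 : lam < lam0 m) :
    lam * CB m ≤ 1/2 ∧ lam ≤ 1 ∧ 2 * (lam * CA m) ≤ 1 ∧
      2*(lam * CA m)*(2*π) ≤ 1/4 ∧ lam * (2*π*(KK m)) < eps m := by
  rw [lam0] at h1
  have hCA := CA_pos m
  have hCB := CB_pos m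
  have hKK := KK_pos m
  have heps := eps_pos m
  have hπ := Real.pi_pos
  have l1 : lam < 1 := lt_of_lt_of_le h1 (min_le_left _ _)
  have l2 : lam < 1/(2*CB m) :=
    lt_of_lt_of_le h1 ((min_le_right _ _).trans (min_le_left _ _))
  have l3 : lam < 1/(16*π*CA m) :=
    lt_of_lt_of_le h1 ((min_le_right _ _).trans ((min_le_right _ _).trans (min_le_left _ _)))
  have l4 : lam < eps m / (2*π*(KK m) + 1) :=
    lt_of_lt_of_le h1 ((min_le_right _ _).trans ((min_le_right _ _).trans (min_le_right _ _)))
  have hval : lam * CA m < 1/(16*π) := by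
    have h6 := mul_lt_mul_of_pos_right l3 hCA
    have he2 : (1/(16*π*CA m))*CA m = 1/(16*π) := by field_simp
    linarith
  refine ⟨?_, l1.le, ?_, ?_, ?_⟩
  · have h5 := mul_lt_mul_of_pos_right l2 hCB
    have he : (1/(2*CB m))*CB m = 1/2 := by field_simp
    linarith
  · have h7 : 1/(16*π) ≤ 1/4 := by
      rw [div_le_div_iff₀ (by positivity) (by norm_num)]
      nlinarith [Real.pi_gt_three]
    linarith
  · have h6 := mul_lt_mul_of_pos_left hval (by positivity : (0:ℝ) < 4*π)
    have he3 : 4*π*(1/(16*π)) = 1/4 := by field_simp; ring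
    have : 2*(lam * CA m)*(2*π) = 4*π*(lam * CA m) := by ring
    linarith
  · have h8 := (lt_div_iff₀ (by positivity : (0:ℝ) < 2*π*(KK m) + 1)).mp l4
    nlinarith

lemma key_neg (m : ℕ) {lam : ℝ} (hlam : lam < 0) (hlam' : -lam < lam0 m) :
    ∃ γ : ℝ → ℝ × ℝ,
      IsSolution (fun p => p.2 - lam * |p.2| ^ m * (p.1 ^ 3 - p.1)) (fun p => -p.1) γ ∧
      IsPeriodicSol γ ∧ IsNonconstant γ := by
  set μ := -lam with hμ
  have hμ0 : 0 < μ := by rw [hμ]; linarith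
  obtain ⟨c1, c2, c3, c4', c5⟩ := lam0_conds hμ0 hlam'
  obtain ⟨γ, hsol, ⟨Tp, hTp, hperγ⟩, ⟨t1, t2, hne⟩⟩ := key_pos m hμ0 c1 c2 c3 c4' c5
  refine ⟨fun t => ((γ (-t)).1, -(γ (-t)).2), ?_, ⟨Tp, hTp, ?_⟩, ?_⟩
  · intro t
    have hneg : HasDerivAt (fun t' : ℝ => -t') (-1 : ℝ) t := hasDerivAt_neg t
    have hγc : HasDerivAt (fun t' => γ (-t'))
        ((-1:ℝ) • ((γ (-t)).2 - μ * |(γ (-t)).2| ^ m * ((γ (-t)).1 ^ 3 - (γ (-t)).1),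
          -(γ (-t)).1)) t := by
      have h2 := (hsol (-t)).scomp t hneg
      simpa [Function.comp_def] using h2
    have hA := fst_deriv hγc
    have hB := (snd_deriv hγc).neg
    simp only [Prod.smul_fst, Prod.smul_snd, smul_eq_mul] at hA hB
    have hAval : (-1:ℝ) * ((γ (-t)).2 - μ * |(γ (-t)).2| ^ m *
        ((γ (-t)).1 ^ 3 - (γ (-t)).1)) =
        (-(γ (-t)).2) - lam * |(-(γ (-t)).2)| ^ m * ((γ (-t)).1 ^ 3 - (γ (-t)).1) := by
      rw [abs_neg, hμ]
      ring
    have hBval : -((-1:ℝ) * (-(γ (-t)).1)) = -(γ (-t)).1 := by ring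
    rw [hAval] at hA
    rw [hBval] at hB
    exact hA.prodMk hB
  · intro t
    have h1 : γ (-(t + Tp)) = γ (-t) := by
      have := hperγ (-t - Tp)
      rw [show -t - Tp + Tp = -t by ring] at this
      rw [show -(t + Tp) = -t - Tp by ring, this]
    simp only [h1]
  · refine ⟨-t1, -t2, ?_⟩
    intro h
    apply hne
    simp only [neg_neg] at h
    have h1 := congrArg Prod.fst h
    have h2 := congrArg Prod.snd h
    simp only [] at h1 h2
    have h3 : (γ t1).2 = (γ t2).2 := by linarith
    exact Prod.ext h1 h3

end Final

end Vil

/-- Theorem (th:vil)(i): for `m ≥ 2` and `|λ| ≠ 0` small enough, the system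
`ẋ = y − λ|y|^m(x³ − x)`, `ẏ = −x` has at least one nonconstant periodic solution. -/
theorem stmt_15 (m : ℕ) (hm : 2 ≤ m) :
    ∃ lam₀ > (0:ℝ), ∀ lam : ℝ, 0 < |lam| → |lam| < lam₀ →
      ∃ γ : ℝ → ℝ × ℝ,
        IsSolution (fun p => p.2 - lam * |p.2| ^ m * (p.1 ^ 3 - p.1))
          (fun p => -p.1) γ ∧
        IsPeriodicSol γ ∧ IsNonconstant γ := by
  refine ⟨Vil.lam0 m, Vil.lam0_pos m, ?_⟩
  intro lam habs hlt
  rcases lt_trichotomy lam 0 with hneg | hzero | hpos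
  · have : -lam < Vil.lam0 m := by
      rwa [abs_of_neg hneg] at hlt
    exact Vil.key_neg m hneg this
  · rw [hzero, abs_zero] at habs
    exact absurd habs (lt_irrefl 0)
  · have hlt' : lam < Vil.lam0 m := by rwa [abs_of_pos hpos] at hlt
    obtain ⟨c1, c2, c3, c4', c5⟩ := Vil.lam0_conds hpos hlt'
    exact Vil.key_pos m hpos c1 c2 c3 c4' c5
end

section
/- Let m ≥ 0 be an integer and r > 0 a real number. Then ∫₀^{2π} |sin θ|^m · (r⁴·cos⁴θ − r²·cos²θ) dθ = (√π / 2) · (Γ((m+1)/2) / Γ((m+6)/2)) · r² · (3·r² − (m+4)), where Γ is the Euler Gamma function. In particular, this expression has a unique positive zero in r, at r = √((m+4)/3). -/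
open Real intervalIntegral


lemma sin_pow_int : ∀ m : ℕ, (∫ x in (0:ℝ)..π, Real.sin x ^ m) =
    Real.sqrt π * Real.Gamma (((m:ℝ)+1)/2) / Real.Gamma (((m:ℝ)+2)/2) := by
  intro m
  induction m using Nat.strong_induction_on with
  | _ m ih =>
    match m with
    | 0 =>
      norm_num [Real.Gamma_one_half_eq, show ((0:ℝ)+1)/2 = 1/2 by norm_num,
        show ((0:ℝ)+2)/2 = 1 by norm_num, Real.Gamma_one]
      exact (Real.mul_self_sqrt Real.pi_pos.le).symm
    | 1 =>
      simp only [pow_one]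
      rw [integral_sin]
      push_cast
      rw [show ((1:ℝ)+2)/2 = 1/2 + 1 by norm_num, Real.Gamma_add_one (by norm_num),
        Real.Gamma_one_half_eq, show ((1:ℝ)+1)/2 = 1 by norm_num, Real.Gamma_one]
      have h := Real.sqrt_pos.mpr Real.pi_pos
      field_simp
      norm_num
    | (n+2) =>
      rw [integral_sin_pow, ih n (by omega)]
      simp only [Real.sin_zero, Real.sin_pi, zero_pow (Nat.succ_ne_zero n)]
      push_cast
      rw [show ((n:ℝ)+2+1)/2 = ((n:ℝ)+1)/2 + 1 by ring,
        show ((n:ℝ)+2+2)/2 = ((n:ℝ)+2)/2 + 1 by ring,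
        Real.Gamma_add_one (by positivity), Real.Gamma_add_one (by positivity)]
      have hG : Real.Gamma (((n:ℝ)+2)/2) ≠ 0 := (Real.Gamma_pos_of_pos (by positivity)).ne'
      have hn2 : ((n:ℝ)+2) ≠ 0 := by positivity
      field_simp
      ring

lemma abs_sin_int (m : ℕ) : (∫ θ in (0:ℝ)..(2*π), |Real.sin θ| ^ m) =
    2 * (Real.sqrt π * Real.Gamma (((m:ℝ)+1)/2) / Real.Gamma (((m:ℝ)+2)/2)) := by
  have hper : Function.Periodic (fun x => |Real.sin x| ^ m) π := by
    intro x; simp [Real.sin_add_pi]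
  have hcont : Continuous (fun x => |Real.sin x| ^ m) :=
    (Real.continuous_sin.abs).pow m
  have h1 : (∫ θ in (π:ℝ)..(2*π), |Real.sin θ| ^ m) = ∫ θ in (0:ℝ)..π, |Real.sin θ| ^ m := by
    have := hper.intervalIntegral_add_eq π 0
    simpa [two_mul] using this
  have hsplit : (∫ θ in (0:ℝ)..(2*π), |Real.sin θ| ^ m) =
      (∫ θ in (0:ℝ)..π, |Real.sin θ| ^ m) + ∫ θ in (π:ℝ)..(2*π), |Real.sin θ| ^ m :=
    (integral_add_adjacent_intervals (hcont.intervalIntegrable _ _)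
      (hcont.intervalIntegrable _ _)).symm
  have habs : (∫ θ in (0:ℝ)..π, |Real.sin θ| ^ m) = ∫ θ in (0:ℝ)..π, Real.sin θ ^ m := by
    apply intervalIntegral.integral_congr
    intro x hx
    rw [Set.uIcc_of_le Real.pi_pos.le] at hx
    simp [abs_of_nonneg (Real.sin_nonneg_of_nonneg_of_le_pi hx.1 hx.2)]
  rw [hsplit, h1, habs, sin_pow_int m]
  ring


/-- The Melnikov integral of the system `ẋ = y − λ|y|^m(x³−x)`, `ẏ = −x` over the circle of
radius `r`, and its unique positive zero `r = √((m+4)/3)`. -/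
theorem stmt_16 (m : ℕ) (r : ℝ) (hr : 0 < r) :
    (∫ θ in (0:ℝ)..(2 * π),
        |Real.sin θ| ^ m * (r ^ 4 * Real.cos θ ^ 4 - r ^ 2 * Real.cos θ ^ 2)) =
      (Real.sqrt π / 2) * (Real.Gamma (((m : ℝ) + 1) / 2) / Real.Gamma (((m : ℝ) + 6) / 2))
        * r ^ 2 * (3 * r ^ 2 - ((m : ℝ) + 4)) ∧
    ((∫ θ in (0:ℝ)..(2 * π),
        |Real.sin θ| ^ m * (r ^ 4 * Real.cos θ ^ 4 - r ^ 2 * Real.cos θ ^ 2)) = 0 ↔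
      r = Real.sqrt (((m : ℝ) + 4) / 3)) := by
  have hc : ∀ k : ℕ, Continuous (fun x => |Real.sin x| ^ k) :=
    fun k => (Real.continuous_sin.abs).pow k
  -- pointwise expansion
  have hpt : ∀ θ : ℝ, |Real.sin θ| ^ m * (r ^ 4 * Real.cos θ ^ 4 - r ^ 2 * Real.cos θ ^ 2) =
      (r^4 - r^2) * |Real.sin θ| ^ m - (2*r^4 - r^2) * |Real.sin θ| ^ (m+2)
        + r^4 * |Real.sin θ| ^ (m+4) := by
    intro θ
    have hs : Real.sin θ ^ 2 = |Real.sin θ| ^ 2 := (sq_abs _).symm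
    have hc2 : Real.cos θ ^ 2 = 1 - |Real.sin θ| ^ 2 := by
      rw [← hs]; nlinarith [Real.sin_sq_add_cos_sq θ]
    have h4 : Real.cos θ ^ 4 = (1 - |Real.sin θ| ^ 2)^2 := by
      rw [← hc2]; ring
    rw [hc2, h4]; ring
  have hmain : (∫ θ in (0:ℝ)..(2 * π),
        |Real.sin θ| ^ m * (r ^ 4 * Real.cos θ ^ 4 - r ^ 2 * Real.cos θ ^ 2)) =
      (r^4 - r^2) * (∫ θ in (0:ℝ)..(2*π), |Real.sin θ| ^ m)
        - (2*r^4 - r^2) * (∫ θ in (0:ℝ)..(2*π), |Real.sin θ| ^ (m+2))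
        + r^4 * (∫ θ in (0:ℝ)..(2*π), |Real.sin θ| ^ (m+4)) := by
    rw [← intervalIntegral.integral_const_mul, ← intervalIntegral.integral_const_mul,
      ← intervalIntegral.integral_const_mul, ← intervalIntegral.integral_sub,
      ← intervalIntegral.integral_add]
    · exact intervalIntegral.integral_congr fun θ _ => hpt θ
    · exact (((continuous_const.mul (hc m)).sub (continuous_const.mul (hc (m+2))))).intervalIntegrable _ _
    · exact (continuous_const.mul (hc (m+4))).intervalIntegrable _ _
    · exact (continuous_const.mul (hc m)).intervalIntegrable _ _
    · exact (continuous_const.mul (hc (m+2))).intervalIntegrable _ _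
  rw [hmain, abs_sin_int m, abs_sin_int (m+2), abs_sin_int (m+4)]
  -- Gamma bookkeeping
  set G1 := Real.Gamma (((m:ℝ)+1)/2) with hG1
  set G2 := Real.Gamma (((m:ℝ)+2)/2) with hG2
  have hG2pos : 0 < G2 := Real.Gamma_pos_of_pos (by positivity)
  have e3 : Real.Gamma ((↑(m+2)+1)/2) = ((m:ℝ)+1)/2 * G1 := by
    push_cast
    rw [show ((m:ℝ)+2+1)/2 = ((m:ℝ)+1)/2 + 1 by ring, Real.Gamma_add_one (by positivity), hG1]
  have e4 : Real.Gamma ((↑(m+2)+2)/2) = ((m:ℝ)+2)/2 * G2 := by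
    push_cast
    rw [show ((m:ℝ)+2+2)/2 = ((m:ℝ)+2)/2 + 1 by ring, Real.Gamma_add_one (by positivity), hG2]
  have e5 : Real.Gamma ((↑(m+4)+1)/2) = ((m:ℝ)+3)/2 * (((m:ℝ)+1)/2 * G1) := by
    push_cast
    rw [show ((m:ℝ)+4+1)/2 = ((m:ℝ)+3)/2 + 1 by ring, Real.Gamma_add_one (by positivity),
      show ((m:ℝ)+3)/2 = ((m:ℝ)+1)/2 + 1 by ring, Real.Gamma_add_one (by positivity), hG1]
  have e6 : Real.Gamma ((↑(m+4)+2)/2) = ((m:ℝ)+4)/2 * (((m:ℝ)+2)/2 * G2) := by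
    push_cast
    rw [show ((m:ℝ)+4+2)/2 = ((m:ℝ)+4)/2 + 1 by ring, Real.Gamma_add_one (by positivity),
      show ((m:ℝ)+4)/2 = ((m:ℝ)+2)/2 + 1 by ring, Real.Gamma_add_one (by positivity), hG2]
  have e6' : Real.Gamma (((m:ℝ)+6)/2) = ((m:ℝ)+4)/2 * (((m:ℝ)+2)/2 * G2) := by
    rw [show ((m:ℝ)+6)/2 = ((m:ℝ)+4)/2 + 1 by ring, Real.Gamma_add_one (by positivity),
      show ((m:ℝ)+4)/2 = ((m:ℝ)+2)/2 + 1 by ring, Real.Gamma_add_one (by positivity), hG2]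
  have key : (r^4 - r^2) * (2 * (Real.sqrt π * G1 / G2))
        - (2*r^4 - r^2) * (2 * (Real.sqrt π * Real.Gamma ((↑(m+2)+1)/2) / Real.Gamma ((↑(m+2)+2)/2)))
        + r^4 * (2 * (Real.sqrt π * Real.Gamma ((↑(m+4)+1)/2) / Real.Gamma ((↑(m+4)+2)/2))) =
      (Real.sqrt π / 2) * (G1 / Real.Gamma (((m:ℝ)+6)/2)) * r ^ 2 * (3 * r ^ 2 - ((m:ℝ) + 4)) := by
    rw [e3, e4, e5, e6, e6']
    have h2 : ((m:ℝ)+2) ≠ 0 := by positivity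
    have h4 : ((m:ℝ)+4) ≠ 0 := by positivity
    field_simp
    ring
  constructor
  · exact key
  · rw [key]
    have hCpos : 0 < (Real.sqrt π / 2) * (G1 / Real.Gamma (((m:ℝ)+6)/2)) := by
      have := Real.Gamma_pos_of_pos (show (0:ℝ) < ((m:ℝ)+6)/2 by positivity)
      have hg1 : 0 < G1 := Real.Gamma_pos_of_pos (by positivity)
      have := Real.sqrt_pos.mpr Real.pi_pos
      positivity
    constructor
    · intro h
      have hz : 3 * r ^ 2 - ((m:ℝ) + 4) = 0 := by
        rcases mul_eq_zero.mp h with h' | h'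
        · rcases mul_eq_zero.mp h' with h'' | h''
          · exact absurd h'' hCpos.ne'
          · exact absurd h'' (by positivity)
        · exact h'
      have : r ^ 2 = ((m:ℝ)+4)/3 := by linarith
      rw [← Real.sqrt_sq hr.le, this]
    · intro h
      have : r ^ 2 = ((m:ℝ)+4)/3 := by
        rw [h, Real.sq_sqrt (by positivity)]
      rw [this]
      ring
end

section
/- Let m ≥ 2 be an integer and let b, c be real numbers with c ≥ 0. Then z^m + b·z + c ≥ 0 for all z ≥ 0 if and only if b ≥ −m·(c/(m−1))^{(m−1)/m}. -/
/-- For an integer `m ≥ 2` and `c ≥ 0`, `z^m + bz + c ≥ 0` for all `z ≥ 0` iff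
`b ≥ −m (c/(m−1))^{(m−1)/m}`. -/
theorem stmt_18 (m : ℕ) (hm : 2 ≤ m) (b c : ℝ) (hc : 0 ≤ c) :
    (∀ z : ℝ, 0 ≤ z → 0 ≤ z ^ m + b * z + c) ↔
      -(m : ℝ) * ((c / ((m : ℝ) - 1)) ^ (((m : ℝ) - 1) / (m : ℝ))) ≤ b := by
  set M : ℝ := (m : ℝ) with hMdef
  have hM2 : (2 : ℝ) ≤ M := by rw [hMdef]; exact_mod_cast hm
  have hM0 : (0 : ℝ) < M := by linarith
  have hM1 : (0 : ℝ) < M - 1 := by linarith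
  set D : ℝ := c / (M - 1) with hDdef
  have hD0 : 0 ≤ D := div_nonneg hc hM1.le
  set t : ℝ := D ^ ((M - 1) / M) with htdef
  have ht0 : 0 ≤ t := Real.rpow_nonneg hD0 _
  constructor
  · intro h
    by_cases hc0 : c = 0
    · have hD : D = 0 := by simp [hDdef, hc0]
      have htz : t = 0 := by
        rw [htdef, hD, Real.zero_rpow]
        positivity
      rw [htz, mul_zero]
      by_contra hb
      push_neg at hb
      -- b < 0; pick z with z^(m-1) = -b/2
      set z : ℝ := (-b / 2) ^ (1 / (M - 1)) with hzdef
      have hb2 : 0 < -b / 2 := by linarith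
      have hz0 : 0 < z := Real.rpow_pos_of_pos hb2 _
      have hzm1 : z ^ (m - 1) = -b / 2 := by
        have : (((m - 1 : ℕ)) : ℝ) = M - 1 := by
          rw [hMdef]; push_cast [Nat.cast_sub (by omega : 1 ≤ m)]; ring
        rw [← Real.rpow_natCast z (m - 1), this, hzdef,
          ← Real.rpow_mul hb2.le, one_div, inv_mul_cancel₀ hM1.ne', Real.rpow_one]
      have hzm : z ^ m = z ^ (m - 1) * z := by
        rw [← pow_succ]; congr 1; omega
      have := h z hz0.le
      rw [hc0, add_zero, hzm, hzm1] at this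
      nlinarith
    · have hcpos : 0 < c := lt_of_le_of_ne hc (Ne.symm hc0)
      have hDpos : 0 < D := div_pos hcpos hM1
      set z : ℝ := D ^ (1 / M) with hzdef
      have hz0 : 0 < z := Real.rpow_pos_of_pos hDpos _
      have hzm : z ^ m = D := by
        rw [← Real.rpow_natCast z m, ← hMdef, hzdef, ← Real.rpow_mul hDpos.le,
          one_div, inv_mul_cancel₀ hM0.ne', Real.rpow_one]
      have hcD : c = (M - 1) * D := by
        rw [hDdef]; field_simp
      have hkey := h z hz0.le
      rw [hzm] at hkey
      -- 0 ≤ D + b*z + c, and D + c = M*D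
      have hbz : -(M * D) ≤ b * z := by nlinarith
      have htz : t * z = D := by
        rw [htdef, hzdef, ← Real.rpow_add hDpos,
          show (M - 1) / M + 1 / M = 1 by field_simp; ring, Real.rpow_one]
      rw [neg_mul]
      have h' : -(M * t) * z ≤ b * z := by nlinarith [htz]
      exact le_of_mul_le_mul_right h' hz0
  · intro hb z hz
    have key : M * t * z ≤ z ^ m + c := by
      have hzm : (z ^ m : ℝ) = (z ^ m : ℝ) := rfl
      have hznn : (0 : ℝ) ≤ z ^ m := pow_nonneg hz m
      have hgm := Real.geom_mean_le_arith_mean2_weighted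
        (by positivity : (0:ℝ) ≤ 1 / M) (by positivity : (0:ℝ) ≤ (M - 1) / M)
        hznn hD0 (by field_simp; ring)
      have h1 : (z ^ m : ℝ) ^ (1 / M) = z := by
        rw [← Real.rpow_natCast z m, ← hMdef, ← Real.rpow_mul hz, mul_one_div,
          div_self hM0.ne', Real.rpow_one]
      have h2 : (M - 1) / M * D = c / M := by
        rw [hDdef]; field_simp
      rw [h1, h2, ← htdef] at hgm
      -- z * t ≤ (1/M) * z^m + c/M
      have := mul_le_mul_of_nonneg_left hgm hM0.le
      calc M * t * z = M * (z * t) := by ring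
        _ ≤ M * (1 / M * z ^ m + c / M) := this
        _ = z ^ m + c := by field_simp
    have hbz : -(M * t) * z ≤ b * z := by
      apply mul_le_mul_of_nonneg_right _ hz
      linarith [hb]
    nlinarith [key, hbz]
end
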